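/- arXiv:2305.06479 — 13 statements merged into one kernel-verified Lean document; each statement's English description precedes it below -/
import Mathlib

section
/- If w is an efficient vector for a reciprocal matrix A, and D is a positive diagonal matrix, then Dw is an efficient vector for DAD^{-1}. -/
/-- A positive reciprocal (pairwise comparison) matrix. -/
def Reciprocal {n : ℕ} (A : Matrix (Fin n) (Fin n) ℝ) : Prop :=
  (∀ i j, 0 < A i j) ∧ ∀ i j, A j i = (A i j)⁻¹

/-- A positive vector `w` is efficient for `A` (Pareto optimality). -/
def Efficient {n : ℕ} (A : Matrix (Fin n) (Fin n) ℝ) (w : Fin n → ℝ) : Prop :=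
  (∀ i, 0 < w i) ∧ ∀ v : Fin n → ℝ, (∀ i, 0 < v i) →
    (∀ i j, |A i j - v i / v j| ≤ |A i j - w i / w j|) →
    ∀ i j, v i / v j = w i / w j

/-- Efficiency is preserved under positive diagonal similarity:
if `w` is efficient for `A` and `D = diag d` with `d` positive, then
`Dw` is efficient for `D A D⁻¹`. -/
theorem stmt_0 {n : ℕ} (A : Matrix (Fin n) (Fin n) ℝ) (hA : Reciprocal A)
    (w : Fin n → ℝ) (d : Fin n → ℝ) (hd : ∀ i, 0 < d i)
    (hw : Efficient A w) :
    Efficient (fun i j => d i * A i j / d j) (fun i => d i * w i) := by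
  obtain ⟨hwpos, hweff⟩ := hw
  refine ⟨fun i => mul_pos (hd i) (hwpos i), ?_⟩
  intro v hv hle i j
  have key : (v i / d i) / (v j / d j) = w i / w j := by
    refine hweff (fun k => v k / d k) (fun k => div_pos (hv k) (hd k)) ?_ i j
    intro i j
    have h1 := (hd i).ne'
    have h2 := (hd j).ne'
    have h3 := (hv i).ne'
    have h4 := (hv j).ne'
    have h5 := (hwpos j).ne'
    have e1 : (d i : ℝ) * A i j / d j - v i / v j
        = (d i / d j) * (A i j - (v i / d i) / (v j / d j)) := by
      field_simp
    have e2 : (d i : ℝ) * A i j / d j - d i * w i / (d j * w j)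
        = (d i / d j) * (A i j - w i / w j) := by
      field_simp
    have h := hle i j
    simp only [] at h
    rw [e1, e2, abs_mul, abs_mul, abs_of_pos (div_pos (hd i) (hd j))] at h
    exact le_of_mul_le_mul_left h (div_pos (hd i) (hd j))
  have hdi := (hd i).ne'
  have hdj := (hd j).ne'
  have hvj := (hv j).ne'
  have hwj := (hwpos j).ne'
  field_simp at key ⊢
  linear_combination key
end

section
/- A positive vector w is efficient for a reciprocal matrix A if and only if the digraph G(A,w), with vertex set {1,...,n} and a directed edge from i to j (i≠j) whenever w_i/w_j >= a_{ij}, is strongly connected. -/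
/-- `w` is efficient for `A` iff the digraph `G(A,w)`, with an edge `i → j`
(`i ≠ j`) whenever `w i / w j ≥ A i j`, is strongly connected. -/
theorem stmt_2 {n : ℕ} (A : Matrix (Fin n) (Fin n) ℝ) (hA : Reciprocal A)
    (w : Fin n → ℝ) (hw : ∀ i, 0 < w i) :
    Efficient A w ↔
      ∀ i j : Fin n, Relation.ReflTransGen (fun a b => a ≠ b ∧ A a b ≤ w a / w b) i j := by
  classical
  set R : Fin n → Fin n → Prop := fun a b => a ≠ b ∧ A a b ≤ w a / w b with hR
  constructor
  · -- Efficient → strongly connected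
    intro hE i j
    by_contra hnr
    -- S = set of vertices that reach j
    set S : Fin n → Prop := fun k => Relation.ReflTransGen R k j with hS
    have hSj : S j := Relation.ReflTransGen.refl
    have hSi : ¬ S i := hnr
    have key : ∀ a b, ¬ S a → S b → w a / w b < A a b := by
      intro a b ha hb
      by_contra hle
      push_neg at hle
      have hab : a ≠ b := fun h => ha (h ▸ hb)
      exact ha (Relation.ReflTransGen.head ⟨hab, hle⟩ hb)
    set P : Finset (Fin n × Fin n) :=
      Finset.univ.filter (fun p => ¬ S p.1 ∧ S p.2) with hP
    have hmem : ∀ p : Fin n × Fin n, p ∈ P ↔ ¬ S p.1 ∧ S p.2 := by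
      intro p; simp [hP]
    have hne : P.Nonempty := ⟨(i, j), (hmem (i, j)).2 ⟨hSi, hSj⟩⟩
    set t : ℝ := P.sup' hne (fun p => w p.1 / w p.2 / A p.1 p.2) with ht
    have htb : ∀ a b, ¬ S a → S b → w a / w b / A a b ≤ t := by
      intro a b ha hb
      exact Finset.le_sup' (f := fun p : Fin n × Fin n => w p.1 / w p.2 / A p.1 p.2)
        ((hmem (a, b)).2 ⟨ha, hb⟩)
    have ht1 : t < 1 := by
      rw [ht, Finset.sup'_lt_iff]
      intro p hp
      obtain ⟨ha, hb⟩ := (hmem p).1 hp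
      have := key p.1 p.2 ha hb
      rw [div_lt_one (hA.1 p.1 p.2)]
      exact this
    have ht0 : 0 < t := by
      have h1 : (0:ℝ) < w i / w j / A i j :=
        div_pos (div_pos (hw i) (hw j)) (hA.1 i j)
      exact lt_of_lt_of_le h1 (htb i j hSi hSj)
    set v : Fin n → ℝ := fun k => if S k then t * w k else w k with hv
    have hvpos : ∀ k, 0 < v k := by
      intro k
      by_cases h : S k <;> simp [hv, h]
      · exact mul_pos ht0 (hw k)
      · exact hw k
    have hdom : ∀ p q, |A p q - v p / v q| ≤ |A p q - w p / w q| := by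
      intro p q
      have hwp := hw p; have hwq := hw q
      by_cases hp : S p <;> by_cases hq : S q
      · have : v p / v q = w p / w q := by
          simp only [hv, if_pos hp, if_pos hq]
          rw [mul_div_mul_left _ _ (ne_of_gt ht0)]
        rw [this]
      · -- p ∈ S, q ∉ S : v p / v q = t * w p / w q
        have hApos := hA.1 p q
        have hAqp := hA.1 q p
        have hlt : w q / w p < A q p := key q p hq hp
        have hle : w q / w p / A q p ≤ t := htb q p hq hp
        have hprod : A p q * A q p = 1 := by
          rw [hA.2 p q]
          field_simp
        have hle' : w q ≤ t * A q p * w p := by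
          rw [div_le_iff₀ hAqp] at hle
          rw [div_le_iff₀ hwp] at hle
          linarith
        have e1 : A p q * w q ≤ t * w p := by
          nlinarith [mul_le_mul_of_nonneg_left hle' (le_of_lt hApos)]
        have hlt' : A p q * w q < w p := by
          rw [div_lt_iff₀ hwp] at hlt
          nlinarith [mul_lt_mul_of_pos_left hlt hApos]
        simp only [hv, if_pos hp, if_neg hq]
        have hx1 : A p q ≤ t * w p / w q := by
          rw [le_div_iff₀ hwq]; linarith
        have hx2 : t * w p / w q ≤ w p / w q := by
          rw [div_le_div_iff₀ hwq hwq]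
          nlinarith [mul_nonneg (sub_pos.mpr ht1).le (mul_pos hwp hwq).le]
        have hx3 : A p q ≤ w p / w q := le_trans hx1 hx2
        rw [abs_of_nonpos (by linarith), abs_of_nonpos (by linarith)]
        linarith
      · -- p ∉ S, q ∈ S : v p / v q = w p / (t * w q)
        have hApos := hA.1 p q
        have hlt : w p / w q < A p q := key p q hp hq
        have hle : w p / w q / A p q ≤ t := htb p q hp hq
        have hle' : w p ≤ t * A p q * w q := by
          rw [div_le_iff₀ hApos] at hle
          rw [div_le_iff₀ hwq] at hle
          linarith
        simp only [hv, if_neg hp, if_pos hq]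
        have htw : 0 < t * w q := mul_pos ht0 hwq
        have hx1 : w p / (t * w q) ≤ A p q := by
          rw [div_le_iff₀ htw]; nlinarith
        have hx2 : w p / w q ≤ w p / (t * w q) := by
          apply div_le_div_of_nonneg_left (le_of_lt hwp) htw
          nlinarith
        rw [abs_of_nonneg (by linarith), abs_of_nonneg (by linarith)]
        linarith
      · have : v p / v q = w p / w q := by
          simp only [hv, if_neg hp, if_neg hq]
        rw [this]
    have heq := hE.2 v hvpos hdom i j
    simp only [hv, if_neg hSi, if_pos hSj] at heq
    rw [div_eq_div_iff (mul_pos ht0 (hw j)).ne' (hw j).ne'] at heq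
    nlinarith [mul_pos (mul_pos (hw i) (hw j)) (sub_pos.mpr ht1)]
  · -- strongly connected → Efficient
    intro hstr
    refine ⟨hw, fun v hv hdom i j => ?_⟩
    have step : ∀ a b, R a b → v a * w b ≤ w a * v b := by
      intro a b hab
      have h : A a b ≤ w a / w b := hab.2
      have hd := hdom a b
      have h1 : |A a b - w a / w b| = w a / w b - A a b := by
        rw [abs_sub_comm]; exact abs_of_nonneg (by linarith)
      rw [h1] at hd
      have h2 : v a / v b ≤ w a / w b := by
        have := (abs_le.mp hd).1
        linarith
      exact (div_le_div_iff₀ (hv b) (hw b)).mp h2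
    have mono : ∀ a b, Relation.ReflTransGen R a b → v a * w b ≤ w a * v b := by
      intro a b h
      induction h with
      | refl => rw [mul_comm]
      | @tail b c _ hbc ih =>
        have h2 := step _ _ hbc
        nlinarith [mul_pos (hv b) (hw b), hv a, hw a, hv c, hw c,
          mul_le_mul ih h2 (mul_pos (hv b) (hw c)).le (mul_pos (hw a) (hv b)).le]
    have h1 := mono i j (hstr i j)
    have h2 := mono j i (hstr j i)
    rw [div_eq_div_iff (hv j).ne' (hw j).ne']
    nlinarith
end

section
/- Let n >= 3, x > 0, and let S(x) be the n-by-n reciprocal matrix with all entries equal to 1 except the (1,2) entry equal to x and the (2,1) entry equal to 1/x. A positive vector w = (w_1,...,w_n) is efficient for S(x) if and only if either (w_2 <= w_i <= w_1 for all i in {3,...,n} and w_1 <= x w_2) or (w_2 >= w_i >= w_1 for all i in {3,...,n} and w_1 >= x w_2). -/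
private lemma abs_dom_le {a v u : ℝ} (h1 : a ≤ u) (h2 : |a - v| ≤ |a - u|) : v ≤ u := by
  have h3 : |a - u| = u - a := by
    rw [abs_sub_comm]; exact abs_of_nonneg (by linarith)
  rw [h3] at h2
  have := (abs_le.mp h2).1
  linarith

private lemma ratio_step {A vi vj wi wj : ℝ} (hvj : 0 < vj) (hwi : 0 < wi) (hwj : 0 < wj)
    (h1 : A ≤ wi / wj) (h2 : |A - vi / vj| ≤ |A - wi / wj|) : vi / wi ≤ vj / wj := by
  have h3 : vi / vj ≤ wi / wj := abs_dom_le h1 h2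
  rw [div_le_div_iff₀ hvj hwj] at h3
  rw [div_le_div_iff₀ hwi hwj]
  linarith [mul_comm wi vj]

private lemma e_one {A r c : ℝ} (hc : 1 ≤ c) (hr : 0 ≤ r) (h1 : c * r ≤ A) :
    |A - c * r| ≤ |A - r| := by
  have h2 : r ≤ c * r := by nlinarith
  rw [abs_of_nonneg (by linarith), abs_of_nonneg (by linarith)]
  linarith

private lemma e_two {A r c : ℝ} (hc : 1 ≤ c) (hA : 0 ≤ A) (h1 : c * A ≤ r) :
    |A - r / c| ≤ |A - r| := by
  have hc0 : 0 < c := by linarith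
  have hr : 0 ≤ r := le_trans (by nlinarith) h1
  have h2 : A ≤ r / c := by rw [le_div_iff₀ hc0]; nlinarith
  have h3 : r / c ≤ r := by rw [div_le_iff₀ hc0]; nlinarith
  rw [abs_of_nonpos (by linarith), abs_of_nonpos (by linarith)]
  linarith

private lemma not_eff {n : ℕ} (S : Matrix (Fin n) (Fin n) ℝ)
    (hpos : ∀ i j, 0 < S i j) (hrec : ∀ i j, S j i = (S i j)⁻¹)
    (w : Fin n → ℝ) (hw : ∀ i, 0 < w i) (T : Fin n → Prop)
    (hne : ∃ i, T i) (hpr : ∃ i, ¬ T i)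
    (hcut : ∀ i j, ¬ T i → T j → w i / w j < S i j) :
    ¬ Efficient S w := by
  classical
  rintro ⟨-, heff⟩
  obtain ⟨q, hq⟩ := hne
  obtain ⟨p, hp⟩ := hpr
  set F : Finset (Fin n × Fin n) :=
    Finset.univ.filter (fun z => ¬ T z.1 ∧ T z.2) with hF
  have hFne : F.Nonempty := ⟨(p, q), by simp [hF, hp, hq]⟩
  set g : Fin n × Fin n → ℝ := fun z => S z.1 z.2 * w z.2 / w z.1 with hg
  set c : ℝ := F.inf' hFne g with hc
  have hcg : ∀ i j, ¬ T i → T j → c ≤ S i j * w j / w i := by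
    intro i j hi hj
    rw [hc, show S i j * w j / w i = g (i, j) from rfl]
    exact Finset.inf'_le g (by rw [hF]; exact Finset.mem_filter.mpr ⟨Finset.mem_univ _, hi, hj⟩)
  have hc1 : 1 < c := by
    rw [hc, Finset.lt_inf'_iff]
    rintro ⟨i, j⟩ hz
    simp only [hF, Finset.mem_filter, Finset.mem_univ, true_and] at hz
    have h := hcut i j hz.1 hz.2
    rw [div_lt_iff₀ (hw j)] at h
    rw [hg]
    dsimp only
    rw [lt_div_iff₀ (hw i)]
    linarith
  have hc0 : (0:ℝ) < c := by linarith
  set v : Fin n → ℝ := fun i => if T i then w i else c * w i with hv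
  have hvpos : ∀ i, 0 < v i := by
    intro i; rw [hv]; dsimp only; split
    · exact hw i
    · exact mul_pos hc0 (hw i)
  have hcmp : ∀ i j, |S i j - v i / v j| ≤ |S i j - w i / w j| := by
    intro i j
    by_cases hi : T i <;> by_cases hj : T j
    · simp [hv, hi, hj]
    · -- T i, ¬ T j
      have hvij : v i / v j = (w i / w j) / c := by
        rw [hv]; dsimp only; rw [if_pos hi, if_neg hj]
        field_simp
      rw [hvij]
      apply e_two (le_of_lt hc1) (le_of_lt (hpos i j))
      have h := hcg j i hj hi
      rw [hrec i j] at h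
      rw [le_div_iff₀ (hw j)] at h
      have hS0 := hpos i j
      have hinv : S i j * (S i j)⁻¹ = 1 := mul_inv_cancel₀ (ne_of_gt hS0)
      have h2 : S i j * ((S i j)⁻¹ * w i) = w i := by rw [← mul_assoc, hinv, one_mul]
      have h3 : S i j * (c * w j) ≤ w i := by
        rw [← h2]; exact mul_le_mul_of_nonneg_left h (le_of_lt hS0)
      rw [le_div_iff₀ (hw j)]
      have h4 : c * S i j * w j = S i j * (c * w j) := by ring
      linarith
    · -- ¬ T i, T j
      have hvij : v i / v j = c * (w i / w j) := by
        rw [hv]; dsimp only; rw [if_neg hi, if_pos hj]; ring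
      rw [hvij]
      apply e_one (le_of_lt hc1) (le_of_lt (div_pos (hw i) (hw j)))
      have h := hcg i j hi hj
      rw [le_div_iff₀ (hw i)] at h
      rw [show c * (w i / w j) = c * w i / w j by ring, div_le_iff₀ (hw j)]
      exact h
    · have hvij : v i / v j = w i / w j := by
        rw [hv]; dsimp only; rw [if_neg hi, if_neg hj, mul_div_mul_left _ _ (ne_of_gt hc0)]
      rw [hvij]
  have hfin := heff v hvpos hcmp p q
  have hvp : v p = c * w p := by rw [hv]; dsimp only; rw [if_neg hp]
  have hvq : v q = w q := by rw [hv]; dsimp only; rw [if_pos hq]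
  rw [hvp, hvq] at hfin
  have hr : 0 < w p / w q := div_pos (hw p) (hw q)
  rw [mul_div_assoc] at hfin
  nlinarith [hfin, hr, hc1]

/-- Characterization of the efficient vectors for a simple perturbed consistent
matrix `S(x)` (all entries 1 except the (1,2) entry `x` and (2,1) entry `1/x`). -/
theorem stmt_3 {n : ℕ} (hn : 3 ≤ n) (x : ℝ) (hx : 0 < x) (w : Fin n → ℝ)
    (hw : ∀ i, 0 < w i)
    (S : Matrix (Fin n) (Fin n) ℝ)
    (hS : ∀ i j : Fin n, S i j =
      if i.val = 0 ∧ j.val = 1 then x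
      else if i.val = 1 ∧ j.val = 0 then x⁻¹ else 1) :
    Efficient S w ↔
      ((∀ i : Fin n, 2 ≤ i.val →
          w ⟨1, by omega⟩ ≤ w i ∧ w i ≤ w ⟨0, by omega⟩) ∧
        w ⟨0, by omega⟩ ≤ x * w ⟨1, by omega⟩) ∨
      ((∀ i : Fin n, 2 ≤ i.val →
          w i ≤ w ⟨1, by omega⟩ ∧ w ⟨0, by omega⟩ ≤ w i) ∧
        x * w ⟨1, by omega⟩ ≤ w ⟨0, by omega⟩) := by
  have hn0 : 0 < n := by omega
  have hn1 : 1 < n := by omega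
  have hn2 : 2 < n := by omega
  have hSone : ∀ i j : Fin n, ¬(i.val = 0 ∧ j.val = 1) → ¬(i.val = 1 ∧ j.val = 0) →
      S i j = 1 := by
    intro i j h1 h2; rw [hS, if_neg h1, if_neg h2]
  have hSx : S ⟨0, hn0⟩ ⟨1, hn1⟩ = x := by rw [hS]; norm_num
  have hSxi : S ⟨1, hn1⟩ ⟨0, hn0⟩ = x⁻¹ := by rw [hS]; norm_num
  constructor
  · intro heff
    by_contra hR
    rw [not_or] at hR
    obtain ⟨hP, hQ⟩ := hR
    have hSpos : ∀ i j, 0 < S i j := by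
      intro i j; rw [hS]; split_ifs
      · exact hx
      · exact inv_pos.mpr hx
      · norm_num
    have hSrec : ∀ i j, S j i = (S i j)⁻¹ := by
      intro i j; rw [hS, hS]
      split_ifs <;> try omega
      all_goals first | rw [inv_inv] | rw [inv_one] | rfl
    obtain ⟨jM, hjMK, hMax⟩ :=
      (Finset.univ.filter (fun j : Fin n => 2 ≤ j.val)).exists_max_image w
        ⟨⟨2, hn2⟩, Finset.mem_filter.mpr ⟨Finset.mem_univ _, le_refl _⟩⟩
    obtain ⟨jm, hjmK, hmin⟩ :=
      (Finset.univ.filter (fun j : Fin n => 2 ≤ j.val)).exists_min_image w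
        ⟨⟨2, hn2⟩, Finset.mem_filter.mpr ⟨Finset.mem_univ _, le_refl _⟩⟩
    have hjM2 : 2 ≤ jM.val := (Finset.mem_filter.mp hjMK).2
    have hjm2 : 2 ≤ jm.val := (Finset.mem_filter.mp hjmK).2
    have hMax' : ∀ k : Fin n, 2 ≤ k.val → w k ≤ w jM := fun k hk =>
      hMax k (Finset.mem_filter.mpr ⟨Finset.mem_univ _, hk⟩)
    have hmin' : ∀ k : Fin n, 2 ≤ k.val → w jm ≤ w k := fun k hk =>
      hmin k (Finset.mem_filter.mpr ⟨Finset.mem_univ _, hk⟩)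
    by_cases h1 : w ⟨0, hn0⟩ < w jM ∧ w ⟨1, hn1⟩ < w jM
    · refine not_eff S hSpos hSrec w hw (fun j => 2 ≤ j.val ∧ w jM ≤ w j)
        ⟨jM, hjM2, le_refl _⟩ ⟨⟨0, hn0⟩, fun h => (by norm_num : ¬(2 ≤ (0:ℕ))) h.1⟩ ?_ heff
      intro i j hi hj
      obtain ⟨hj2, hjw⟩ := hj
      rw [hSone i j (by rintro ⟨-, h⟩; omega) (by rintro ⟨-, h⟩; omega), div_lt_one (hw j)]
      by_cases hi2 : 2 ≤ i.val
      · have hiM : w i < w jM := not_le.mp (fun hle => hi ⟨hi2, hle⟩)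
        linarith
      · by_cases hi0 : i.val = 0
        · rw [show i = ⟨0, hn0⟩ from Fin.ext hi0]; linarith [h1.1]
        · rw [show i = ⟨1, hn1⟩ from Fin.ext (by omega : (i:ℕ) = 1)]; linarith [h1.2]
    · by_cases h2 : w jm < w ⟨0, hn0⟩ ∧ w jm < w ⟨1, hn1⟩
      · refine not_eff S hSpos hSrec w hw (fun j => j.val ≤ 1 ∨ w jm < w j)
          ⟨⟨0, hn0⟩, Or.inl (Nat.zero_le 1)⟩ ⟨jm, ?_⟩ ?_ heff
        · rintro (h | h)
          · omega
          · exact lt_irrefl _ h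
        · intro i j hi hj
          obtain ⟨hi2, hiw0⟩ := not_or.mp hi
          have hiw := not_lt.mp hiw0
          rw [hSone i j (by rintro ⟨h, -⟩; omega) (by rintro ⟨h, -⟩; omega), div_lt_one (hw j)]
          rcases hj with hj | hj
          · by_cases hj0 : j.val = 0
            · rw [show j = ⟨0, hn0⟩ from Fin.ext hj0]; linarith [h2.1]
            · rw [show j = ⟨1, hn1⟩ from Fin.ext (by omega : (j:ℕ) = 1)]; linarith [h2.2]
          · linarith
      · rcases lt_trichotomy (x * w ⟨1, hn1⟩) (w ⟨0, hn0⟩) with hA | hC | hB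
        · -- regime A : x w1 < w0
          by_cases hA1 : w ⟨1, hn1⟩ < max (w ⟨0, hn0⟩) (w jM)
          · refine not_eff S hSpos hSrec w hw
              (fun j => j.val ≠ 1 ∧ max (w ⟨0, hn0⟩) (w jM) ≤ w j) ?_
              ⟨⟨1, hn1⟩, fun h => h.1 rfl⟩ ?_ heff
            · rcases max_choice (w ⟨0, hn0⟩) (w jM) with hmc | hmc
              · exact ⟨⟨0, hn0⟩, (by norm_num : (0:ℕ) ≠ 1), le_of_eq hmc⟩
              · exact ⟨jM, by omega, le_of_eq hmc⟩
            · intro i j hi hj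
              obtain ⟨hj1, hjw⟩ := hj
              by_cases hi1 : i.val = 1
              · by_cases hj0 : j.val = 0
                · rw [show i = ⟨1, hn1⟩ from Fin.ext hi1,
                    show j = ⟨0, hn0⟩ from Fin.ext hj0, hSxi,
                    div_lt_iff₀ (hw ⟨0, hn0⟩)]
                  have hxi : x⁻¹ * (x * w ⟨1, hn1⟩) = w ⟨1, hn1⟩ := by field_simp
                  have h5 := mul_lt_mul_of_pos_left hA (inv_pos.mpr hx)
                  linarith
                · have hj2 : 2 ≤ j.val := by omega
                  rw [hSone i j (by rintro ⟨h, -⟩; omega) (by rintro ⟨-, h⟩; omega),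
                    div_lt_one (hw j)]
                  rw [show i = ⟨1, hn1⟩ from Fin.ext hi1]
                  linarith
              · have hiw : w i < max (w ⟨0, hn0⟩) (w jM) :=
                  not_le.mp (fun h => hi ⟨hi1, h⟩)
                rw [hSone i j (by rintro ⟨-, h⟩; exact hj1 h) (by rintro ⟨h, -⟩; exact hi1 h),
                  div_lt_one (hw j)]
                linarith
          · push_neg at hA1
            have haleb : w ⟨0, hn0⟩ ≤ w ⟨1, hn1⟩ := le_trans (le_max_left _ _) hA1
            have hMb : w jM ≤ w ⟨1, hn1⟩ := le_trans (le_max_right _ _) hA1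
            have hCfail : ¬(∀ i : Fin n, 2 ≤ i.val →
                w i ≤ w ⟨1, hn1⟩ ∧ w ⟨0, hn0⟩ ≤ w i) :=
              fun h => hQ ⟨h, le_of_lt hA⟩
            push_neg at hCfail
            obtain ⟨k, hk2, hk⟩ := hCfail
            have hwk : w k < w ⟨0, hn0⟩ := hk (le_trans (hMax' k hk2) hMb)
            refine not_eff S hSpos hSrec w hw (fun j => j.val ≤ 1 ∨ w ⟨0, hn0⟩ ≤ w j)
              ⟨⟨0, hn0⟩, Or.inl (Nat.zero_le 1)⟩ ⟨k, ?_⟩ ?_ heff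
            · rintro (h | h)
              · omega
              · linarith
            · intro i j hi hj
              obtain ⟨hi2, hiw0⟩ := not_or.mp hi
              have hiw := not_le.mp hiw0
              rw [hSone i j (by rintro ⟨h, -⟩; omega) (by rintro ⟨h, -⟩; omega),
                div_lt_one (hw j)]
              rcases hj with hj | hj
              · by_cases hj0 : j.val = 0
                · rw [show j = ⟨0, hn0⟩ from Fin.ext hj0]; linarith
                · rw [show j = ⟨1, hn1⟩ from Fin.ext (by omega : (j:ℕ) = 1)]; linarith
              · linarith
        · -- regime C : x w1 = w0
          rw [not_and_or] at h1 h2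
          have hB' : w ⟨0, hn0⟩ ≤ x * w ⟨1, hn1⟩ := le_of_eq hC.symm
          have hD' : x * w ⟨1, hn1⟩ ≤ w ⟨0, hn0⟩ := le_of_eq hC
          have hAfail : ¬(∀ i : Fin n, 2 ≤ i.val →
              w ⟨1, hn1⟩ ≤ w i ∧ w i ≤ w ⟨0, hn0⟩) :=
            fun h => hP ⟨h, hB'⟩
          have hCfail : ¬(∀ i : Fin n, 2 ≤ i.val →
              w i ≤ w ⟨1, hn1⟩ ∧ w ⟨0, hn0⟩ ≤ w i) :=
            fun h => hQ ⟨h, hD'⟩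
          rcases le_total (w ⟨0, hn0⟩) (w ⟨1, hn1⟩) with hab | hab
          · apply hCfail
            intro k hk
            have hMb : w jM ≤ w ⟨1, hn1⟩ := by
              rcases h1 with h | h
              · linarith [not_lt.mp h]
              · exact not_lt.mp h
            have ham : w ⟨0, hn0⟩ ≤ w jm := by
              rcases h2 with h | h
              · exact not_lt.mp h
              · linarith [not_lt.mp h]
            exact ⟨le_trans (hMax' k hk) hMb, le_trans ham (hmin' k hk)⟩
          · apply hAfail
            intro k hk
            have hMa : w jM ≤ w ⟨0, hn0⟩ := by
              rcases h1 with h | h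
              · exact not_lt.mp h
              · linarith [not_lt.mp h]
            have hbm : w ⟨1, hn1⟩ ≤ w jm := by
              rcases h2 with h | h
              · linarith [not_lt.mp h]
              · exact not_lt.mp h
            exact ⟨le_trans hbm (hmin' k hk), le_trans (hMax' k hk) hMa⟩
        · -- regime B : w0 < x w1
          by_cases hB1 : w ⟨0, hn0⟩ < max (w ⟨1, hn1⟩) (w jM)
          · refine not_eff S hSpos hSrec w hw
              (fun j => j.val ≠ 0 ∧ max (w ⟨1, hn1⟩) (w jM) ≤ w j) ?_
              ⟨⟨0, hn0⟩, fun h => h.1 rfl⟩ ?_ heff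
            · rcases max_choice (w ⟨1, hn1⟩) (w jM) with hmc | hmc
              · exact ⟨⟨1, hn1⟩, (by norm_num : (1:ℕ) ≠ 0), le_of_eq hmc⟩
              · exact ⟨jM, by omega, le_of_eq hmc⟩
            · intro i j hi hj
              obtain ⟨hj0, hjw⟩ := hj
              by_cases hi0 : i.val = 0
              · by_cases hj1 : j.val = 1
                · rw [show i = ⟨0, hn0⟩ from Fin.ext hi0,
                    show j = ⟨1, hn1⟩ from Fin.ext hj1, hSx,
                    div_lt_iff₀ (hw ⟨1, hn1⟩)]
                  exact hB
                · have hj2 : 2 ≤ j.val := by omega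
                  rw [hSone i j (by rintro ⟨-, h⟩; omega) (by rintro ⟨h, -⟩; omega),
                    div_lt_one (hw j)]
                  rw [show i = ⟨0, hn0⟩ from Fin.ext hi0]
                  linarith
              · have hiw : w i < max (w ⟨1, hn1⟩) (w jM) :=
                  not_le.mp (fun h => hi ⟨hi0, h⟩)
                rw [hSone i j (by rintro ⟨h, -⟩; exact hi0 h) (by rintro ⟨-, h⟩; exact hj0 h),
                  div_lt_one (hw j)]
                linarith
          · push_neg at hB1
            have hblea : w ⟨1, hn1⟩ ≤ w ⟨0, hn0⟩ := le_trans (le_max_left _ _) hB1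
            have hMa : w jM ≤ w ⟨0, hn0⟩ := le_trans (le_max_right _ _) hB1
            have hAfail : ¬(∀ i : Fin n, 2 ≤ i.val →
                w ⟨1, hn1⟩ ≤ w i ∧ w i ≤ w ⟨0, hn0⟩) :=
              fun h => hP ⟨h, le_of_lt hB⟩
            push_neg at hAfail
            obtain ⟨k, hk2, hk⟩ := hAfail
            have hwk : w k < w ⟨1, hn1⟩ := by
              by_contra hcon
              push_neg at hcon
              exact absurd (hk hcon) (not_lt.mpr (le_trans (hMax' k hk2) hMa))
            refine not_eff S hSpos hSrec w hw (fun j => j.val ≤ 1 ∨ w ⟨1, hn1⟩ ≤ w j)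
              ⟨⟨0, hn0⟩, Or.inl (Nat.zero_le 1)⟩ ⟨k, ?_⟩ ?_ heff
            · rintro (h | h)
              · omega
              · linarith
            · intro i j hi hj
              obtain ⟨hi2, hiw0⟩ := not_or.mp hi
              have hiw := not_le.mp hiw0
              rw [hSone i j (by rintro ⟨h, -⟩; omega) (by rintro ⟨h, -⟩; omega),
                div_lt_one (hw j)]
              rcases hj with hj | hj
              · by_cases hj0 : j.val = 0
                · rw [show j = ⟨0, hn0⟩ from Fin.ext hj0]; linarith
                · rw [show j = ⟨1, hn1⟩ from Fin.ext (by omega : (j:ℕ) = 1)]; linarith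
              · linarith
  · rintro (⟨hord, hxb⟩ | ⟨hord, hxb⟩)
    · -- case 1 : w1 ≤ wi ≤ w0, w0 ≤ x w1
      have hxb' : w ⟨0, hn0⟩ ≤ x * w ⟨1, hn1⟩ := hxb
      have hord' : ∀ i : Fin n, 2 ≤ i.val → w ⟨1, hn1⟩ ≤ w i ∧ w i ≤ w ⟨0, hn0⟩ := hord
      refine ⟨hw, ?_⟩
      intro v hv hcmp
      have key : ∀ (p q : Fin n) (A : ℝ), S p q = A → A ≤ w p / w q →
          v p / w p ≤ v q / w q := by
        intro p q A hA h1
        have h2 := hcmp p q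
        rw [hA] at h2
        exact ratio_step (hv q) (hw p) (hw q) h1 h2
      have h10 : v ⟨1, hn1⟩ / w ⟨1, hn1⟩ ≤ v ⟨0, hn0⟩ / w ⟨0, hn0⟩ := by
        apply key _ _ _ hSxi
        rw [le_div_iff₀ (hw ⟨0, hn0⟩)]
        have hxi : x⁻¹ * (x * w ⟨1, hn1⟩) = w ⟨1, hn1⟩ := by
          field_simp
        have h5 := mul_le_mul_of_nonneg_left hxb' (inv_nonneg.mpr hx.le)
        linarith
      have h0k : ∀ k : Fin n, 2 ≤ k.val → v ⟨0, hn0⟩ / w ⟨0, hn0⟩ ≤ v k / w k := by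
        intro k hk
        refine key _ _ 1 (hSone _ _ ?_ ?_) ((one_le_div (hw k)).mpr (hord' k hk).2)
        · rintro ⟨-, h⟩; omega
        · rintro ⟨h, -⟩; simp at h
      have hk1 : ∀ k : Fin n, 2 ≤ k.val → v k / w k ≤ v ⟨1, hn1⟩ / w ⟨1, hn1⟩ := by
        intro k hk
        refine key _ _ 1 (hSone _ _ ?_ ?_) ((one_le_div (hw ⟨1, hn1⟩)).mpr (hord' k hk).1)
        · rintro ⟨h, -⟩; omega
        · rintro ⟨-, h⟩; simp at h
      have h2v : (2:ℕ) ≤ (⟨2, hn2⟩ : Fin n).val := le_refl _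
      have h01 : v ⟨0, hn0⟩ / w ⟨0, hn0⟩ ≤ v ⟨1, hn1⟩ / w ⟨1, hn1⟩ :=
        (h0k ⟨2, hn2⟩ h2v).trans (hk1 ⟨2, hn2⟩ h2v)
      have hconst : ∀ k : Fin n, v k / w k = v ⟨0, hn0⟩ / w ⟨0, hn0⟩ := by
        intro k
        by_cases hk0 : k.val = 0
        · rw [show k = ⟨0, hn0⟩ from Fin.ext hk0]
        · by_cases hk1' : k.val = 1
          · rw [show k = ⟨1, hn1⟩ from Fin.ext hk1']
            exact le_antisymm h10 h01
          · have hk2 : 2 ≤ k.val := by omega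
            exact le_antisymm ((hk1 k hk2).trans h10) (h0k k hk2)
      intro i j
      have cpos : 0 < v ⟨0, hn0⟩ / w ⟨0, hn0⟩ := div_pos (hv _) (hw _)
      have hvi : v i = (v ⟨0, hn0⟩ / w ⟨0, hn0⟩) * w i := by
        rw [← hconst i, div_mul_cancel₀ _ (ne_of_gt (hw i))]
      have hvj : v j = (v ⟨0, hn0⟩ / w ⟨0, hn0⟩) * w j := by
        rw [← hconst j, div_mul_cancel₀ _ (ne_of_gt (hw j))]
      rw [hvi, hvj, mul_div_mul_left _ _ (ne_of_gt cpos)]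
    · -- case 2 : wi ≤ w1, w0 ≤ wi, x w1 ≤ w0
      have hxb' : x * w ⟨1, hn1⟩ ≤ w ⟨0, hn0⟩ := hxb
      have hord' : ∀ i : Fin n, 2 ≤ i.val → w i ≤ w ⟨1, hn1⟩ ∧ w ⟨0, hn0⟩ ≤ w i := hord
      refine ⟨hw, ?_⟩
      intro v hv hcmp
      have key : ∀ (p q : Fin n) (A : ℝ), S p q = A → A ≤ w p / w q →
          v p / w p ≤ v q / w q := by
        intro p q A hA h1
        have h2 := hcmp p q
        rw [hA] at h2
        exact ratio_step (hv q) (hw p) (hw q) h1 h2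
      have h01 : v ⟨0, hn0⟩ / w ⟨0, hn0⟩ ≤ v ⟨1, hn1⟩ / w ⟨1, hn1⟩ := by
        apply key _ _ _ hSx
        rw [le_div_iff₀ (hw ⟨1, hn1⟩)]
        exact hxb'
      have hk0 : ∀ k : Fin n, 2 ≤ k.val → v k / w k ≤ v ⟨0, hn0⟩ / w ⟨0, hn0⟩ := by
        intro k hk
        refine key _ _ 1 (hSone _ _ ?_ ?_) ((one_le_div (hw ⟨0, hn0⟩)).mpr (hord' k hk).2)
        · rintro ⟨h, -⟩; omega
        · rintro ⟨h, -⟩; omega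
      have h1k : ∀ k : Fin n, 2 ≤ k.val → v ⟨1, hn1⟩ / w ⟨1, hn1⟩ ≤ v k / w k := by
        intro k hk
        refine key _ _ 1 (hSone _ _ ?_ ?_) ((one_le_div (hw k)).mpr (hord' k hk).1)
        · rintro ⟨-, h⟩; omega
        · rintro ⟨-, h⟩; omega
      have h2v : (2:ℕ) ≤ (⟨2, hn2⟩ : Fin n).val := le_refl _
      have h10 : v ⟨1, hn1⟩ / w ⟨1, hn1⟩ ≤ v ⟨0, hn0⟩ / w ⟨0, hn0⟩ :=
        (h1k ⟨2, hn2⟩ h2v).trans (hk0 ⟨2, hn2⟩ h2v)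
      have hconst : ∀ k : Fin n, v k / w k = v ⟨0, hn0⟩ / w ⟨0, hn0⟩ := by
        intro k
        by_cases hk0' : k.val = 0
        · rw [show k = ⟨0, hn0⟩ from Fin.ext hk0']
        · by_cases hk1' : k.val = 1
          · rw [show k = ⟨1, hn1⟩ from Fin.ext hk1']
            exact le_antisymm h10 h01
          · have hk2 : 2 ≤ k.val := by omega
            exact le_antisymm (hk0 k hk2) (h01.trans (h1k k hk2))
      intro i j
      have cpos : 0 < v ⟨0, hn0⟩ / w ⟨0, hn0⟩ := div_pos (hv _) (hw _)
      have hvi : v i = (v ⟨0, hn0⟩ / w ⟨0, hn0⟩) * w i := by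
        rw [← hconst i, div_mul_cancel₀ _ (ne_of_gt (hw i))]
      have hvj : v j = (v ⟨0, hn0⟩ / w ⟨0, hn0⟩) * w j := by
        rw [← hconst j, div_mul_cancel₀ _ (ne_of_gt (hw j))]
      rw [hvi, hvj, mul_div_mul_left _ _ (ne_of_gt cpos)]
end

section
/- Let A be a 3-by-3 reciprocal matrix with entries a_{12}, a_{13}, a_{23} above the diagonal. A positive vector w = (w_1, w_2, w_3) is efficient for A if and only if (a_{23} w_3 <= w_2 <= w_1/a_{12} <= (a_{13}/a_{12}) w_3) or (a_{23} w_3 >= w_2 >= w_1/a_{12} >= (a_{13}/a_{12}) w_3). -/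
lemma le_of_abs' (x p q : ℝ) (hq : x ≤ q) (h : |x - p| ≤ |x - q|) : p ≤ q := by
  have h1 : p - x ≤ |x - p| := by rw [abs_sub_comm]; exact le_abs_self _
  have h2 : |x - q| = q - x := by rw [abs_sub_comm, abs_of_nonneg (by linarith)]
  linarith

lemma ge_of_abs' (x p q : ℝ) (hq : q ≤ x) (h : |x - p| ≤ |x - q|) : q ≤ p := by
  have h1 : x - p ≤ |x - p| := le_abs_self _
  have h2 : |x - q| = x - q := abs_of_nonneg (by linarith)
  linarith

lemma inv_lt_div' {p q r : ℝ} (hp : 0 < p) (hq : 0 < q) (hr : 0 < r)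
    (h : p < q * r) : q⁻¹ < r / p := by
  rw [lt_div_iff₀ hp]
  nlinarith [mul_inv_cancel₀ hq.ne', inv_pos.mpr hq]

lemma div_lt_inv' {p q r : ℝ} (hp : 0 < p) (hq : 0 < q) (hr : 0 < r)
    (h : q * r < p) : r / p < q⁻¹ := by
  rw [div_lt_iff₀ hp]
  nlinarith [mul_inv_cancel₀ hq.ne', inv_pos.mpr hq]

lemma inv_le_div' {p q r : ℝ} (hp : 0 < p) (hq : 0 < q) (hr : 0 < r)
    (h : p ≤ q * r) : q⁻¹ ≤ r / p := by
  rw [le_div_iff₀ hp]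
  nlinarith [mul_inv_cancel₀ hq.ne', inv_pos.mpr hq]

lemma div_le_inv' {p q r : ℝ} (hp : 0 < p) (hq : 0 < q) (hr : 0 < r)
    (h : q * r ≤ p) : r / p ≤ q⁻¹ := by
  rw [div_le_iff₀ hp]
  nlinarith [mul_inv_cancel₀ hq.ne', inv_pos.mpr hq]

lemma eq_of_le_prod' (P Q R X Y Z : ℝ) (hP : 0 < P) (hQ : 0 < Q) (hR : 0 < R)
    (h1 : P ≤ X) (h2 : Q ≤ Y) (h3 : R ≤ Z) (h : P * Q * R = X * Y * Z) :
    P = X ∧ Q = Y ∧ R = Z := by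
  have hX : 0 < X := lt_of_lt_of_le hP h1
  have hY : 0 < Y := lt_of_lt_of_le hQ h2
  have hZ : 0 < Z := lt_of_lt_of_le hR h3
  refine ⟨le_antisymm h1 ?_, le_antisymm h2 ?_, le_antisymm h3 ?_⟩
  · nlinarith [mul_le_mul h2 h3 hR.le hY.le, mul_pos hQ hR]
  · nlinarith [mul_le_mul h1 h3 hR.le hX.le, mul_pos hP hR]
  · nlinarith [mul_le_mul h1 h2 hQ.le hX.le, mul_pos hP hQ]

lemma key1 (a p t : ℝ) (ha : 0 < a) (hp : 0 < p) (hap : a < p)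
    (ht1 : a / p ≤ t) (ht2 : t ≤ 1) :
    |a - t * p| ≤ |a - p| ∧ |a⁻¹ - (t * p)⁻¹| ≤ |a⁻¹ - p⁻¹| := by
  have ht0 : 0 < t := lt_of_lt_of_le (div_pos ha hp) ht1
  have h1 : a ≤ t * p := by rw [div_le_iff₀ hp] at ht1; linarith
  have h2 : t * p ≤ p := by nlinarith
  have htp : 0 < t * p := by positivity
  constructor
  · rw [abs_of_nonpos (by linarith), abs_of_nonpos (by linarith)]; linarith
  · have i1 : (t * p)⁻¹ ≤ a⁻¹ := by rw [inv_le_inv₀ htp ha]; exact h1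
    have i2 : p⁻¹ ≤ (t * p)⁻¹ := by rw [inv_le_inv₀ (by positivity) htp]; exact h2
    rw [abs_of_nonneg (by linarith), abs_of_nonneg (by linarith)]; linarith

lemma key2 (a p t : ℝ) (ha : 0 < a) (hp : 0 < p) (hap : p < a)
    (ht1 : 1 ≤ t) (ht2 : t ≤ a / p) :
    |a - t * p| ≤ |a - p| ∧ |a⁻¹ - (t * p)⁻¹| ≤ |a⁻¹ - p⁻¹| := by
  have ht0 : 0 < t := lt_of_lt_of_le one_pos ht1
  have h1 : p ≤ t * p := by nlinarith
  have h2 : t * p ≤ a := by rw [le_div_iff₀ hp] at ht2; linarith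
  have htp : 0 < t * p := by positivity
  constructor
  · rw [abs_of_nonneg (by linarith), abs_of_nonneg (by linarith)]; linarith
  · have i1 : a⁻¹ ≤ (t * p)⁻¹ := by rw [inv_le_inv₀ ha htp]; exact h2
    have i2 : (t * p)⁻¹ ≤ p⁻¹ := by rw [inv_le_inv₀ htp hp]; exact h1
    rw [abs_of_nonpos (by linarith), abs_of_nonpos (by linarith)]; linarith

lemma ratios (v w : Fin 3 → ℝ) (hv : ∀ i, 0 < v i) (hw : ∀ i, 0 < w i)
    (h01 : v 0 / v 1 = w 0 / w 1) (h12 : v 1 / v 2 = w 1 / w 2) :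
    ∀ i j, v i / v j = w i / w j := by
  have hmul : ∀ (u : Fin 3 → ℝ), (∀ i, 0 < u i) → u 0 / u 1 * (u 1 / u 2) = u 0 / u 2 := by
    intro u hu
    rw [div_mul_div_comm, mul_comm (u 0) (u 1)]
    exact mul_div_mul_left _ _ (hu 1).ne'
  have h02 : v 0 / v 2 = w 0 / w 2 := by
    rw [← hmul v hv, ← hmul w hw, h01, h12]
  have hinv : ∀ i j : Fin 3, v i / v j = w i / w j → v j / v i = w j / w i := by
    intro i j h
    rw [← inv_div (v i) (v j), ← inv_div (w i) (w j), h]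
  intro i j
  fin_cases i <;> fin_cases j
  · simp [div_self (hv 0).ne', div_self (hw 0).ne']
  · exact h01
  · exact h02
  · exact hinv 0 1 h01
  · simp [div_self (hv 1).ne', div_self (hw 1).ne']
  · exact h12
  · exact hinv 0 2 h02
  · exact hinv 1 2 h12
  · simp [div_self (hv 2).ne', div_self (hw 2).ne']

lemma notEff (A : Matrix (Fin 3) (Fin 3) ℝ) (hA : Reciprocal A)
    (w : Fin 3 → ℝ) (hw : ∀ i, 0 < w i) (i j k : Fin 3)
    (hij : j ≠ i) (hki : k ≠ i)
    (hcov : ∀ p : Fin 3, p = i ∨ p = j ∨ p = k)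
    (h1 : A i j < w i / w j) (h2 : A i k < w i / w k) : ¬ Efficient A w := by
  intro hE
  have haij := hA.1 i j
  have haik := hA.1 i k
  have hdj : 0 < w i / w j := div_pos (hw i) (hw j)
  have hdk : 0 < w i / w k := div_pos (hw i) (hw k)
  set t := max (A i j / (w i / w j)) (A i k / (w i / w k)) with hT
  have ht1 : t < 1 := max_lt ((div_lt_one hdj).mpr h1) ((div_lt_one hdk).mpr h2)
  have ht0 : 0 < t := lt_of_lt_of_le (div_pos haij hdj) (le_max_left _ _)
  have Kj := key1 (A i j) (w i / w j) t haij hdj h1 (le_max_left _ _) ht1.le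
  have Kk := key1 (A i k) (w i / w k) t haik hdk h2 (le_max_right _ _) ht1.le
  set v : Fin 3 → ℝ := fun p => if p = i then t * w p else w p with hvdef
  have hvi : v i = t * w i := if_pos rfl
  have hvo : ∀ p, p ≠ i → v p = w p := fun p hp => if_neg hp
  have hv : ∀ p, 0 < v p := by
    intro p
    by_cases hp : p = i
    · rw [hp, hvi]; exact mul_pos ht0 (hw i)
    · rw [hvo p hp]; exact hw p
  have einv : ∀ q : Fin 3, w q / (t * w i) = (t * (w i / w q))⁻¹ := by
    intro q
    rw [mul_inv, inv_div]
    field_simp [ht0.ne']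
  have hc : ∀ p q, |A p q - v p / v q| ≤ |A p q - w p / w q| := by
    intro p q
    rcases eq_or_ne p q with rfl | hpq
    · rw [div_self (hv p).ne', div_self (hw p).ne']
    · by_cases hp : p = i
      · subst hp
        rcases hcov q with h | h | h
        · exact absurd h.symm hpq
        · rw [h, hvi, hvo j hij, mul_div_assoc]; exact Kj.1
        · rw [h, hvi, hvo k hki, mul_div_assoc]; exact Kk.1
      · by_cases hq : q = i
        · rw [hq]
          rcases hcov p with h | h | h
          · exact absurd h hp
          · rw [h, hA.2 i j, hvo j hij, hvi, einv j,
              show w j / w i = (w i / w j)⁻¹ from (inv_div _ _).symm]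
            exact Kj.2
          · rw [h, hA.2 i k, hvo k hki, hvi, einv k,
              show w k / w i = (w i / w k)⁻¹ from (inv_div _ _).symm]
            exact Kk.2
        · rw [hvo p hp, hvo q hq]
  have heq := hE.2 v hv hc i j
  rw [hvi, hvo j hij, mul_div_assoc] at heq
  nlinarith

lemma notEff' (A : Matrix (Fin 3) (Fin 3) ℝ) (hA : Reciprocal A)
    (w : Fin 3 → ℝ) (hw : ∀ i, 0 < w i) (i j k : Fin 3)
    (hij : j ≠ i) (hki : k ≠ i)
    (hcov : ∀ p : Fin 3, p = i ∨ p = j ∨ p = k)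
    (h1 : w i / w j < A i j) (h2 : w i / w k < A i k) : ¬ Efficient A w := by
  intro hE
  have haij := hA.1 i j
  have haik := hA.1 i k
  have hdj : 0 < w i / w j := div_pos (hw i) (hw j)
  have hdk : 0 < w i / w k := div_pos (hw i) (hw k)
  set t := min (A i j / (w i / w j)) (A i k / (w i / w k)) with hT
  have ht1 : 1 < t := lt_min ((one_lt_div hdj).mpr h1) ((one_lt_div hdk).mpr h2)
  have ht0 : 0 < t := lt_trans one_pos ht1
  have Kj := key2 (A i j) (w i / w j) t haij hdj h1 ht1.le (min_le_left _ _)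
  have Kk := key2 (A i k) (w i / w k) t haik hdk h2 ht1.le (min_le_right _ _)
  set v : Fin 3 → ℝ := fun p => if p = i then t * w p else w p with hvdef
  have hvi : v i = t * w i := if_pos rfl
  have hvo : ∀ p, p ≠ i → v p = w p := fun p hp => if_neg hp
  have hv : ∀ p, 0 < v p := by
    intro p
    by_cases hp : p = i
    · rw [hp, hvi]; exact mul_pos ht0 (hw i)
    · rw [hvo p hp]; exact hw p
  have einv : ∀ q : Fin 3, w q / (t * w i) = (t * (w i / w q))⁻¹ := by
    intro q
    rw [mul_inv, inv_div]
    field_simp [ht0.ne']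
  have hc : ∀ p q, |A p q - v p / v q| ≤ |A p q - w p / w q| := by
    intro p q
    rcases eq_or_ne p q with rfl | hpq
    · rw [div_self (hv p).ne', div_self (hw p).ne']
    · by_cases hp : p = i
      · subst hp
        rcases hcov q with h | h | h
        · exact absurd h.symm hpq
        · rw [h, hvi, hvo j hij, mul_div_assoc]; exact Kj.1
        · rw [h, hvi, hvo k hki, mul_div_assoc]; exact Kk.1
      · by_cases hq : q = i
        · rw [hq]
          rcases hcov p with h | h | h
          · exact absurd h hp
          · rw [h, hA.2 i j, hvo j hij, hvi, einv j,
              show w j / w i = (w i / w j)⁻¹ from (inv_div _ _).symm]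
            exact Kj.2
          · rw [h, hA.2 i k, hvo k hki, hvi, einv k,
              show w k / w i = (w i / w k)⁻¹ from (inv_div _ _).symm]
            exact Kk.2
        · rw [hvo p hp, hvo q hq]
  have heq := hE.2 v hv hc i j
  rw [hvi, hvo j hij, mul_div_assoc] at heq
  nlinarith

set_option maxHeartbeats 4000000 in
/-- Characterization of efficient vectors for a 3-by-3 reciprocal matrix. -/
theorem stmt_4 (A : Matrix (Fin 3) (Fin 3) ℝ) (hA : Reciprocal A)
    (hdiag : ∀ i, A i i = 1) (w : Fin 3 → ℝ) (hw : ∀ i, 0 < w i) :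
    Efficient A w ↔
      (A 1 2 * w 2 ≤ w 1 ∧ w 1 ≤ w 0 / A 0 1 ∧ w 0 / A 0 1 ≤ (A 0 2 / A 0 1) * w 2) ∨
      (A 1 2 * w 2 ≥ w 1 ∧ w 1 ≥ w 0 / A 0 1 ∧ w 0 / A 0 1 ≥ (A 0 2 / A 0 1) * w 2) := by
  have ha := hA.1 0 1
  have hb := hA.1 0 2
  have hcp := hA.1 1 2
  have r10 : A 1 0 = (A 0 1)⁻¹ := hA.2 0 1
  have r20 : A 2 0 = (A 0 2)⁻¹ := hA.2 0 2
  have r21 : A 2 1 = (A 1 2)⁻¹ := hA.2 1 2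
  constructor
  · -- Efficient → condition
    intro hE
    by_contra hC
    rcases lt_trichotomy (A 1 2 * w 2) (w 1) with h1 | h1 | h1 <;>
      rcases lt_trichotomy (A 0 1 * w 1) (w 0) with h2 | h2 | h2 <;>
      rcases lt_trichotomy (w 0) (A 0 2 * w 2) with h3 | h3 | h3 <;>
      first
      | exact hC (Or.inl ⟨by linarith,
          by rw [le_div_iff₀ ha]; linarith,
          by rw [div_mul_eq_mul_div, div_le_div_iff₀ ha ha]; nlinarith⟩)
      | exact hC (Or.inr ⟨by linarith,
          by rw [ge_iff_le, div_le_iff₀ ha]; linarith,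
          by rw [ge_iff_le, div_mul_eq_mul_div, div_le_div_iff₀ ha ha]; nlinarith⟩)
      | exact notEff A hA w hw 0 1 2 (by decide) (by decide) (by decide)
          (by rw [lt_div_iff₀ (hw 1)]; linarith)
          (by rw [lt_div_iff₀ (hw 2)]; linarith) hE
      | exact notEff' A hA w hw 0 1 2 (by decide) (by decide) (by decide)
          (by rw [div_lt_iff₀ (hw 1)]; linarith)
          (by rw [div_lt_iff₀ (hw 2)]; linarith) hE
      | exact notEff A hA w hw 1 0 2 (by decide) (by decide) (by decide)
          (by rw [r10]; exact inv_lt_div' (hw 0) ha (hw 1) (by linarith))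
          (by rw [lt_div_iff₀ (hw 2)]; linarith) hE
      | exact notEff' A hA w hw 1 0 2 (by decide) (by decide) (by decide)
          (by rw [r10]; exact div_lt_inv' (hw 0) ha (hw 1) (by linarith))
          (by rw [div_lt_iff₀ (hw 2)]; linarith) hE
      | exact notEff A hA w hw 2 0 1 (by decide) (by decide) (by decide)
          (by rw [r20]; exact inv_lt_div' (hw 0) hb (hw 2) (by linarith))
          (by rw [r21]; exact inv_lt_div' (hw 1) hcp (hw 2) (by linarith)) hE
      | exact notEff' A hA w hw 2 0 1 (by decide) (by decide) (by decide)
          (by rw [r20]; exact div_lt_inv' (hw 0) hb (hw 2) (by linarith))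
          (by rw [r21]; exact div_lt_inv' (hw 1) hcp (hw 2) (by linarith)) hE
  · -- condition → Efficient
    intro h
    refine ⟨hw, ?_⟩
    intro v hv hle
    have prod1 : ∀ u : Fin 3 → ℝ, (∀ i, 0 < u i) →
        (u 0 / u 1) * (u 1 / u 2) * (u 2 / u 0) = 1 := by
      intro u hu
      field_simp [(hu 0).ne', (hu 1).ne', (hu 2).ne']
    have pv := prod1 v hv
    have pw := prod1 w hw
    rcases h with ⟨c1, c2, c3⟩ | ⟨c1, c2, c3⟩
    · have m3 : w 0 ≤ A 0 2 * w 2 := by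
        rw [div_mul_eq_mul_div, div_le_div_iff₀ ha ha] at c3; nlinarith
      have hx : A 0 1 ≤ w 0 / w 1 := by
        rw [le_div_iff₀ (hw 1)]; rw [le_div_iff₀ ha] at c2; linarith
      have hy : A 1 2 ≤ w 1 / w 2 := by rw [le_div_iff₀ (hw 2)]; linarith
      have hz : A 2 0 ≤ w 2 / w 0 := by
        rw [r20]; exact inv_le_div' (hw 0) hb (hw 2) m3
      have hP := le_of_abs' _ _ _ hx (hle 0 1)
      have hQ := le_of_abs' _ _ _ hy (hle 1 2)
      have hR := le_of_abs' _ _ _ hz (hle 2 0)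
      obtain ⟨e1, e2, -⟩ := eq_of_le_prod' _ _ _ _ _ _
        (div_pos (hv 0) (hv 1)) (div_pos (hv 1) (hv 2)) (div_pos (hv 2) (hv 0))
        hP hQ hR (by rw [pv, pw])
      exact ratios v w hv hw e1 e2
    · have m3 : A 0 2 * w 2 ≤ w 0 := by
        rw [ge_iff_le, div_mul_eq_mul_div, div_le_div_iff₀ ha ha] at c3; nlinarith
      have hx : w 0 / w 1 ≤ A 0 1 := by
        rw [div_le_iff₀ (hw 1)]; rw [ge_iff_le, div_le_iff₀ ha] at c2; linarith
      have hy : w 1 / w 2 ≤ A 1 2 := by rw [div_le_iff₀ (hw 2)]; linarith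
      have hz : w 2 / w 0 ≤ A 2 0 := by
        rw [r20]; exact div_le_inv' (hw 0) hb (hw 2) m3
      have hP := ge_of_abs' _ _ _ hx (hle 0 1)
      have hQ := ge_of_abs' _ _ _ hy (hle 1 2)
      have hR := ge_of_abs' _ _ _ hz (hle 2 0)
      obtain ⟨e1, e2, -⟩ := eq_of_le_prod' _ _ _ _ _ _
        (div_pos (hw 0) (hw 1)) (div_pos (hw 1) (hw 2)) (div_pos (hw 2) (hw 0))
        hP hQ hR (by rw [pv, pw])
      exact ratios v w hv hw e1.symm e2.symm
end

section
/- Let A be an n-by-n reciprocal matrix, w a positive n-vector, and k in {1,...,n}. Suppose the vector w(k) obtained by deleting entry k is efficient for the principal submatrix A(k) obtained by deleting row and column k. Then w is efficient for A if and only if min_{i≠k} w_i/a_{ik} <= w_k <= max_{i≠k} w_i/a_{ik}. -/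
/-- Extension lemma: if `w(k)` is efficient for `A(k)`, then `w` is efficient
for `A` iff `min_{i≠k} w i / A i k ≤ w k ≤ max_{i≠k} w i / A i k`. -/
theorem stmt_5 {n : ℕ} (hn : 1 ≤ n) (A : Matrix (Fin (n + 1)) (Fin (n + 1)) ℝ)
    (hA : Reciprocal A) (w : Fin (n + 1) → ℝ) (hw : ∀ i, 0 < w i)
    (k : Fin (n + 1))
    (hdel : Efficient (A.submatrix k.succAbove k.succAbove) (w ∘ k.succAbove)) :
    Efficient A w ↔
      ((∃ i, i ≠ k ∧ w i / A i k ≤ w k) ∧ (∃ i, i ≠ k ∧ w k ≤ w i / A i k)) := by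
  obtain ⟨hApos, hArec⟩ := hA
  have z : Fin n := ⟨0, hn⟩
  set i₀ : Fin (n + 1) := k.succAbove z with hi₀def
  have hi₀ : i₀ ≠ k := Fin.succAbove_ne k z
  constructor
  · -- forward direction
    intro heff
    by_contra hC
    rw [not_and_or] at hC
    set s : Finset ℝ := (Finset.univ.erase k).image (fun i => w i / A i k) with hsdef
    have hsne : s.Nonempty :=
      ⟨w i₀ / A i₀ k, Finset.mem_image.mpr ⟨i₀,
        Finset.mem_erase.mpr ⟨hi₀, Finset.mem_univ _⟩, rfl⟩⟩
    rcases hC with h | h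
    · push_neg at h
      -- h : ∀ i, i ≠ k → w k < w i / A i k
      set m := s.min' hsne with hmdef
      have hm_gt : w k < m := by
        obtain ⟨i, hi, hieq⟩ := Finset.mem_image.mp (s.min'_mem hsne)
        rw [hmdef, ← hieq]
        exact h i (Finset.mem_erase.mp hi).1
      have hm_le : ∀ i, i ≠ k → m ≤ w i / A i k := fun i hi =>
        Finset.min'_le s _ (Finset.mem_image.mpr ⟨i,
          Finset.mem_erase.mpr ⟨hi, Finset.mem_univ _⟩, rfl⟩)
      have hm_pos : 0 < m := lt_trans (hw k) hm_gt
      set v := Function.update w k m with hvdef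
      have hvk : v k = m := Function.update_self k m w
      have hvne : ∀ i, i ≠ k → v i = w i := fun i hi => Function.update_of_ne hi m w
      have hvpos : ∀ i, 0 < v i := by
        intro i
        rcases eq_or_ne i k with rfl | hi
        · rw [hvk]; exact hm_pos
        · rw [hvne i hi]; exact hw i
      have hdom : ∀ i j, |A i j - v i / v j| ≤ |A i j - w i / w j| := by
        intro i j
        rcases eq_or_ne i k with hik | hi
        · rw [hik]
          rcases eq_or_ne j k with hjk | hj
          · rw [hjk, hvk, div_self (ne_of_gt hm_pos), div_self (ne_of_gt (hw k))]
          · rw [hvk, hvne j hj]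
            have hAjk := hApos j k
            have hle : m * A j k ≤ w j := by
              have := hm_le j hj
              rwa [le_div_iff₀ hAjk] at this
            have h1 : m / w j ≤ A k j := by
              rw [hArec j k, inv_eq_one_div, div_le_div_iff₀ (hw j) hAjk]
              linarith
            have h2 : w k / w j < m / w j := by
              rw [div_lt_div_iff₀ (hw j) (hw j)]
              nlinarith [hw j]
            rw [abs_of_nonneg (by linarith), abs_of_nonneg (by linarith)]
            linarith
        · rcases eq_or_ne j k with hjk | hj
          · rw [hjk, hvne i hi, hvk]
            have hAik := hApos i k
            have h1 : A i k ≤ w i / m := by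
              have := hm_le i hi
              rw [le_div_iff₀ hAik] at this
              rw [le_div_iff₀ hm_pos]
              nlinarith
            have h2 : w i / m < w i / w k := by
              rw [div_lt_div_iff₀ hm_pos (hw k)]
              nlinarith [hw i]
            rw [abs_of_nonpos (by linarith), abs_of_nonpos (by linarith)]
            linarith
          · rw [hvne i hi, hvne j hj]
      have heq := heff.2 v hvpos hdom i₀ k
      rw [hvne i₀ hi₀, hvk] at heq
      rw [div_eq_div_iff hm_pos.ne' (hw k).ne'] at heq
      have := mul_left_cancel₀ (ne_of_gt (hw i₀)) heq
      linarith
    · push_neg at h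
      -- h : ∀ i, i ≠ k → w i / A i k < w k
      set M := s.max' hsne with hMdef
      have hM_lt : M < w k := by
        obtain ⟨i, hi, hieq⟩ := Finset.mem_image.mp (s.max'_mem hsne)
        rw [hMdef, ← hieq]
        exact h i (Finset.mem_erase.mp hi).1
      have hM_ge : ∀ i, i ≠ k → w i / A i k ≤ M := fun i hi =>
        Finset.le_max' s _ (Finset.mem_image.mpr ⟨i,
          Finset.mem_erase.mpr ⟨hi, Finset.mem_univ _⟩, rfl⟩)
      have hM_pos : 0 < M :=
        lt_of_lt_of_le (div_pos (hw i₀) (hApos i₀ k)) (hM_ge i₀ hi₀)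
      set v := Function.update w k M with hvdef
      have hvk : v k = M := Function.update_self k M w
      have hvne : ∀ i, i ≠ k → v i = w i := fun i hi => Function.update_of_ne hi M w
      have hvpos : ∀ i, 0 < v i := by
        intro i
        rcases eq_or_ne i k with rfl | hi
        · rw [hvk]; exact hM_pos
        · rw [hvne i hi]; exact hw i
      have hdom : ∀ i j, |A i j - v i / v j| ≤ |A i j - w i / w j| := by
        intro i j
        rcases eq_or_ne i k with hik | hi
        · rw [hik]
          rcases eq_or_ne j k with hjk | hj
          · rw [hjk, hvk, div_self (ne_of_gt hM_pos), div_self (ne_of_gt (hw k))]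
          · rw [hvk, hvne j hj]
            have hAjk := hApos j k
            have hle : w j ≤ M * A j k := by
              have := hM_ge j hj
              rwa [div_le_iff₀ hAjk] at this
            have h1 : A k j ≤ M / w j := by
              rw [hArec j k, inv_eq_one_div, div_le_div_iff₀ hAjk (hw j)]
              linarith
            have h2 : M / w j < w k / w j := by
              rw [div_lt_div_iff₀ (hw j) (hw j)]
              nlinarith [hw j]
            rw [abs_of_nonpos (by linarith), abs_of_nonpos (by linarith)]
            linarith
        · rcases eq_or_ne j k with hjk | hj
          · rw [hjk, hvne i hi, hvk]
            have hAik := hApos i k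
            have h1 : w i / M ≤ A i k := by
              have := hM_ge i hi
              rw [div_le_iff₀ hAik] at this
              rw [div_le_iff₀ hM_pos]
              nlinarith
            have h2 : w i / w k < w i / M := by
              rw [div_lt_div_iff₀ (hw k) hM_pos]
              nlinarith [hw i]
            rw [abs_of_nonneg (by linarith), abs_of_nonneg (by linarith)]
            linarith
          · rw [hvne i hi, hvne j hj]
      have heq := heff.2 v hvpos hdom i₀ k
      rw [hvne i₀ hi₀, hvk] at heq
      rw [div_eq_div_iff hM_pos.ne' (hw k).ne'] at heq
      have := mul_left_cancel₀ (ne_of_gt (hw i₀)) heq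
      linarith
  · -- backward direction
    rintro ⟨⟨i1, hi1, hle1⟩, ⟨i2, hi2, hle2⟩⟩
    refine ⟨hw, ?_⟩
    intro v hv hdom
    have hres : ∀ a b : Fin n,
        v (k.succAbove a) / v (k.succAbove b) = w (k.succAbove a) / w (k.succAbove b) :=
      hdel.2 (v ∘ k.succAbove) (fun a => hv _) (fun a b => hdom _ _)
    set r := (v i₀ / v k) / (w i₀ / w k) with hrdef
    have hkey : ∀ i, i ≠ k → v i / v k = r * (w i / w k) := by
      intro i hi
      obtain ⟨a, ha⟩ := Fin.exists_succAbove_eq hi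
      have hx : v i / v i₀ = w i / w i₀ := by rw [← ha]; exact hres a z
      have h0 : v k ≠ 0 := (hv k).ne'
      have h1 : w k ≠ 0 := (hw k).ne'
      have h2 : v i₀ ≠ 0 := (hv i₀).ne'
      have h3 : w i₀ ≠ 0 := (hw i₀).ne'
      have hc : v i / v k = (v i / v i₀) * (v i₀ / v k) := by
        field_simp
      rw [hc, hx, hrdef]
      field_simp
    have hdom1 := hdom i1 k
    have hdom2 := hdom i2 k
    rw [hkey i1 hi1] at hdom1
    rw [hkey i2 hi2] at hdom2
    have hA1 : w i1 / w k ≤ A i1 k := by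
      rw [div_le_iff₀ (hw k)]
      rw [div_le_iff₀ (hApos i1 k)] at hle1
      linarith
    have hA2 : A i2 k ≤ w i2 / w k := by
      rw [le_div_iff₀ (hw k)]
      rw [le_div_iff₀ (hApos i2 k)] at hle2
      linarith
    have hx1 : 0 < w i1 / w k := div_pos (hw i1) (hw k)
    have hx2 : 0 < w i2 / w k := div_pos (hw i2) (hw k)
    have hr1 : 1 ≤ r := by
      by_contra hcon
      push_neg at hcon
      rw [abs_of_nonneg (by nlinarith), abs_of_nonneg (by linarith)] at hdom1
      nlinarith
    have hr2 : r ≤ 1 := by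
      by_contra hcon
      push_neg at hcon
      rw [abs_of_nonpos (by nlinarith), abs_of_nonpos (by linarith)] at hdom2
      nlinarith
    have hr : r = 1 := le_antisymm hr2 hr1
    have hk : ∀ i, i ≠ k → v i / v k = w i / w k := by
      intro i hi
      rw [hkey i hi, hr, one_mul]
    intro i j
    rcases eq_or_ne i k with hik | hi
    · rw [hik]
      rcases eq_or_ne j k with hjk | hj
      · rw [hjk, div_self (hv k).ne', div_self (hw k).ne']
      · have := hk j hj
        rw [div_eq_div_iff (hv k).ne' (hw k).ne'] at this
        rw [div_eq_div_iff (hv j).ne' (hw j).ne']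
        linarith
    · rcases eq_or_ne j k with hjk | hj
      · rw [hjk]; exact hk i hi
      · obtain ⟨a, ha⟩ := Fin.exists_succAbove_eq hi
        obtain ⟨b, hb⟩ := Fin.exists_succAbove_eq hj
        rw [← ha, ← hb]
        exact hres a b
end

section
/- Let A be the n-by-n reciprocal matrix of block form [[B, J],[J, J]] where B is an s-by-s reciprocal matrix, s < n, and J denotes all-ones blocks. If w is efficient for A and Q is any (n-s)-by-(n-s) permutation matrix, then (I_s ⊕ Q) w is efficient for A. -/
/-- For a block perturbed consistent matrix, efficiency is preserved under
permutations of the last `n - s` entries. -/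
theorem stmt_6 {n s : ℕ} (hs : s < n) (A : Matrix (Fin n) (Fin n) ℝ)
    (hA : Reciprocal A)
    (hblock : ∀ i j : Fin n, s ≤ i.val ∨ s ≤ j.val → A i j = 1)
    (w : Fin n → ℝ) (hw : Efficient A w)
    (σ : Equiv.Perm (Fin n)) (hσ : ∀ i : Fin n, i.val < s → σ i = i) :
    Efficient A (w ∘ σ.symm) := by
  -- σ maps indices ≥ s to indices ≥ s
  have hge : ∀ i : Fin n, s ≤ i.val → s ≤ (σ i).val := by
    intro i hi
    by_contra h
    push_neg at h
    have : σ (σ i) = σ i := hσ _ h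
    have : σ i = i := σ.injective this
    omega
  -- A is invariant under σ
  have hinv : ∀ i j : Fin n, A (σ i) (σ j) = A i j := by
    intro i j
    by_cases hi : i.val < s
    · by_cases hj : j.val < s
      · rw [hσ i hi, hσ j hj]
      · rw [hblock (σ i) (σ j) (Or.inr (hge j (by omega))),
          hblock i j (Or.inr (by omega))]
    · rw [hblock (σ i) (σ j) (Or.inl (hge i (by omega))),
        hblock i j (Or.inl (by omega))]
  obtain ⟨hwpos, hweff⟩ := hw
  constructor
  · intro i; exact hwpos _
  · intro v hv hle i j
    have key : ∀ a b : Fin n, (v ∘ σ) a / (v ∘ σ) b = w a / w b := by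
      apply hweff (v ∘ σ) (fun a => hv _)
      intro a b
      have := hle (σ a) (σ b)
      simpa [hinv a b, Equiv.symm_apply_apply] using this
    have := key (σ.symm i) (σ.symm j)
    simpa [Equiv.apply_symm_apply] using this
end

section
/- Let A be the n-by-n reciprocal matrix of block form [[B, J],[J, J]] with B an s-by-s reciprocal matrix and n > s. If w is a positive n-vector with w_p = w_q for some distinct p, q in {s+1,...,n}, then w is efficient for A if and only if w(p) is efficient for A(p). -/
/-- If two of the last `n - s` entries of `w` coincide, say `w p = w q`, then
`w` is efficient for `A` iff `w(p)` is efficient for `A(p)`. -/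
theorem stmt_7 {n s : ℕ} (hs : s ≤ n) (A : Matrix (Fin (n + 1)) (Fin (n + 1)) ℝ)
    (hA : Reciprocal A)
    (hblock : ∀ i j : Fin (n + 1), s ≤ i.val ∨ s ≤ j.val → A i j = 1)
    (w : Fin (n + 1) → ℝ) (hw : ∀ i, 0 < w i)
    (p q : Fin (n + 1)) (hp : s ≤ p.val) (hq : s ≤ q.val) (hpq : p ≠ q)
    (heq : w p = w q) :
    Efficient A w ↔
      Efficient (A.submatrix p.succAbove p.succAbove) (w ∘ p.succAbove) := by
  obtain ⟨hApos, hArec⟩ := hA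
  obtain ⟨q', hq'⟩ := Fin.exists_succAbove_eq (Ne.symm hpq)
  constructor
  · rintro ⟨-, hweff⟩
    refine ⟨fun i => hw _, fun v hv hvle => ?_⟩
    set u : Fin (n + 1) → ℝ := p.insertNth (v q') v with hudef
    have hup : u p = v q' := by rw [hudef]; simp
    have hus : ∀ k, u (p.succAbove k) = v k := by
      intro k; rw [hudef]; simp
    have hupos : ∀ i, 0 < u i := by
      intro i
      by_cases h : i = p
      · rw [h, hup]; exact hv q'
      · obtain ⟨k, hk⟩ := Fin.exists_succAbove_eq h
        rw [← hk, hus]; exact hv k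
    have hcons : ∀ i j, |A i j - u i / u j| ≤ |A i j - w i / w j| := by
      intro i j
      by_cases hi : i = p
      · by_cases hj : j = p
        · rw [hi, hj, hup, div_self (hv q').ne', div_self (hw p).ne']
        · obtain ⟨j', hj'⟩ := Fin.exists_succAbove_eq hj
          have h1 : A p j = 1 := hblock _ _ (Or.inl hp)
          have h2 : A q j = 1 := hblock _ _ (Or.inl hq)
          have huj : u j = v j' := by rw [← hj']; exact hus j'
          have hthis := hvle q' j'
          simp only [Matrix.submatrix_apply, Function.comp_apply, hq', hj', h2] at hthis
          rw [hi, h1, hup, huj, heq]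
          exact hthis
      · obtain ⟨i', hi'⟩ := Fin.exists_succAbove_eq hi
        have hui : u i = v i' := by rw [← hi']; exact hus i'
        by_cases hj : j = p
        · have h1 : A i p = 1 := hblock _ _ (Or.inr hp)
          have h2 : A i q = 1 := hblock _ _ (Or.inr hq)
          have hthis := hvle i' q'
          simp only [Matrix.submatrix_apply, Function.comp_apply, hq', hi', h2] at hthis
          rw [hj, h1, hup, hui, heq]
          exact hthis
        · obtain ⟨j', hj'⟩ := Fin.exists_succAbove_eq hj
          have huj : u j = v j' := by rw [← hj']; exact hus j'
          have hthis := hvle i' j'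
          simp only [Matrix.submatrix_apply, Function.comp_apply, hi', hj'] at hthis
          rw [hui, huj]
          exact hthis
    have key := hweff u hupos hcons
    intro i j
    have hthis := key (p.succAbove i) (p.succAbove j)
    rw [hus, hus] at hthis
    simpa using hthis
  · rintro ⟨-, heff⟩
    refine ⟨hw, fun v hv hvle => ?_⟩
    have hvpq : v p = v q := by
      have h1 : A p q = 1 := hblock p q (Or.inl hp)
      have h2 : |1 - v p / v q| ≤ 0 := by
        simpa [h1, heq, div_self (hw q).ne'] using hvle p q
      have h3 : v p / v q = 1 := by
        have := abs_nonpos_iff.mp h2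
        linarith
      exact (div_eq_one_iff_eq (hv q).ne').mp h3
    have key := heff (v ∘ p.succAbove) (fun i => hv _)
      (fun i j => by simpa using hvle (p.succAbove i) (p.succAbove j))
    intro i j
    by_cases hi : i = p
    · by_cases hj : j = p
      · rw [hi, hj, div_self (hv p).ne', div_self (hw p).ne']
      · obtain ⟨j', hj'⟩ := Fin.exists_succAbove_eq hj
        have hthis := key q' j'
        simp only [Function.comp_apply, hq', hj'] at hthis
        rw [hi, hvpq, heq]
        exact hthis
    · obtain ⟨i', hi'⟩ := Fin.exists_succAbove_eq hi
      by_cases hj : j = p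
      · have hthis := key i' q'
        simp only [Function.comp_apply, hq', hi'] at hthis
        rw [hj, hvpq, heq]
        exact hthis
      · obtain ⟨j', hj'⟩ := Fin.exists_succAbove_eq hj
        have hthis := key i' j'
        simp only [Function.comp_apply, hi', hj'] at hthis
        exact hthis
end

section
/- Let A be the n-by-n reciprocal matrix of block form [[B, J],[J, J]] with B an s-by-s reciprocal matrix and n > s. If w is efficient for A and the subvector w[{1,...,s}] is efficient for B, then for every i in {s+1,...,n}, the vector w(i) is efficient for A(i). -/
/-- Core lemma: if `T` has all-`1` cut entries and `w` is strictly smaller outside `T`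
than inside `T`, then `w` is not efficient (scale `T` down). -/
lemma core_down {N : ℕ} (A : Matrix (Fin N) (Fin N) ℝ)
    (w : Fin N → ℝ) (hw : Efficient A w) (T : Finset (Fin N))
    (q₀ : Fin N) (hq₀ : q₀ ∈ T) (p₀ : Fin N) (hp₀ : p₀ ∉ T)
    (hone : ∀ p ∉ T, ∀ q ∈ T, A p q = 1 ∧ A q p = 1)
    (hlt : ∀ p ∉ T, ∀ q ∈ T, w p < w q) : False := by
  obtain ⟨hwpos, heff⟩ := hw
  obtain ⟨pM, hpM, hpMmax⟩ := Tᶜ.exists_max_image w ⟨p₀, Finset.mem_compl.mpr hp₀⟩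
  obtain ⟨qm, hqm, hqmmin⟩ := T.exists_min_image w ⟨q₀, hq₀⟩
  have hpM' : pM ∉ T := Finset.mem_compl.mp hpM
  have hMm : w pM < w qm := hlt pM hpM' qm hqm
  set t : ℝ := w pM / w qm with ht
  have hqmpos := hwpos qm
  have hpMpos := hwpos pM
  have ht0 : 0 < t := div_pos hpMpos hqmpos
  have ht1 : t < 1 := (div_lt_one hqmpos).mpr hMm
  set v : Fin N → ℝ := fun p => if p ∈ T then t * w p else w p with hv
  have hvpos : ∀ p, 0 < v p := by
    intro p
    simp only [hv]
    split <;> [exact mul_pos ht0 (hwpos p); exact hwpos p]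
  have hdom : ∀ p q, |A p q - v p / v q| ≤ |A p q - w p / w q| := by
    intro p q
    by_cases hp : p ∈ T <;> by_cases hq : q ∈ T
    · simp only [hv, if_pos hp, if_pos hq]
      rw [mul_div_mul_left _ _ (ne_of_gt ht0)]
    · -- p ∈ T, q ∉ T : ratio t*r with r ≥ 1/t
      have hA1 : A p q = 1 := (hone q hq p hp).2
      have hwq := hwpos q
      have hwp := hwpos p
      have hr1 : w qm ≤ w p := hqmmin p hp
      have hr2 : w q ≤ w pM := hpMmax q (Finset.mem_compl.mpr hq)
      have hr : 1 / t ≤ w p / w q := by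
        rw [ht, one_div_div]
        exact div_le_div₀ (by linarith) hr1 (hwpos q) hr2
      simp only [hv, if_pos hp, if_neg hq, hA1]
      rw [mul_div_assoc]
      have hrpos : 0 < w p / w q := div_pos hwp hwq
      have h1 : 1 ≤ t * (w p / w q) := by
        calc (1:ℝ) = t * (1/t) := by field_simp
        _ ≤ t * (w p / w q) := by nlinarith
      rw [abs_of_nonpos (by linarith), abs_of_nonpos (by nlinarith)]
      nlinarith
    · -- p ∉ T, q ∈ T : ratio r/t with r ≤ t
      have hA1 : A p q = 1 := (hone p hp q hq).1
      have hwq := hwpos q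
      have hwp := hwpos p
      have hr1 : w p ≤ w pM := hpMmax p (Finset.mem_compl.mpr hp)
      have hr2 : w qm ≤ w q := hqmmin q hq
      have hr : w p / w q ≤ t := div_le_div₀ (le_of_lt hpMpos) hr1 hqmpos hr2
      simp only [hv, if_neg hp, if_pos hq, hA1]
      rw [div_mul_eq_div_div_swap]
      have hrpos : 0 < w p / w q := div_pos hwp hwq
      have h1 : w p / w q / t ≤ 1 := by
        rw [div_le_one ht0]; exact hr
      have h2 : w p / w q ≤ w p / w q / t := by
        rw [le_div_iff₀ ht0]; nlinarith
      rw [abs_of_nonneg (by linarith), abs_of_nonneg (by nlinarith)]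
      linarith
    · simp only [hv, if_neg hp, if_neg hq]; exact le_refl _
  have := heff v hvpos hdom q₀ p₀
  simp only [hv, if_pos hq₀, if_neg hp₀] at this
  rw [mul_div_assoc] at this
  have h0 : w q₀ / w p₀ ≠ 0 := ne_of_gt (div_pos (hwpos q₀) (hwpos p₀))
  have ht1' : t = 1 := mul_right_cancel₀ h0 (this.trans (one_mul _).symm)
  linarith

/-- Core lemma: if `T` has all-`1` cut entries and `w` is strictly larger outside `T`
than inside `T`, then `w` is not efficient (scale `T` up). -/
lemma core_up {N : ℕ} (A : Matrix (Fin N) (Fin N) ℝ)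
    (w : Fin N → ℝ) (hw : Efficient A w) (T : Finset (Fin N))
    (q₀ : Fin N) (hq₀ : q₀ ∈ T) (p₀ : Fin N) (hp₀ : p₀ ∉ T)
    (hone : ∀ p ∉ T, ∀ q ∈ T, A p q = 1 ∧ A q p = 1)
    (hlt : ∀ p ∉ T, ∀ q ∈ T, w q < w p) : False := by
  obtain ⟨hwpos, heff⟩ := hw
  obtain ⟨pm, hpm, hpmmin⟩ := Tᶜ.exists_min_image w ⟨p₀, Finset.mem_compl.mpr hp₀⟩
  obtain ⟨qM, hqM, hqMmax⟩ := T.exists_max_image w ⟨q₀, hq₀⟩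
  have hpm' : pm ∉ T := Finset.mem_compl.mp hpm
  have hMm : w qM < w pm := hlt pm hpm' qM hqM
  set t : ℝ := w pm / w qM with ht
  have hqMpos := hwpos qM
  have hpmpos := hwpos pm
  have ht0 : 0 < t := div_pos hpmpos hqMpos
  have ht1 : 1 < t := (one_lt_div hqMpos).mpr hMm
  set v : Fin N → ℝ := fun p => if p ∈ T then t * w p else w p with hv
  have hvpos : ∀ p, 0 < v p := by
    intro p
    simp only [hv]
    split <;> [exact mul_pos ht0 (hwpos p); exact hwpos p]
  have hdom : ∀ p q, |A p q - v p / v q| ≤ |A p q - w p / w q| := by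
    intro p q
    by_cases hp : p ∈ T <;> by_cases hq : q ∈ T
    · simp only [hv, if_pos hp, if_pos hq]
      rw [mul_div_mul_left _ _ (ne_of_gt ht0)]
    · -- p ∈ T, q ∉ T : ratio t*r with r ≤ 1/t
      have hA1 : A p q = 1 := (hone q hq p hp).2
      have hwq := hwpos q
      have hwp := hwpos p
      have hr1 : w p ≤ w qM := hqMmax p hp
      have hr2 : w pm ≤ w q := hpmmin q (Finset.mem_compl.mpr hq)
      have hr : w p / w q ≤ 1 / t := by
        rw [ht, one_div_div]
        exact div_le_div₀ (le_of_lt hqMpos) hr1 hpmpos hr2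
      simp only [hv, if_pos hp, if_neg hq, hA1]
      rw [mul_div_assoc]
      have hrpos : 0 < w p / w q := div_pos hwp hwq
      have h1 : t * (w p / w q) ≤ 1 := by
        calc t * (w p / w q) ≤ t * (1/t) := by nlinarith
        _ = 1 := by field_simp
      rw [abs_of_nonneg (by linarith), abs_of_nonneg (by nlinarith)]
      nlinarith
    · -- p ∉ T, q ∈ T : ratio r/t with r ≥ t
      have hA1 : A p q = 1 := (hone p hp q hq).1
      have hwq := hwpos q
      have hwp := hwpos p
      have hr1 : w pm ≤ w p := hpmmin p (Finset.mem_compl.mpr hp)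
      have hr2 : w q ≤ w qM := hqMmax q hq
      have hr : t ≤ w p / w q := div_le_div₀ (by linarith) hr1 hwq hr2
      simp only [hv, if_neg hp, if_pos hq, hA1]
      rw [div_mul_eq_div_div_swap]
      have hrpos : 0 < w p / w q := div_pos hwp hwq
      have h1 : 1 ≤ w p / w q / t := by
        rw [le_div_iff₀ ht0]; linarith
      have h2 : w p / w q / t ≤ w p / w q := by
        rw [div_le_iff₀ ht0]; nlinarith
      rw [abs_of_nonpos (by linarith), abs_of_nonpos (by nlinarith)]
      linarith
    · simp only [hv, if_neg hp, if_neg hq]; exact le_refl _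
  have := heff v hvpos hdom q₀ p₀
  simp only [hv, if_pos hq₀, if_neg hp₀] at this
  rw [mul_div_assoc] at this
  have h0 : w q₀ / w p₀ ≠ 0 := ne_of_gt (div_pos (hwpos q₀) (hwpos p₀))
  have ht1' : t = 1 := mul_right_cancel₀ h0 (this.trans (one_mul _).symm)
  linarith

/-- If `w` is efficient for a block matrix, entries indexed in the `J` block are bounded
above by some entry of the `B` block. -/
lemma bound_up {n s : ℕ} (A : Matrix (Fin (n + 1)) (Fin (n + 1)) ℝ)
    (hblock : ∀ i j : Fin (n + 1), s ≤ i.val ∨ s ≤ j.val → A i j = 1)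
    (w : Fin (n + 1) → ℝ) (hw : Efficient A w) (hs1 : 0 < s)
    (j : Fin (n + 1)) (hj : s ≤ j.val) :
    ∃ k : Fin (n + 1), k.val < s ∧ w j ≤ w k := by
  by_contra hcon
  push_neg at hcon
  set T : Finset (Fin (n + 1)) := Finset.univ.filter (fun p => w j ≤ w p) with hT
  have hjT : j ∈ T := by simp [hT]
  have hp₀ : (⟨0, Nat.succ_pos n⟩ : Fin (n + 1)) ∉ T := by
    simp only [hT, Finset.mem_filter, Finset.mem_univ, true_and, not_le]
    exact hcon _ hs1
  refine core_down A w hw T j hjT _ hp₀ ?_ ?_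
  · intro p hp q hq
    have hqbig : s ≤ q.val := by
      by_contra hqs
      exact absurd ((Finset.mem_filter.mp hq).2) (not_le.mpr (hcon q (not_le.mp hqs)))
    exact ⟨hblock p q (Or.inr hqbig), hblock q p (Or.inl hqbig)⟩
  · intro p hp q hq
    have h1 : w p < w j := by
      simpa [hT, Finset.mem_filter, not_le] using hp
    exact lt_of_lt_of_le h1 (Finset.mem_filter.mp hq).2

/-- If `w` is efficient for a block matrix, entries indexed in the `J` block are bounded
below by some entry of the `B` block. -/
lemma bound_down {n s : ℕ} (A : Matrix (Fin (n + 1)) (Fin (n + 1)) ℝ)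
    (hblock : ∀ i j : Fin (n + 1), s ≤ i.val ∨ s ≤ j.val → A i j = 1)
    (w : Fin (n + 1) → ℝ) (hw : Efficient A w) (hs1 : 0 < s)
    (j : Fin (n + 1)) (hj : s ≤ j.val) :
    ∃ k : Fin (n + 1), k.val < s ∧ w k ≤ w j := by
  by_contra hcon
  push_neg at hcon
  set T : Finset (Fin (n + 1)) := Finset.univ.filter (fun p => w p ≤ w j) with hT
  have hjT : j ∈ T := by simp [hT]
  have hp₀ : (⟨0, Nat.succ_pos n⟩ : Fin (n + 1)) ∉ T := by
    simp only [hT, Finset.mem_filter, Finset.mem_univ, true_and, not_le]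
    exact hcon _ hs1
  refine core_up A w hw T j hjT _ hp₀ ?_ ?_
  · intro p hp q hq
    have hqbig : s ≤ q.val := by
      by_contra hqs
      exact absurd ((Finset.mem_filter.mp hq).2) (not_le.mpr (hcon q (not_le.mp hqs)))
    exact ⟨hblock p q (Or.inr hqbig), hblock q p (Or.inl hqbig)⟩
  · intro p hp q hq
    have h1 : w j < w p := by
      simpa [hT, Finset.mem_filter, not_le] using hp
    exact lt_of_le_of_lt (Finset.mem_filter.mp hq).2 h1

/-- A vector efficient for the all-ones matrix is constant. -/
lemma const_of_all_ones {N : ℕ} (A : Matrix (Fin (N + 1)) (Fin (N + 1)) ℝ)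
    (hall : ∀ p q, A p q = 1) (w : Fin (N + 1) → ℝ) (hw : Efficient A w) :
    ∀ p q, w p = w q := by
  obtain ⟨jM, _, hjMmax⟩ := Finset.univ.exists_max_image w ⟨0, Finset.mem_univ 0⟩
  have hmin : ∀ k, w jM ≤ w k := by
    intro k
    by_contra hk
    push_neg at hk
    set T : Finset (Fin (N + 1)) := Finset.univ.filter (fun p => w jM ≤ w p) with hT
    have hjT : jM ∈ T := by simp [hT]
    have hkT : k ∉ T := by
      simp only [hT, Finset.mem_filter, Finset.mem_univ, true_and, not_le]
      exact hk
    refine core_down A w hw T jM hjT k hkT (fun p _ q _ => ⟨hall p q, hall q p⟩) ?_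
    intro p hp q hq
    have h1 : w p < w jM := by simpa [hT, Finset.mem_filter, not_le] using hp
    exact lt_of_lt_of_le h1 (Finset.mem_filter.mp hq).2
  intro p q
  exact le_antisymm ((hjMmax p (Finset.mem_univ p)).trans (hmin q))
    ((hjMmax q (Finset.mem_univ q)).trans (hmin p))

/-- If `w` is efficient for `A` and `w[{1,…,s}]` is efficient for `B`, then
`w(i)` is efficient for `A(i)` for every `i ∈ {s+1,…,n}`. -/
theorem stmt_8 {n s : ℕ} (hs : s ≤ n) (A : Matrix (Fin (n + 1)) (Fin (n + 1)) ℝ)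
    (hA : Reciprocal A)
    (hblock : ∀ i j : Fin (n + 1), s ≤ i.val ∨ s ≤ j.val → A i j = 1)
    (w : Fin (n + 1) → ℝ) (hw : Efficient A w)
    (hsub : Efficient
      (A.submatrix (Fin.castLE (by omega : s ≤ n + 1)) (Fin.castLE (by omega : s ≤ n + 1)))
      (w ∘ Fin.castLE (by omega : s ≤ n + 1)))
    (i : Fin (n + 1)) (hi : s ≤ i.val) :
    Efficient (A.submatrix i.succAbove i.succAbove) (w ∘ i.succAbove) := by
  have hwpos : ∀ p, 0 < w p := hw.1
  -- basic facts about succAbove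
  have hval : ∀ p : Fin n, (i.succAbove p).val = p.val ∨ (i.succAbove p).val = p.val + 1 := by
    intro p
    rcases lt_or_ge p.castSucc i with h | h
    · left; rw [Fin.succAbove_of_castSucc_lt _ _ h]; rfl
    · right; rw [Fin.succAbove_of_le_castSucc _ _ h]; rfl
  have hsmall : ∀ p : Fin n, p.val < s → (i.succAbove p).val = p.val := by
    intro p hp
    rw [Fin.succAbove_of_castSucc_lt _ _ (by rw [Fin.lt_def]; simpa using by omega)]
    rfl
  have hbig : ∀ p : Fin n, s ≤ p.val → s ≤ (i.succAbove p).val := by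
    intro p hp
    rcases hval p with h | h <;> omega
  constructor
  · intro p; exact hwpos _
  intro v hv hdom
  by_cases hs0 : s = 0
  · -- A is all ones; w is constant
    subst hs0
    have hall : ∀ p q, A p q = 1 := fun p q => hblock p q (Or.inl (Nat.zero_le _))
    have hconst := const_of_all_ones A hall w hw
    intro p q
    have h := hdom p q
    have hw1 : w (i.succAbove p) / w (i.succAbove q) = 1 := by
      rw [hconst (i.succAbove p) (i.succAbove q)]
      exact div_self (ne_of_gt (hwpos _))
    simp only [Matrix.submatrix_apply, Function.comp_apply, hall, hw1, sub_self, abs_zero] at h ⊢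
    have h2 : v p / v q = 1 := by
      have := abs_nonneg (1 - v p / v q)
      have h3 : |1 - v p / v q| = 0 := le_antisymm h this
      have := abs_eq_zero.mp h3
      linarith
    rw [h2]
  · have hs1 : 0 < s := Nat.pos_of_ne_zero hs0
    -- extreme small indices
    obtain ⟨kM, hkMmem, hkMmax⟩ := (Finset.univ.filter (fun k : Fin (n + 1) => k.val < s)).exists_max_image w
      ⟨⟨0, by omega⟩, by simp [hs1]⟩
    obtain ⟨km, hkmmem, hkmmin⟩ := (Finset.univ.filter (fun k : Fin (n + 1) => k.val < s)).exists_min_image w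
      ⟨⟨0, by omega⟩, by simp [hs1]⟩
    have hkMs : kM.val < s := (Finset.mem_filter.mp hkMmem).2
    have hkms : km.val < s := (Finset.mem_filter.mp hkmmem).2
    have hub : ∀ j : Fin (n + 1), s ≤ j.val → w j ≤ w kM := by
      intro j hj
      obtain ⟨k, hk, hle⟩ := bound_up A hblock w hw hs1 j hj
      exact hle.trans (hkMmax k (by simp [hk]))
    have hlb : ∀ j : Fin (n + 1), s ≤ j.val → w km ≤ w j := by
      intro j hj
      obtain ⟨k, hk, hle⟩ := bound_down A hblock w hw hs1 j hj
      exact (hkmmin k (by simp [hk])).trans hle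
    -- small indices inside Fin n
    set cs : Fin s → Fin (n + 1) := Fin.castLE (by omega) with hcs
    set cn : Fin s → Fin n := Fin.castLE hs with hcn
    have hkey : ∀ p : Fin s, i.succAbove (cn p) = cs p := by
      intro p
      apply Fin.ext
      rw [hsmall (cn p) p.isLt]
      rfl
    have hsmallrat : ∀ p q : Fin s,
        v (cn p) / v (cn q) = w (cs p) / w (cs q) := by
      have := hsub.2 (fun p => v (cn p)) (fun p => hv _) ?_
      · intro p q
        exact this p q
      · intro p q
        have h := hdom (cn p) (cn q)
        simp only [Matrix.submatrix_apply, Function.comp_apply] at h ⊢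
        rw [hkey p, hkey q] at h
        exact h
    -- the special small indices inside Fin n
    set kM' : Fin n := ⟨kM.val, by omega⟩ with hkM'
    set km' : Fin n := ⟨km.val, by omega⟩ with hkm'
    have hkeyM : i.succAbove kM' = kM := Fin.ext (hsmall kM' hkMs)
    have hkeym : i.succAbove km' = km := Fin.ext (hsmall km' hkms)
    -- edge lemma
    have hedge : ∀ p q : Fin n,
        A (i.succAbove p) (i.succAbove q) ≤ w (i.succAbove p) / w (i.succAbove q) →
        v p / v q ≤ w (i.succAbove p) / w (i.succAbove q) := by
      intro p q hle
      have h := hdom p q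
      simp only [Matrix.submatrix_apply, Function.comp_apply] at h
      rw [abs_of_nonpos (show A (i.succAbove p) (i.succAbove q)
        - w (i.succAbove p) / w (i.succAbove q) ≤ 0 by linarith)] at h
      have h3 : v p / v q - A (i.succAbove p) (i.succAbove q)
          ≤ |A (i.succAbove p) (i.succAbove q) - v p / v q| := by
        rw [abs_sub_comm]; exact le_abs_self _
      linarith
    -- small indices have equal ratio with km'
    have hsm : ∀ p : Fin n, p.val < s → v p / v km' = w (i.succAbove p) / w (i.succAbove km') := by
      intro p hps
      have hp' : p = cn ⟨p.val, hps⟩ := Fin.ext rfl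
      have hm' : km' = cn ⟨km.val, hkms⟩ := Fin.ext rfl
      have h := hsmallrat ⟨p.val, hps⟩ ⟨km.val, hkms⟩
      rw [← hp', ← hm'] at h
      rw [h]
      congr 1
      · congr 1
        apply Fin.ext
        rw [hsmall p hps]
        rfl
      · congr 1
        apply Fin.ext
        rw [hkeym]
        rfl
    -- key claim
    have hclaim : ∀ p : Fin n, v p / v km' = w (i.succAbove p) / w (i.succAbove km') := by
      intro p
      rcases lt_or_ge p.val s with hps | hps
      · exact hsm p hps
      · -- big index
        have hpbig : s ≤ (i.succAbove p).val := hbig p hps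
        have hwp := hwpos (i.succAbove p)
        have hwm : w (i.succAbove km') = w km := by rw [hkeym]
        have hwM : w (i.succAbove kM') = w kM := by rw [hkeyM]
        have hvkm := hv km'
        have hvkM := hv kM'
        have hvp := hv p
        have hwmpos := hwpos km
        have hwMpos := hwpos kM
        -- upper: v p / v km' ≤ w p / w km'
        have hupper : v p / v km' ≤ w (i.succAbove p) / w (i.succAbove km') := by
          apply hedge
          rw [hwm, hblock _ _ (Or.inl hpbig)]
          rw [one_le_div hwmpos]
          exact hlb _ hpbig
        -- lower, via kM'
        have hlower1 : v kM' / v p ≤ w (i.succAbove kM') / w (i.succAbove p) := by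
          apply hedge
          rw [hwM, hblock _ _ (Or.inr hpbig)]
          rw [one_le_div hwp]
          exact hub _ hpbig
        have hMm' : v kM' / v km' = w (i.succAbove kM') / w (i.succAbove km') := hsm kM' hkMs
        rw [hwM] at hlower1 hMm'
        rw [hwm] at hMm' hupper ⊢
        -- convert to products
        rw [div_le_div_iff₀ hvp hwp] at hlower1
        rw [div_eq_div_iff (ne_of_gt hvkm) (ne_of_gt hwmpos)] at hMm'
        rw [div_le_div_iff₀ hvkm hwmpos] at hupper
        rw [div_eq_div_iff (ne_of_gt hvkm) (ne_of_gt hwmpos)]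
        apply le_antisymm hupper
        -- w p * v km' ≤ v p * w km
        have h6 : v kM' * w (i.succAbove p) * w km ≤ w kM * v p * w km :=
          mul_le_mul_of_nonneg_right hlower1 hwmpos.le
        have h7' := congrArg (· * w (i.succAbove p)) hMm'
        have h9 : w kM * (w (i.succAbove p) * v km') ≤ w kM * (v p * w km) := by
          nlinarith [h6, h7']
        exact le_of_mul_le_mul_left h9 hwMpos
    intro p q
    have hp := hclaim p
    have hq := hclaim q
    have hvkm := hv km'
    have hwm := hwpos (i.succAbove km')
    have hwq := hwpos (i.succAbove q)
    have hvq := hv q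
    simp only [Function.comp_apply]
    rw [div_eq_div_iff (ne_of_gt hvkm) (ne_of_gt hwm)] at hp hq
    rw [div_eq_div_iff (ne_of_gt hvq) (ne_of_gt hwq)]
    have h5 : v p * w (i.succAbove q) * w (i.succAbove km')
        = w (i.succAbove p) * v q * w (i.succAbove km') := by
      linear_combination w (i.succAbove q) * hp - w (i.succAbove p) * hq
    exact mul_right_cancel₀ (ne_of_gt hwm) h5
end

section
/- Let A be the n-by-n reciprocal matrix of block form [[B, J],[J, J]] with B an s-by-s reciprocal matrix and n > s+1. Then any eigenvector of A associated with a nonzero eigenvalue has its last n-s entries all equal. -/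
/-- Any eigenvector of a block perturbed consistent matrix associated with a
nonzero eigenvalue has its last `n - s` entries equal. -/
theorem stmt_10 {n s : ℕ} (hs : s + 1 < n) (A : Matrix (Fin n) (Fin n) ℝ)
    (hA : Reciprocal A)
    (hblock : ∀ i j : Fin n, s ≤ i.val ∨ s ≤ j.val → A i j = 1)
    (x : Fin n → ℝ) (hx : x ≠ 0) (μ : ℝ) (hμ : μ ≠ 0)
    (heig : A.mulVec x = μ • x) :
    ∀ p q : Fin n, s ≤ p.val → s ≤ q.val → x p = x q := by
  intro p q hp hq
  have h : (A.mulVec x) p = (A.mulVec x) q := by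
    unfold Matrix.mulVec dotProduct
    refine Finset.sum_congr rfl fun j _ => ?_
    simp only []
    rw [hblock p j (Or.inl hp), hblock q j (Or.inl hq)]
  rw [heig] at h
  simpa using mul_left_cancel₀ hμ h
end

section
/- Let A be the n-by-n reciprocal matrix of block form [[B, J],[J, J]] with B an s-by-s reciprocal matrix and n > s, and let w be the Perron eigenvector of A. Then w is efficient for A if and only if w[{1,...,s+1}] is efficient for A[{1,...,s+1}]. -/
/-- Collapse map: indices below `s` stay, the rest go to `s`. -/
def pmap (s : ℕ) {n : ℕ} (i : Fin n) : Fin (s + 1) :=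
  if h : i.val < s then ⟨i.val, Nat.lt_succ_of_lt h⟩ else Fin.last s

lemma pmap_castLE {n s : ℕ} (hs : s < n) (a : Fin (s + 1)) :
    pmap s (Fin.castLE hs a) = a := by
  unfold pmap
  split
  · exact Fin.ext rfl
  · next h =>
    have : (a : ℕ) = s := Nat.le_antisymm (Nat.lt_succ_iff.mp a.isLt) (le_of_not_gt h)
    exact Fin.ext this.symm

lemma pmap_spec {n s : ℕ} (hs : s < n) (i : Fin n) :
    (Fin.castLE hs (pmap s i) = i ∧ i.val < s) ∨
    (Fin.castLE hs (pmap s i) = ⟨s, hs⟩ ∧ s ≤ i.val) := by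
  unfold pmap
  split
  · next h => exact Or.inl ⟨Fin.ext rfl, h⟩
  · next h => exact Or.inr ⟨Fin.ext rfl, le_of_not_gt h⟩

/-- The Perron eigenvector `w` of a block perturbed consistent matrix is
efficient iff `w[{1,…,s+1}]` is efficient for `A[{1,…,s+1}]`. -/
theorem stmt_11 {n s : ℕ} (hs : s < n) (A : Matrix (Fin n) (Fin n) ℝ)
    (hA : Reciprocal A)
    (hblock : ∀ i j : Fin n, s ≤ i.val ∨ s ≤ j.val → A i j = 1)
    (w : Fin n → ℝ) (hw : ∀ i, 0 < w i) (μ : ℝ)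
    (heig : A.mulVec w = μ • w) :
    Efficient A w ↔
      Efficient
        (A.submatrix (Fin.castLE hs : Fin (s + 1) → Fin n) (Fin.castLE hs))
        (w ∘ (Fin.castLE hs : Fin (s + 1) → Fin n)) := by
  haveI : Nonempty (Fin n) := ⟨⟨s, hs⟩⟩
  set σ : Fin n := ⟨s, hs⟩ with hσdef
  -- eigenvector rows with index ≥ s give the full sum
  have hsum : ∀ i : Fin n, s ≤ i.val → μ * w i = ∑ j, w j := by
    intro i hi
    have h := congrFun heig i
    simp only [Matrix.mulVec, dotProduct, Pi.smul_apply, smul_eq_mul] at h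
    rw [← h]
    refine Finset.sum_congr rfl fun j _ => ?_
    rw [hblock i j (Or.inl hi), one_mul]
  have hS : 0 < ∑ j, w j := Finset.sum_pos (fun j _ => hw j) Finset.univ_nonempty
  have hμ : μ ≠ 0 := by
    intro h
    have h1 := hsum σ le_rfl
    rw [h, zero_mul] at h1
    exact absurd h1.symm (ne_of_gt hS)
  have weq : ∀ i : Fin n, s ≤ i.val → w i = w σ :=
    fun i hi => mul_left_cancel₀ hμ ((hsum i hi).trans (hsum σ le_rfl).symm)
  -- the matrix is constant along the collapse map
  have hAc : ∀ i j : Fin n,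
      A (Fin.castLE hs (pmap s i)) (Fin.castLE hs (pmap s j)) = A i j := by
    intro i j
    rcases pmap_spec hs i with ⟨hi, hi'⟩ | ⟨hi, hi'⟩ <;>
      rcases pmap_spec hs j with ⟨hj, hj'⟩ | ⟨hj, hj'⟩ <;> rw [hi, hj]
    · rw [hblock _ _ (Or.inr le_rfl), hblock i j (Or.inr hj')]
    · rw [hblock _ _ (Or.inl le_rfl), hblock i j (Or.inl hi')]
    · rw [hblock _ _ (Or.inl le_rfl), hblock i j (Or.inl hi')]
  have hwc : ∀ i : Fin n, w (Fin.castLE hs (pmap s i)) = w i := by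
    intro i
    rcases pmap_spec hs i with ⟨hi, _⟩ | ⟨hi, hi'⟩
    · rw [hi]
    · rw [hi, ← weq i hi']
  constructor
  · rintro ⟨-, heff⟩
    refine ⟨fun a => hw _, fun v' hv' hcmp a b => ?_⟩
    set v : Fin n → ℝ := fun i => v' (pmap s i) with hvdef
    have hvpos : ∀ i, 0 < v i := fun i => hv' _
    have hvc : ∀ a : Fin (s + 1), v (Fin.castLE hs a) = v' a := by
      intro a; simp only [hvdef, pmap_castLE hs a]
    have key : ∀ i j, v i / v j = w i / w j := by
      refine heff v hvpos fun i j => ?_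
      have h1 := hcmp (pmap s i) (pmap s j)
      simp only [Matrix.submatrix_apply, Function.comp_apply, hAc i j,
        hwc i, hwc j] at h1
      exact h1
    have h2 := key (Fin.castLE hs a) (Fin.castLE hs b)
    rw [hvc a, hvc b] at h2
    simpa using h2
  · rintro ⟨-, heff⟩
    refine ⟨hw, fun v hv hcmp i j => ?_⟩
    -- v is constant on indices ≥ s
    have hveq : ∀ i : Fin n, s ≤ i.val → v i = v σ := by
      intro i hi
      have h1 := hcmp i σ
      rw [hblock i σ (Or.inr le_rfl), weq i hi, div_self (ne_of_gt (hw σ)),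
        sub_self, abs_zero] at h1
      have h2 : (1 : ℝ) - v i / v σ = 0 := by
        have := abs_nonneg (1 - v i / v σ)
        have h3 : |1 - v i / v σ| = 0 := le_antisymm h1 this
        exact abs_eq_zero.mp h3
      have h4 : v i / v σ = 1 := by linarith
      exact (div_eq_one_iff_eq (ne_of_gt (hv σ))).mp h4
    have hvc : ∀ i : Fin n, v (Fin.castLE hs (pmap s i)) = v i := by
      intro i
      rcases pmap_spec hs i with ⟨hi, _⟩ | ⟨hi, hi'⟩
      · rw [hi]
      · rw [hi, ← hveq i hi']
    have key := heff (fun a => v (Fin.castLE hs a)) (fun a => hv _)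
      (fun a b => hcmp (Fin.castLE hs a) (Fin.castLE hs b))
      (pmap s i) (pmap s j)
    simp only [Function.comp_apply] at key
    rw [hvc i, hvc j, hwc i, hwc j] at key
    exact key
end

section
/- Let A be the n-by-n reciprocal matrix of block form [[B, J],[J, J]] with B a 3-by-3 reciprocal matrix and n >= 5. If w is efficient for A, then there exists i in {4,...,n} such that w(i) is efficient for A(i). -/
open Relation

def edgeRel {m : ℕ} (A : Matrix (Fin m) (Fin m) ℝ) (w : Fin m → ℝ) (i j : Fin m) : Prop :=
  A i j ≤ w i / w j

lemma edge_total {m : ℕ} {A : Matrix (Fin m) (Fin m) ℝ} {w : Fin m → ℝ}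
    (hA : Reciprocal A) (hw : ∀ i, 0 < w i) (i j : Fin m) :
    edgeRel A w i j ∨ edgeRel A w j i := by
  by_cases h : A i j ≤ w i / w j
  · exact Or.inl h
  · right
    push_neg at h
    unfold edgeRel
    rw [hA.2 i j]
    have h1 : 0 < w i / w j := div_pos (hw i) (hw j)
    have h2 : (A i j)⁻¹ ≤ (w i / w j)⁻¹ := by
      exact inv_anti₀ h1 h.le
    calc (A i j)⁻¹ ≤ (w i / w j)⁻¹ := h2
      _ = w j / w i := by rw [inv_div]

lemma sc_to_eff {m : ℕ} {A : Matrix (Fin m) (Fin m) ℝ} {w : Fin m → ℝ}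
    (hw : ∀ i, 0 < w i)
    (hsc : ∀ u x, ReflTransGen (edgeRel A w) u x) : Efficient A w := by
  refine ⟨hw, fun v hv hdom i j => ?_⟩
  have key : ∀ a b, edgeRel A w a b → v a / w a ≤ v b / w b := by
    intro a b hab
    have hr : A a b ≤ w a / w b := hab
    have h1 := hdom a b
    have habs : |A a b - w a / w b| = w a / w b - A a b := by
      rw [abs_sub_comm, abs_of_nonneg (by linarith)]
    rw [habs] at h1
    have h2 : v a / v b ≤ w a / w b := by
      have := le_abs_self (v a / v b - A a b)
      rw [abs_sub_comm] at this
      linarith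
    rw [div_le_div_iff₀ (hv b) (hw b)] at h2
    rw [div_le_div_iff₀ (hw a) (hw b)]
    · nlinarith [hv a, hv b, hw a, hw b]

  have mono : ∀ a b, ReflTransGen (edgeRel A w) a b → v a / w a ≤ v b / w b := by
    intro a b h
    induction h with
    | refl => exact le_refl _
    | tail hp e ih => exact le_trans ih (key _ _ e)
  have heq : v i / w i = v j / w j := le_antisymm (mono i j (hsc i j)) (mono j i (hsc j i))
  rw [div_eq_div_iff (hw i).ne' (hw j).ne'] at heq
  rw [div_eq_div_iff (hv j).ne' (hw j).ne']
  linarith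

lemma eff_to_sc {m : ℕ} {A : Matrix (Fin m) (Fin m) ℝ} {w : Fin m → ℝ}
    (hA : Reciprocal A) (hw : Efficient A w) :
    ∀ u x, ReflTransGen (edgeRel A w) u x := by
  classical
  obtain ⟨hwpos, heff⟩ := hw
  by_contra hcon
  push_neg at hcon
  obtain ⟨u, x, hux⟩ := hcon
  set S : Set (Fin m) := {z | ReflTransGen (edgeRel A w) u z} with hSdef
  have hnotE : ∀ i j : Fin m, i ∈ S → j ∉ S → w i / w j < A i j := by
    intro i j hi hj
    by_contra hle
    push_neg at hle
    exact hj (hi.tail hle)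
  let P : Finset (Fin m × Fin m) := Finset.univ.filter (fun p => p.1 ∈ S ∧ p.2 ∉ S)
  have hPne : P.Nonempty := ⟨(u, x), by simp [P, hSdef]; exact ⟨ReflTransGen.refl, hux⟩⟩
  let g : Fin m × Fin m → ℝ := fun p => A p.1 p.2 * w p.2 / w p.1
  set c := P.inf' hPne g with hc
  have hc1 : 1 < c := by
    rw [hc, Finset.lt_inf'_iff]
    intro p hp
    simp only [P, Finset.mem_filter, Finset.mem_univ, true_and] at hp
    have h := hnotE p.1 p.2 hp.1 hp.2
    have h1 : w p.1 / w p.2 * w p.2 < A p.1 p.2 * w p.2 :=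
      mul_lt_mul_of_pos_right h (hwpos p.2)
    rw [div_mul_cancel₀ _ (hwpos p.2).ne'] at h1
    rw [lt_div_iff₀ (hwpos p.1), one_mul]
    exact h1
  have hcle : ∀ i j, i ∈ S → j ∉ S → c * (w i / w j) ≤ A i j := by
    intro i j hi hj
    have hmem : (i, j) ∈ P := by simp [P]; exact ⟨hi, hj⟩
    have h := Finset.inf'_le g hmem
    rw [← hc] at h
    have h2 : c * (w i / w j) ≤ (A i j * w j / w i) * (w i / w j) := by
      apply mul_le_mul_of_nonneg_right h (le_of_lt (div_pos (hwpos i) (hwpos j)))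
    calc c * (w i / w j) ≤ (A i j * w j / w i) * (w i / w j) := h2
      _ = A i j := by
        field_simp [(hwpos i).ne', (hwpos j).ne']
  set v : Fin m → ℝ := fun z => if z ∈ S then c * w z else w z with hv
  have hvpos : ∀ z, 0 < v z := by
    intro z
    rw [hv]
    dsimp only
    split
    · exact mul_pos (by linarith) (hwpos z)
    · exact hwpos z
  have hdom : ∀ i j, |A i j - v i / v j| ≤ |A i j - w i / w j| := by
    intro i j
    by_cases hi : i ∈ S <;> by_cases hj : j ∈ S
    · rw [hv]
      simp only [if_pos hi, if_pos hj]
      rw [mul_div_mul_left _ _ (by linarith : c ≠ 0)]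
    · -- i ∈ S, j ∉ S
      rw [hv]
      simp only [if_pos hi, if_neg hj]
      have hr := hnotE i j hi hj
      have hcr := hcle i j hi hj
      have hrpos : 0 < w i / w j := div_pos (hwpos i) (hwpos j)
      have he1 : c * w i / w j = c * (w i / w j) := by ring
      rw [he1]
      rw [abs_of_nonneg (by linarith), abs_of_nonneg (by linarith)]
      nlinarith
    · -- i ∉ S, j ∈ S
      rw [hv]
      simp only [if_neg hi, if_pos hj]
      have hr := hnotE j i hj hi
      have hcr := hcle j i hj hi
      have hrpos : 0 < w i / w j := div_pos (hwpos i) (hwpos j)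
      have hAe : A i j = (A j i)⁻¹ := hA.2 j i
      have hApos := hA.1 i j
      have hAji := hA.1 j i
      -- A i j < w i / w j
      have hlt : A i j < w i / w j := by
        rw [hAe]
        have : (w j / w i)⁻¹ = w i / w j := by rw [inv_div]
        rw [← this]
        exact inv_strictAnti₀ (div_pos (hwpos j) (hwpos i)) hr
      -- A i j ≤ (w i / w j) / c
      have hge : A i j ≤ (w i / w j) / c := by
        rw [hAe]
        have hpos2 : 0 < c * (w j / w i) :=
          mul_pos (by linarith) (div_pos (hwpos j) (hwpos i))
        have h2 : (A j i)⁻¹ ≤ (c * (w j / w i))⁻¹ := inv_anti₀ hpos2 hcr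
        calc (A j i)⁻¹ ≤ (c * (w j / w i))⁻¹ := h2
          _ = (w i / w j) / c := by
            rw [mul_inv, inv_div]
            ring
      have he1 : w i / (c * w j) = (w i / w j) / c := by
        field_simp
      rw [he1]
      have hc0 : (0:ℝ) < c := by linarith
      have hled : (w i / w j) / c ≤ w i / w j := by
        rw [div_le_iff₀ hc0]
        nlinarith
      rw [abs_of_nonpos (by linarith), abs_of_nonpos (by linarith)]
      linarith
    · rw [hv]
      simp only [if_neg hi, if_neg hj]
      exact le_refl _
  have := heff v hvpos hdom u x
  have hu : u ∈ S := ReflTransGen.refl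
  have hx : x ∉ S := hux
  rw [hv] at this
  simp only [if_pos hu, if_neg hx] at this
  have hne : c * w u / w x = c * (w u / w x) := by ring
  rw [hne] at this
  have hwux : 0 < w u / w x := div_pos (hwpos u) (hwpos x)
  nlinarith [mul_pos (sub_pos.2 hc1) hwux]

lemma transfer {m : ℕ} (A : Matrix (Fin (m+1)) (Fin (m+1)) ℝ) (w : Fin (m+1) → ℝ)
    (i : Fin (m+1))
    (h : ∀ u v : Fin (m+1), u ≠ i → v ≠ i →
      ReflTransGen (fun x y => edgeRel A w x y ∧ x ≠ i ∧ y ≠ i) u v)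
    (j l : Fin m) :
    ReflTransGen (edgeRel (A.submatrix i.succAbove i.succAbove) (w ∘ i.succAbove)) j l := by
  have hj : i.succAbove j ≠ i := Fin.succAbove_ne i j
  have hl : i.succAbove l ≠ i := Fin.succAbove_ne i l
  have hpath := h _ _ hj hl
  have aux : ∀ y, ReflTransGen (fun x y => edgeRel A w x y ∧ x ≠ i ∧ y ≠ i) (i.succAbove j) y →
      ∀ l' : Fin m, i.succAbove l' = y →
      ReflTransGen (edgeRel (A.submatrix i.succAbove i.succAbove) (w ∘ i.succAbove)) j l' := by
    intro y hy
    induction hy with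
    | refl =>
      intro l' hl'
      have : j = l' := Fin.succAbove_right_injective hl'.symm
      rw [← this]
    | tail hp e ih =>
      intro l' hl'
      obtain ⟨p', hp'⟩ := Fin.exists_succAbove_eq e.2.1
      have step : edgeRel (A.submatrix i.succAbove i.succAbove) (w ∘ i.succAbove) p' l' := by
        show A (i.succAbove p') (i.succAbove l') ≤ w (i.succAbove p') / w (i.succAbove l')
        rw [hp', hl']
        exact e.1
      exact (ih p' hp').tail step
  exact aux _ hpath l rfl

lemma exists_good_clone {n : ℕ} (hn : 5 ≤ n + 1)
    (A : Matrix (Fin (n + 1)) (Fin (n + 1)) ℝ) (hA : Reciprocal A)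
    (hblock : ∀ i j : Fin (n + 1), 3 ≤ i.val ∨ 3 ≤ j.val → A i j = 1)
    (w : Fin (n + 1) → ℝ) (hwpos : ∀ i, 0 < w i)
    (hsc : ∀ u x, ReflTransGen (edgeRel A w) u x) :
    ∃ i : Fin (n + 1), 3 ≤ i.val ∧ ∀ u v : Fin (n + 1), u ≠ i → v ≠ i →
      ReflTransGen (fun x y => edgeRel A w x y ∧ x ≠ i ∧ y ≠ i) u v := by
  classical
  have eC : ∀ c z : Fin (n + 1), 3 ≤ c.val → (edgeRel A w c z ↔ w z ≤ w c) := by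
    intro c z hc
    unfold edgeRel
    rw [hblock c z (Or.inl hc), one_le_div (hwpos z)]
  have eC' : ∀ z c : Fin (n + 1), 3 ≤ c.val → (edgeRel A w z c ↔ w c ≤ w z) := by
    intro z c hc
    unfold edgeRel
    rw [hblock z c (Or.inr hc), one_le_div (hwpos c)]
  by_cases heq : ∃ i k : Fin (n + 1), 3 ≤ i.val ∧ 3 ≤ k.val ∧ i ≠ k ∧ w i = w k
  · -- two clones with equal weight: delete one of them
    obtain ⟨i, k, hi3, hk3, hik, hwik⟩ := heq
    refine ⟨i, hi3, fun u v hu hv => ?_⟩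
    have φmap : ∀ a b : Fin (n + 1), ReflTransGen (edgeRel A w) a b →
        ReflTransGen (fun x y => edgeRel A w x y ∧ x ≠ i ∧ y ≠ i)
          (if a = i then k else a) (if b = i then k else b) := by
      intro a b hab
      induction hab with
      | refl => exact .refl
      | @tail p q hp e ih =>
        refine ih.tail ⟨?_, ?_, ?_⟩
        · by_cases hpi : p = i <;> by_cases hqi : q = i
          · rw [if_pos hpi, if_pos hqi]
            show A k k ≤ w k / w k
            rw [hblock k k (Or.inl hk3), div_self (hwpos k).ne']
          · rw [if_pos hpi, if_neg hqi]
            subst hpi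
            exact (eC k q hk3).2 (hwik ▸ (eC p q hi3).1 e)
          · rw [if_neg hpi, if_pos hqi]
            subst hqi
            exact (eC' p k hk3).2 (hwik ▸ (eC' p q hi3).1 e)
          · rw [if_neg hpi, if_neg hqi]; exact e
        · by_cases hpi : p = i
          · rw [if_pos hpi]; exact hik.symm
          · rw [if_neg hpi]; exact hpi
        · by_cases hqi : q = i
          · rw [if_pos hqi]; exact hik.symm
          · rw [if_neg hqi]; exact hqi
    have := φmap u v (hsc u v)
    rw [if_neg hu, if_neg hv] at this
    exact this
  · -- all clone weights distinct
    push_neg at heq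
    have hdist : ∀ c c' : Fin (n + 1), 3 ≤ c.val → 3 ≤ c'.val → c ≠ c' → w c ≠ w c' :=
      fun c c' h1 h2 h3 => heq c c' h1 h2 h3
    set Cl : Finset (Fin (n + 1)) := Finset.univ.filter (fun c => 3 ≤ c.val) with hCl
    have hc3 : (⟨3, by omega⟩ : Fin (n + 1)) ∈ Cl := by simp [hCl]
    have hc4 : (⟨4, by omega⟩ : Fin (n + 1)) ∈ Cl := by simp [hCl]
    obtain ⟨b, hbCl, hbmax⟩ := Finset.exists_max_image Cl w ⟨_, hc3⟩
    have hb3 : 3 ≤ b.val := by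
      have := Finset.mem_filter.1 hbCl
      exact this.2
    have hCl'ne : (Cl.erase b).Nonempty := by
      by_cases h3b : (⟨3, by omega⟩ : Fin (n + 1)) = b
      · refine ⟨⟨4, by omega⟩, Finset.mem_erase.2 ⟨?_, hc4⟩⟩
        intro h4b
        have h43 := congrArg Fin.val (h4b.trans h3b.symm)
        simp at h43
      · exact ⟨_, Finset.mem_erase.2 ⟨h3b, hc3⟩⟩
    obtain ⟨a, haCl', hamax⟩ := Finset.exists_max_image (Cl.erase b) w hCl'ne
    have hab : a ≠ b := (Finset.mem_erase.1 haCl').1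
    have ha3 : 3 ≤ a.val := (Finset.mem_filter.1 (Finset.mem_of_mem_erase haCl')).2
    have hwab : w a < w b :=
      lt_of_le_of_ne (hbmax a (Finset.mem_of_mem_erase haCl')) (hdist a b ha3 hb3 hab)
    have hsmall : ∀ c : Fin (n + 1), 3 ≤ c.val → c ≠ a → c ≠ b → w c < w a := by
      intro c h3 hca hcb
      have hcCl' : c ∈ Cl.erase b :=
        Finset.mem_erase.2 ⟨hcb, Finset.mem_filter.2 ⟨Finset.mem_univ c, h3⟩⟩
      exact lt_of_le_of_ne (hamax c hcCl') (hdist c a h3 ha3 hca)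
    -- Lemma A / Lemma B
    have lemA : ∀ z, ReflTransGen (edgeRel A w) z a → z ≠ b →
        ReflTransGen (fun x y => edgeRel A w x y ∧ x ≠ b ∧ y ≠ b) z a := by
      intro z hz
      induction hz using Relation.ReflTransGen.head_induction_on with
      | refl => intro _; exact .refl
      | @head p q e hpath ih =>
        intro hp
        by_cases hq : q = b
        · have h1 : w b ≤ w p := (eC' p b hb3).1 (hq ▸ e)
          have h2 : edgeRel A w p a := (eC' p a ha3).2 (le_trans hwab.le h1)
          exact ReflTransGen.single ⟨h2, hp, hab⟩
        · exact (ih hq).head ⟨e, hp, hq⟩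
    have lemB : ∀ z, ReflTransGen (edgeRel A w) b z → z ≠ a →
        ReflTransGen (fun x y => edgeRel A w x y ∧ x ≠ a ∧ y ≠ a) b z := by
      intro z hz
      induction hz with
      | refl => intro _; exact .refl
      | @tail p q hp e ih =>
        intro hq
        by_cases hpa : p = a
        · have h1 : w q ≤ w a := (eC a q ha3).1 (hpa ▸ e)
          have h2 : edgeRel A w b q := (eC b q hb3).2 (le_trans h1 hwab.le)
          exact ReflTransGen.single ⟨h2, Ne.symm hab, hq⟩
        · exact (ih hpa).tail ⟨e, hpa, hq⟩
    by_cases hbSC : ∀ u v : Fin (n + 1), u ≠ b → v ≠ b →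
        ReflTransGen (fun x y => edgeRel A w x y ∧ x ≠ b ∧ y ≠ b) u v
    · exact ⟨b, hb3, hbSC⟩
    by_cases haSC : ∀ u v : Fin (n + 1), u ≠ a → v ≠ a →
        ReflTransGen (fun x y => edgeRel A w x y ∧ x ≠ a ∧ y ≠ a) u v
    · exact ⟨a, ha3, haSC⟩
    exfalso
    push_neg at hbSC haSC
    obtain ⟨u1, v1, hu1, hv1, hP1⟩ := hbSC
    obtain ⟨u2, v2, hu2, hv2, hP2⟩ := haSC
    -- U and U' facts
    have hv1U : v1 ≠ b ∧ ¬ ReflTransGen (fun x y => edgeRel A w x y ∧ x ≠ b ∧ y ≠ b) a v1 := by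
      refine ⟨hv1, fun hr => hP1 (ReflTransGen.trans (lemA u1 (hsc u1 a) hu1) hr)⟩
    have hU'u2 : u2 ≠ a ∧ ¬ ReflTransGen (fun x y => edgeRel A w x y ∧ x ≠ a ∧ y ≠ a) u2 b := by
      refine ⟨hu2, fun hr => hP2 (ReflTransGen.trans hr (lemB v2 (hsc b v2) hv2))⟩
    have hUin : ∀ y, (y ≠ b ∧ ¬ ReflTransGen (fun x y => edgeRel A w x y ∧ x ≠ b ∧ y ≠ b) a y) →
        ∀ z, z ≠ b → ReflTransGen (fun x y => edgeRel A w x y ∧ x ≠ b ∧ y ≠ b) a z →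
        ¬ edgeRel A w z y :=
      fun y hy z hzb hz e => hy.2 (hz.tail ⟨e, hzb, hy.1⟩)
    have hU'out : ∀ x, (x ≠ a ∧ ¬ ReflTransGen (fun x y => edgeRel A w x y ∧ x ≠ a ∧ y ≠ a) x b) →
        ∀ y, y ≠ a → edgeRel A w x y →
        (y ≠ a ∧ ¬ ReflTransGen (fun x y => edgeRel A w x y ∧ x ≠ a ∧ y ≠ a) y b) :=
      fun x hx y hya e => ⟨hya, fun hr => hx.2 (hr.head ⟨e, hx.1, hya⟩)⟩
    have hUval : ∀ z, (z ≠ b ∧ ¬ ReflTransGen (fun x y => edgeRel A w x y ∧ x ≠ b ∧ y ≠ b) a z) →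
        w a < w z := by
      intro z hz
      by_contra hle
      push_neg at hle
      exact hz.2 (ReflTransGen.single ⟨(eC a z ha3).2 hle, hab, hz.1⟩)
    have hU'val : ∀ z, (z ≠ a ∧ ¬ ReflTransGen (fun x y => edgeRel A w x y ∧ x ≠ a ∧ y ≠ a) z b) →
        w z < w b := by
      intro z hz
      by_contra hle
      push_neg at hle
      exact hz.2 (ReflTransGen.single ⟨(eC' z b hb3).2 hle, hz.1, Ne.symm hab⟩)
    -- step 4: some u0 ∈ U with edge b → u0
    have step4 : ∀ z, ReflTransGen (edgeRel A w) a z →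
        (z ≠ b ∧ ¬ ReflTransGen (fun x y => edgeRel A w x y ∧ x ≠ b ∧ y ≠ b) a z) →
        ∃ u0, (u0 ≠ b ∧ ¬ ReflTransGen (fun x y => edgeRel A w x y ∧ x ≠ b ∧ y ≠ b) a u0) ∧
          edgeRel A w b u0 := by
      intro z hz
      induction hz with
      | refl => intro ha'; exact absurd ReflTransGen.refl ha'.2
      | @tail p q hp e ih =>
        intro hq
        by_cases hpb : p = b
        · exact ⟨q, hq, hpb ▸ e⟩
        · by_cases hpU : ReflTransGen (fun x y => edgeRel A w x y ∧ x ≠ b ∧ y ≠ b) a p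
          · exact absurd e (hUin q hq p hpb hpU)
          · exact ih ⟨hpb, hpU⟩
    obtain ⟨u0, hu0U, hbu0⟩ := step4 v1 (hsc a v1) hv1U
    -- step 5: some u0' ∈ U' with edge u0' → a
    have step5 : ∀ z, ReflTransGen (edgeRel A w) z b →
        (z ≠ a ∧ ¬ ReflTransGen (fun x y => edgeRel A w x y ∧ x ≠ a ∧ y ≠ a) z b) →
        ∃ u0', (u0' ≠ a ∧ ¬ ReflTransGen (fun x y => edgeRel A w x y ∧ x ≠ a ∧ y ≠ a) u0' b) ∧
          edgeRel A w u0' a := by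
      intro z hz
      induction hz using Relation.ReflTransGen.head_induction_on with
      | refl => intro hb'; exact absurd ReflTransGen.refl hb'.2
      | @head p q e hpath ih =>
        intro hp
        by_cases hqa : q = a
        · exact ⟨p, hp, hqa ▸ e⟩
        · exact ih (hU'out p hp q hqa e)
    obtain ⟨u0', hu0'U, hu0'a⟩ := step5 u2 (hsc u2 b) hU'u2
    have hu0w : w u0 ≤ w b := (eC b u0 hb3).1 hbu0
    have hu0val : w a < w u0 := hUval u0 hu0U
    have hu0T : u0.val < 3 := by
      by_contra h3
      push_neg at h3
      have hu0a : u0 ≠ a := fun h => by rw [h] at hu0val; exact lt_irrefl _ hu0val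
      exact absurd hu0val (not_lt.2 (hsmall u0 h3 hu0a hu0U.1).le)
    have hu0'w : w a ≤ w u0' := (eC' u0' a ha3).1 hu0'a
    have hu0'val : w u0' < w b := hU'val u0' hu0'U
    have hu0'b : u0' ≠ b := fun h => by rw [h] at hu0'val; exact lt_irrefl _ hu0'val
    have hu0'T : u0'.val < 3 := by
      by_contra h3
      push_neg at h3
      exact absurd hu0'w (not_le.2 (hsmall u0' h3 hu0'U.1 hu0'b))
    -- closA dichotomy
    by_cases hclosA : ∀ z : Fin (n + 1), z ≠ b → w b ≤ w z →
        ¬ ReflTransGen (fun x y => edgeRel A w x y ∧ x ≠ b ∧ y ≠ b) a z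
    · -- then everything reachable from a avoids U : contradiction with u0
      have hall : ∀ z, ReflTransGen (edgeRel A w) a z →
          z ≠ b ∧ ReflTransGen (fun x y => edgeRel A w x y ∧ x ≠ b ∧ y ≠ b) a z := by
        intro z hz
        induction hz with
        | refl => exact ⟨hab, .refl⟩
        | @tail p q hp e ih =>
          obtain ⟨hpb, hpath⟩ := ih
          by_cases hqb : q = b
          · have hwp : w b ≤ w p := (eC' p b hb3).1 (hqb ▸ e)
            exact absurd hpath (hclosA p hpb hwp)
          · refine ⟨hqb, ?_⟩
            by_cases hqU : ReflTransGen (fun x y => edgeRel A w x y ∧ x ≠ b ∧ y ≠ b) a q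
            · exact hqU
            · exact absurd e (hUin q ⟨hqb, hqU⟩ p hpb hpath)
      exact hu0U.2 (hall u0 (hsc a u0)).2
    push_neg at hclosA
    obtain ⟨z0, hz0b, hz0w, hz0R⟩ := hclosA
    have hz0T : z0.val < 3 := by
      by_contra h3
      push_neg at h3
      have hz0a : z0 ≠ a := fun h => by
        rw [h] at hz0w
        exact absurd hwab (not_lt.2 hz0w)
      exact absurd hz0w (not_le.2 (lt_trans (hsmall z0 h3 hz0a hz0b) hwab))
    have hz0a : z0 ≠ a := fun h => by
      rw [h] at hz0T
      omega
    have hz0notU' : ¬ (z0 ≠ a ∧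
        ¬ ReflTransGen (fun x y => edgeRel A w x y ∧ x ≠ a ∧ y ≠ a) z0 b) := by
      intro h
      exact absurd (hU'val z0 h) (not_lt.2 hz0w)
    -- closB dichotomy
    by_cases hclosB : ∀ z : Fin (n + 1), z ≠ a → w z ≤ w a →
        ¬ ReflTransGen (fun x y => edgeRel A w x y ∧ x ≠ a ∧ y ≠ a) z b
    · -- everything reachable from a lies in U' ∪ {a} : contradiction with reaching b
      have hall2 : ∀ z, ReflTransGen (edgeRel A w) a z →
          z = a ∨ (z ≠ a ∧ ¬ ReflTransGen (fun x y => edgeRel A w x y ∧ x ≠ a ∧ y ≠ a) z b) := by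
        intro z hz
        induction hz with
        | refl => exact Or.inl rfl
        | @tail p q hp e ih =>
          by_cases hqa : q = a
          · exact Or.inl hqa
          · right
            rcases ih with hpa | hpU'
            · have hle : w q ≤ w a := (eC a q ha3).1 (hpa ▸ e)
              exact ⟨hqa, hclosB q hqa hle⟩
            · exact hU'out p hpU' q hqa e
      rcases hall2 b (hsc a b) with h | h
      · exact hab h.symm
      · exact h.2 ReflTransGen.refl
    push_neg at hclosB
    obtain ⟨z1, hz1a, hz1w, hz1R⟩ := hclosB
    -- tournament facts
    have hEu0z0 : edgeRel A w u0 z0 := by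
      rcases edge_total hA hwpos z0 u0 with h | h
      · exact absurd h (hUin u0 hu0U z0 hz0b hz0R)
      · exact h
    have hne00 : u0 ≠ u0' := by
      intro hcase
      exact hz0notU' (hU'out u0' hu0'U z0 hz0a (hcase ▸ hEu0z0))
    have hz0u0 : z0 ≠ u0 := fun h => hu0U.2 (h ▸ hz0R)
    have hz0u0' : z0 ≠ u0' := fun h => by
      rw [h] at hz0w
      exact absurd hu0'val (not_lt.2 hz0w)
    by_cases hz1T : z1.val < 3
    · have d1 : z0.val ≠ u0.val := fun h => hz0u0 (Fin.ext h)
      have d2 : z0.val ≠ u0'.val := fun h => hz0u0' (Fin.ext h)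
      have d3 : u0.val ≠ u0'.val := fun h => hne00 (Fin.ext h)
      have hvals : z1.val = z0.val ∨ z1.val = u0.val ∨ z1.val = u0'.val := by omega
      rcases hvals with h | h | h
      · have hz1z0 : z1 = z0 := Fin.ext h
        rw [hz1z0] at hz1w
        linarith
      · have hz1u0 : z1 = u0 := Fin.ext h
        rw [hz1u0] at hz1w
        linarith
      · have hz1u0' : z1 = u0' := Fin.ext h
        rw [hz1u0'] at hz1R
        exact hu0'U.2 hz1R
    · push_neg at hz1T
      have hz1b : z1 ≠ b := fun h => by
        rw [h] at hz1w
        exact absurd hwab (not_lt.2 hz1w)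
      have hz1small : w z1 < w a := hsmall z1 hz1T hz1a hz1b
      have hclo : ∀ z, ReflTransGen (fun x y => edgeRel A w x y ∧ x ≠ a ∧ y ≠ a) z1 z →
          3 ≤ z.val ∧ z ≠ a ∧ z ≠ b ∧ w z < w a := by
        intro z hz
        induction hz with
        | refl => exact ⟨hz1T, hz1a, hz1b, hz1small⟩
        | @tail p q hp e ih =>
          obtain ⟨hp3, hpa, hpb, hpw⟩ := ih
          have hwq : w q ≤ w p := (eC p q hp3).1 e.1
          have hqa : q ≠ a := e.2.2
          have hqw : w q < w a := lt_of_le_of_lt hwq hpw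
          have hq3 : 3 ≤ q.val := by
            by_contra hqT
            push_neg at hqT
            have d1 : z0.val ≠ u0.val := fun h => hz0u0 (Fin.ext h)
            have d2 : z0.val ≠ u0'.val := fun h => hz0u0' (Fin.ext h)
            have d3 : u0.val ≠ u0'.val := fun h => hne00 (Fin.ext h)
            have hvals : q.val = z0.val ∨ q.val = u0.val ∨ q.val = u0'.val := by omega
            rcases hvals with h | h | h
            · have : q = z0 := Fin.ext h
              rw [this] at hqw
              linarith
            · have : q = u0 := Fin.ext h
              rw [this] at hqw
              linarith
            · have : q = u0' := Fin.ext h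
              rw [this] at hqw
              linarith
          have hqb : q ≠ b := fun h => by
            rw [h] at hqw
            linarith
          exact ⟨hq3, hqa, hqb, hqw⟩
      exact (hclo b hz1R).2.2.1 rfl

/-- For a 3-block perturbed consistent matrix with `n ≥ 5`, every efficient
vector remains efficient after deleting some index `i ∈ {4,…,n}`. -/
theorem stmt_12 {n : ℕ} (hn : 5 ≤ n + 1) (A : Matrix (Fin (n + 1)) (Fin (n + 1)) ℝ)
    (hA : Reciprocal A)
    (hblock : ∀ i j : Fin (n + 1), 3 ≤ i.val ∨ 3 ≤ j.val → A i j = 1)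
    (w : Fin (n + 1) → ℝ) (hw : Efficient A w) :
    ∃ i : Fin (n + 1), 3 ≤ i.val ∧
      Efficient (A.submatrix i.succAbove i.succAbove) (w ∘ i.succAbove) := by
  have hwpos := hw.1
  have hsc := eff_to_sc hA hw
  obtain ⟨i, hi3, hgood⟩ := exists_good_clone hn A hA hblock w hwpos hsc
  refine ⟨i, hi3, ?_⟩
  exact sc_to_eff (fun j => hwpos _) (fun j l => transfer A w i hgood j l)
end

section
/- Let A be the n-by-n reciprocal matrix of block form [[B, J],[J, J]] with B a 3-by-3 reciprocal matrix and n >= 4. If w is efficient for A, then there exists j in {4,...,n} such that the subvector w[{1,2,3,j}] is efficient for the principal submatrix A[{1,2,3,j}]. -/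

lemma noCut_reach {α : Type*} [Fintype α] [DecidableEq α] (R : α → α → Prop)
    (h : ∀ S : Finset α, S.Nonempty → Sᶜ.Nonempty → ∃ i ∈ Sᶜ, ∃ x ∈ S, R i x) :
    ∀ a b, Relation.ReflTransGen R a b := by
  classical
  intro a b
  by_contra hab
  set S : Finset α := Finset.univ.filter (fun x => Relation.ReflTransGen R x b) with hS
  have hb : b ∈ S := Finset.mem_filter.mpr ⟨Finset.mem_univ _, Relation.ReflTransGen.refl⟩
  have hac : a ∈ Sᶜ := by simp [hS, hab]
  obtain ⟨i, hi, x, hx, hR⟩ := h S ⟨b, hb⟩ ⟨a, hac⟩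
  apply Finset.mem_compl.mp hi
  simp only [hS, Finset.mem_filter] at hx ⊢
  exact ⟨Finset.mem_univ _, Relation.ReflTransGen.head hR hx.2⟩

lemma cycle4 {α : Type*} (R : α → α → Prop) (a b c d : α)
    (h1 : R a b) (h2 : R b c) (h3 : R c d) (h4 : R d a)
    (cover : ∀ x, x = a ∨ x = b ∨ x = c ∨ x = d) :
    ∀ p q, Relation.ReflTransGen R p q := by
  have Hab : Relation.ReflTransGen R a b := .single h1
  have Hbc : Relation.ReflTransGen R b c := .single h2
  have Hcd : Relation.ReflTransGen R c d := .single h3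
  have Hda : Relation.ReflTransGen R d a := .single h4
  have Hac := Hab.trans Hbc
  have Had := Hac.trans Hcd
  have Hbd := Hbc.trans Hcd
  have Hba := Hbd.trans Hda
  have Hca := Hcd.trans Hda
  have Hcb := Hca.trans Hab
  have Hdb := Hda.trans Hab
  have Hdc := Hdb.trans Hbc
  intro p q
  rcases cover p with rfl | rfl | rfl | rfl <;>
    rcases cover q with rfl | rfl | rfl | rfl <;>
    first
      | exact Relation.ReflTransGen.refl
      | assumption

/-- Reachability of the arc relation implies efficiency. -/
lemma reach_eff {m : ℕ} (C : Matrix (Fin m) (Fin m) ℝ) (x : Fin m → ℝ)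
    (hx : ∀ i, 0 < x i)
    (hreach : ∀ p q, Relation.ReflTransGen (fun a b => C a b ≤ x a / x b) p q) :
    Efficient C x := by
  refine ⟨hx, fun v hv himp => ?_⟩
  have step : ∀ a b, C a b ≤ x a / x b → v a / x a ≤ v b / x b := by
    intro a b hab
    have h1 := himp a b
    have habs : |C a b - x a / x b| = x a / x b - C a b := by
      rw [abs_sub_comm]; exact abs_of_nonneg (sub_nonneg.mpr hab)
    have h2 : v a / v b - C a b ≤ |C a b - v a / v b| := by
      rw [abs_sub_comm]; exact le_abs_self _
    have h3 : v a / v b ≤ x a / x b := by rw [habs] at h1; linarith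
    rw [div_le_div_iff₀ (hv b) (hx b)] at h3
    rw [div_le_div_iff₀ (hx a) (hx b)]
    nlinarith [hv a, hv b, hx a, hx b]
  have mono : ∀ a b, Relation.ReflTransGen (fun a b => C a b ≤ x a / x b) a b →
      v a / x a ≤ v b / x b := by
    intro a b h
    induction h with
    | refl => exact le_refl _
    | tail _ h2 ih => exact ih.trans (step _ _ h2)
  intro i j
  have e1 := mono _ _ (hreach i j)
  have e2 := mono _ _ (hreach j i)
  have e3 : v i / x i = v j / x j := le_antisymm e1 e2
  rw [div_eq_div_iff (hx i).ne' (hx j).ne'] at e3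
  rw [div_eq_div_iff (hv j).ne' (hx j).ne']
  nlinarith [hx i, hx j, hv i, hv j]

lemma perturb₁ (a r x : ℝ) (ha : 0 < a) (hr : 0 < r) (hra : r < a)
    (hx0 : 0 < x) (hx : r / a ≤ x) (hx1 : x ≤ 1) : |a - r / x| ≤ |a - r| := by
  have hr2 : r ≤ x * a := (div_le_iff₀ ha).mp hx
  have h1 : r ≤ r / x := by rw [le_div_iff₀ hx0]; nlinarith
  have h2 : r / x ≤ a := by rw [div_le_iff₀ hx0]; nlinarith
  rw [abs_of_nonneg (by linarith : (0:ℝ) ≤ a - r), abs_of_nonneg (by linarith)]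
  linarith

lemma perturb₂ (a r x : ℝ) (ha : 0 < a) (hr : 0 < r) (hra : r < a)
    (hx0 : 0 < x) (hx : r / a ≤ x) (hx1 : x ≤ 1) : |a⁻¹ - x / r| ≤ |a⁻¹ - r⁻¹| := by
  have hr2 : r ≤ x * a := (div_le_iff₀ ha).mp hx
  have hai : 0 < a⁻¹ := inv_pos.mpr ha
  have hri : 0 < r⁻¹ := inv_pos.mpr hr
  have hmul_a : a * a⁻¹ = 1 := mul_inv_cancel₀ ha.ne'
  have hmul_r : r * r⁻¹ = 1 := mul_inv_cancel₀ hr.ne'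
  have har : a⁻¹ < r⁻¹ := by nlinarith
  have h1 : a⁻¹ ≤ x / r := by rw [le_div_iff₀ hr]; nlinarith
  have h2 : x / r ≤ r⁻¹ := by rw [div_le_iff₀ hr]; nlinarith
  rw [abs_of_nonpos (by linarith), abs_of_nonpos (by linarith)]
  linarith

lemma eff_noCut {n : ℕ} (A : Matrix (Fin n) (Fin n) ℝ) (hA : Reciprocal A)
    (w : Fin n → ℝ) (hw : Efficient A w) :
    ∀ S : Finset (Fin n), S.Nonempty → Sᶜ.Nonempty →
      ∃ i ∈ Sᶜ, ∃ x ∈ S, A i x ≤ w i / w x := by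
  classical
  intro S hS hSc
  by_contra hcon
  push_neg at hcon
  have hwp := hw.1
  have hcut : ∀ i ∈ Sᶜ, ∀ x ∈ S, w i / w x < A i x := hcon
  set P : Finset (Fin n × Fin n) := Sᶜ ×ˢ S with hP
  have hPne : P.Nonempty := hSc.product hS
  set f : Fin n × Fin n → ℝ := fun p => 1 - (w p.1 / w p.2) / A p.1 p.2 with hf
  set δ : ℝ := P.inf' hPne f with hδ
  have hfpos : ∀ p ∈ P, 0 < f p := by
    intro p hp
    rw [Finset.mem_product] at hp
    have h1 := hcut p.1 hp.1 p.2 hp.2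
    have h2 : (w p.1 / w p.2) / A p.1 p.2 < 1 :=
      (div_lt_one (hA.1 p.1 p.2)).mpr h1
    simp only [hf]; linarith
  have hδpos : 0 < δ := by
    rw [hδ, Finset.lt_inf'_iff]
    exact hfpos
  set ε : ℝ := δ / 2 with hε
  have hεpos : 0 < ε := by positivity
  have hεlt : ∀ p ∈ P, ε < f p := fun p hp =>
    lt_of_lt_of_le (by linarith) (Finset.inf'_le f hp)
  have hε1 : ε < 1 := by
    obtain ⟨p, hp⟩ := hPne
    have h2 := hεlt p hp
    rw [Finset.mem_product] at hp
    have h3 : 0 < (w p.1 / w p.2) / A p.1 p.2 :=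
      div_pos (div_pos (hwp _) (hwp _)) (hA.1 _ _)
    simp only [hf] at h2; linarith
  have hx0 : 0 < 1 - ε := by linarith
  set v : Fin n → ℝ := fun y => if y ∈ S then (1 - ε) * w y else w y with hv
  have hvpos : ∀ i, 0 < v i := by
    intro i; simp only [hv]
    split <;> [exact mul_pos hx0 (hwp i); exact hwp i]
  have himp : ∀ i j, |A i j - v i / v j| ≤ |A i j - w i / w j| := by
    intro i j
    by_cases hi : i ∈ S <;> by_cases hj : j ∈ S
    · simp only [hv, if_pos hi, if_pos hj,
        mul_div_mul_left _ _ hx0.ne', le_refl]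
    · -- i ∈ S, j ∉ S
      have hiP : (j, i) ∈ P := by
        rw [Finset.mem_product]; exact ⟨Finset.mem_compl.mpr hj, hi⟩
      have hkey := hεlt _ hiP
      simp only [hf] at hkey
      have hra := hcut j (Finset.mem_compl.mpr hj) i hi
      have haij : A i j = (A j i)⁻¹ := hA.2 j i
      have hwr : w i / w j = (w j / w i)⁻¹ := (inv_div (w j) (w i)).symm
      have hviv : v i / v j = (1 - ε) / (w j / w i) := by
        simp only [hv, if_pos hi, if_neg hj]
        rw [div_div_eq_mul_div, mul_div_assoc]
      rw [haij, hviv, hwr]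
      exact perturb₂ _ _ _ (hA.1 j i) (div_pos (hwp j) (hwp i)) hra hx0
        (by linarith) (by linarith)
    · -- i ∉ S, j ∈ S
      have hiP : (i, j) ∈ P := by
        rw [Finset.mem_product]; exact ⟨Finset.mem_compl.mpr hi, hj⟩
      have hkey := hεlt _ hiP
      simp only [hf] at hkey
      have hra := hcut i (Finset.mem_compl.mpr hi) j hj
      have hviv : v i / v j = (w i / w j) / (1 - ε) := by
        simp only [hv, if_pos hj, if_neg hi]
        rw [div_mul_eq_div_div_swap]
      rw [hviv]
      exact perturb₁ _ _ _ (hA.1 i j) (div_pos (hwp i) (hwp j)) hra hx0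
        (by linarith) (by linarith)
    · simp only [hv, if_neg hi, if_neg hj, le_refl]
  have heq := hw.2 v hvpos himp
  obtain ⟨x0, hx0S⟩ := hS
  obtain ⟨i0, hi0⟩ := hSc
  have h1 := heq i0 x0
  have hi0n : i0 ∉ S := Finset.mem_compl.mp hi0
  have hviv : v i0 / v x0 = (w i0 / w x0) / (1 - ε) := by
    simp only [hv, if_pos hx0S, if_neg hi0n]
    rw [div_mul_eq_div_div_swap]
  rw [hviv] at h1
  have hr0 : 0 < w i0 / w x0 := div_pos (hwp _) (hwp _)
  rw [div_eq_iff hx0.ne'] at h1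
  nlinarith [hr0, hεpos, h1]

/-- For a 3-block perturbed consistent matrix with `n ≥ 4`, every efficient
vector has a subvector `w[{1,2,3,j}]`, `j ∈ {4,…,n}`, efficient for
`A[{1,2,3,j}]`. -/
theorem stmt_13 {n : ℕ} (hn : 4 ≤ n) (A : Matrix (Fin n) (Fin n) ℝ)
    (hA : Reciprocal A)
    (hblock : ∀ i j : Fin n, 3 ≤ i.val ∨ 3 ≤ j.val → A i j = 1)
    (w : Fin n → ℝ) (hw : Efficient A w) :
    ∃ j : Fin n, 3 ≤ j.val ∧
      (let e : Fin 4 → Fin n := fun k =>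
        if h : k.val < 3 then ⟨k.val, by omega⟩ else j
      Efficient (A.submatrix e e) (w ∘ e)) := by
  classical
  have hwpos := hw.1
  have hApos := hA.1
  have NC := eff_noCut A hA w hw
  -- semicompleteness of the arc relation
  have semi : ∀ a b : Fin n, A a b ≤ w a / w b ∨ A b a ≤ w b / w a := by
    intro a b
    by_cases h : A a b ≤ w a / w b
    · exact Or.inl h
    · right
      push_neg at h
      have h1 : 0 < w a / w b := div_pos (hwpos a) (hwpos b)
      rw [hA.2 a b]
      calc (A a b)⁻¹ ≤ (w a / w b)⁻¹ := inv_anti₀ h1 h.le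
        _ = w b / w a := by rw [inv_div]
  -- arcs touching the tail are value comparisons
  have tailR : ∀ a b : Fin n, (3 ≤ a.val ∨ 3 ≤ b.val) →
      (A a b ≤ w a / w b ↔ w b ≤ w a) := by
    intro a b h
    rw [hblock a b h, one_le_div (hwpos b)]
  -- embeddings
  set E : Fin n → Fin 4 → Fin n := fun j k =>
    if h : k.val < 3 then ⟨k.val, by omega⟩ else j with hEdef
  set L : Fin n → Fin 4 := fun y => ⟨min y.val 3, by omega⟩ with hLdef
  have hLval : ∀ y : Fin n, y.val < 3 → (L y).val = y.val := by
    intro y hy; simp only [hLdef]; omega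
  have hEL : ∀ (j : Fin n) (y : Fin n), y.val < 3 → E j (L y) = y := by
    intro j y hy
    have h1 : (L y).val = y.val := hLval y hy
    have h2 : (L y).val < 3 := by omega
    simp only [hEdef, dif_pos h2]
    exact Fin.ext h1
  have hE3 : ∀ j : Fin n, E j 3 = j := by
    intro j
    simp only [hEdef]
    exact dif_neg (by decide)
  -- the common final step
  have key : ∀ j : Fin n, 3 ≤ j.val →
      (∀ p q : Fin 4, Relation.ReflTransGen
        (fun a b => A (E j a) (E j b) ≤ w (E j a) / w (E j b)) p q) →
      (∃ j : Fin n, 3 ≤ j.val ∧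
        (let e : Fin 4 → Fin n := fun k =>
          if h : k.val < 3 then ⟨k.val, by omega⟩ else j
        Efficient (A.submatrix e e) (w ∘ e))) := by
    intro j hj hre
    exact ⟨j, hj, reach_eff (A.submatrix (E j) (E j)) (w ∘ E j)
      (fun p => hwpos _) hre⟩
  -- the tail index set and its max/min
  have hUne : (Finset.univ.filter (fun u : Fin n => 3 ≤ u.val)).Nonempty :=
    ⟨⟨3, by omega⟩, by simp⟩
  obtain ⟨uM, huM, huMmax⟩ := Finset.exists_max_image _ w hUne
  obtain ⟨um, hum, hummin⟩ := Finset.exists_min_image _ w hUne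
  have huM3 : 3 ≤ uM.val := by simpa using huM
  have hum3 : 3 ≤ um.val := by simpa using hum
  have huMmax' : ∀ u : Fin n, 3 ≤ u.val → w u ≤ w uM := by
    intro u hu; exact huMmax u (by simp [hu])
  have hummin' : ∀ u : Fin n, 3 ≤ u.val → w um ≤ w u := by
    intro u hu; exact hummin u (by simp [hu])
  -- (1) a head index dominating the tail
  have iplus : ∃ ip : Fin n, ip.val < 3 ∧ ∀ u : Fin n, 3 ≤ u.val → w u ≤ w ip := by
    have keyM : ∃ ip : Fin n, ip.val < 3 ∧ w uM ≤ w ip := by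
      by_contra hcon
      push_neg at hcon
      set S := Finset.univ.filter (fun x : Fin n => w uM ≤ w x) with hSdef
      have h1 : uM ∈ S := by simp [hSdef]
      have h2 : (⟨0, by omega⟩ : Fin n) ∈ Sᶜ := by
        simp only [hSdef, Finset.mem_compl, Finset.mem_filter, Finset.mem_univ,
          true_and, not_le]
        exact hcon _ (by simp)
      obtain ⟨i, hi, x, hx, hR⟩ := NC S ⟨uM, h1⟩ ⟨_, h2⟩
      have hxS : w uM ≤ w x := (Finset.mem_filter.mp hx).2
      have hx3 : 3 ≤ x.val := by
        by_contra h3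
        push_neg at h3
        exact absurd hxS (not_le.mpr (hcon x h3))
      have hwx : w x ≤ w i := (tailR i x (Or.inr hx3)).mp hR
      exact (Finset.mem_compl.mp hi)
        (Finset.mem_filter.mpr ⟨Finset.mem_univ _, le_trans hxS hwx⟩)
    obtain ⟨ip, hip3, hipw⟩ := keyM
    exact ⟨ip, hip3, fun u hu => le_trans (huMmax' u hu) hipw⟩
  -- (2) a head index dominated by the tail
  have iminus : ∃ im : Fin n, im.val < 3 ∧ ∀ u : Fin n, 3 ≤ u.val → w im ≤ w u := by
    have keym : ∃ im : Fin n, im.val < 3 ∧ w im ≤ w um := by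
      by_contra hcon
      push_neg at hcon
      set S := Finset.univ.filter (fun x : Fin n => w um < w x) with hSdef
      have h1 : (⟨0, by omega⟩ : Fin n) ∈ S := by
        simp only [hSdef, Finset.mem_filter, Finset.mem_univ, true_and]
        exact hcon _ (by simp)
      have h2 : um ∈ Sᶜ := by
        simp [hSdef]
      obtain ⟨i, hi, x, hx, hR⟩ := NC S ⟨_, h1⟩ ⟨um, h2⟩
      have hiw : w i ≤ w um := by
        have := Finset.mem_compl.mp hi
        simp only [hSdef, Finset.mem_filter, Finset.mem_univ, true_and, not_lt] at this
        exact this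
      have hi3 : 3 ≤ i.val := by
        by_contra h3
        push_neg at h3
        have := hcon i h3
        linarith
      have hwx : w x ≤ w i := (tailR i x (Or.inl hi3)).mp hR
      have hxS : w um < w x := by
        have := Finset.mem_filter.mp hx
        exact this.2
      linarith
    obtain ⟨im, him3, himw⟩ := keym
    exact ⟨im, him3, fun u hu => le_trans himw (hummin' u hu)⟩
  obtain ⟨ip, hip3, hipw⟩ := iplus
  obtain ⟨im, him3, himw⟩ := iminus
  -- (3) fixing a source of the head tournament
  have source_fix : ∀ s : Fin n, s.val < 3 →
      (∀ y : Fin n, y.val < 3 → y ≠ s → ¬ (A y s ≤ w y / w s)) →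
      ∃ u a : Fin n, 3 ≤ u.val ∧ a.val < 3 ∧ a ≠ s ∧ w s ≤ w u ∧ w u ≤ w a := by
    intro s hs3 hsrc
    set S := Finset.univ.filter
      (fun x : Fin n => x = s ∨ (3 ≤ x.val ∧ w s ≤ w x)) with hSdef
    have h1 : s ∈ S := by simp [hSdef]
    obtain ⟨t, ht3, hts⟩ : ∃ t : Fin n, t.val < 3 ∧ t ≠ s := by
      by_cases h : s.val = 0
      · refine ⟨⟨1, by omega⟩, by simp, fun hE => ?_⟩
        have := congrArg Fin.val hE
        simp at this
        omega
      · refine ⟨⟨0, by omega⟩, by simp, fun hE => ?_⟩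
        have := congrArg Fin.val hE
        simp at this
        omega
    have h2 : t ∈ Sᶜ := by
      simp only [hSdef, Finset.mem_compl, Finset.mem_filter, Finset.mem_univ,
        true_and, not_or]
      exact ⟨hts, by rintro ⟨h3, -⟩; omega⟩
    obtain ⟨i, hi, x, hx, hR⟩ := NC S ⟨s, h1⟩ ⟨t, h2⟩
    have hi' : ¬ (i = s ∨ (3 ≤ i.val ∧ w s ≤ w i)) := by
      intro hcontra
      exact (Finset.mem_compl.mp hi)
        (Finset.mem_filter.mpr ⟨Finset.mem_univ _, hcontra⟩)
    push_neg at hi'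
    obtain ⟨his, hiU⟩ := hi'
    have hx' := (Finset.mem_filter.mp hx).2
    rcases hx' with rfl | ⟨hx3, hxw⟩
    · by_cases hi3 : i.val < 3
      · exact absurd hR (hsrc i hi3 his)
      · push_neg at hi3
        have h4 := (tailR i x (Or.inl hi3)).mp hR
        have h5 := hiU hi3
        linarith
    · by_cases hi3 : i.val < 3
      · exact ⟨x, i, hx3, hi3, his, hxw, (tailR i x (Or.inr hx3)).mp hR⟩
      · push_neg at hi3
        have h4 := (tailR i x (Or.inl hi3)).mp hR
        have h5 := hiU hi3
        linarith
  -- (4) fixing a sink of the head tournament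
  have sink_fix : ∀ t : Fin n, t.val < 3 →
      (∀ y : Fin n, y.val < 3 → y ≠ t → ¬ (A t y ≤ w t / w y)) →
      ∃ u b : Fin n, 3 ≤ u.val ∧ b.val < 3 ∧ b ≠ t ∧ w b ≤ w u ∧ w u ≤ w t := by
    intro t ht3 hsnk
    set S := Finset.univ.filter
      (fun x : Fin n => ¬ (x = t ∨ (3 ≤ x.val ∧ w x ≤ w t))) with hSdef
    obtain ⟨s, hs3, hst⟩ : ∃ s : Fin n, s.val < 3 ∧ s ≠ t := by
      by_cases h : t.val = 0
      · refine ⟨⟨1, by omega⟩, by simp, fun hE => ?_⟩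
        have := congrArg Fin.val hE
        simp at this
        omega
      · refine ⟨⟨0, by omega⟩, by simp, fun hE => ?_⟩
        have := congrArg Fin.val hE
        simp at this
        omega
    have h1 : s ∈ S := by
      simp only [hSdef, Finset.mem_filter, Finset.mem_univ, true_and, not_or]
      exact ⟨hst, by rintro ⟨h3, -⟩; omega⟩
    have h2 : t ∈ Sᶜ := by
      simp [hSdef]
    obtain ⟨i, hi, x, hx, hR⟩ := NC S ⟨s, h1⟩ ⟨t, h2⟩
    have hi' : i = t ∨ (3 ≤ i.val ∧ w i ≤ w t) := by
      have := Finset.mem_compl.mp hi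
      simp only [hSdef, Finset.mem_filter, Finset.mem_univ, true_and, not_not] at this
      exact this
    have hx' : ¬ (x = t ∨ (3 ≤ x.val ∧ w x ≤ w t)) := (Finset.mem_filter.mp hx).2
    push_neg at hx'
    obtain ⟨hxt, hxU⟩ := hx'
    rcases hi' with rfl | ⟨hi3, hiw⟩
    · by_cases hx3 : x.val < 3
      · exact absurd hR (hsnk x hx3 hxt)
      · push_neg at hx3
        have h4 := (tailR i x (Or.inr hx3)).mp hR
        have h5 := hxU hx3
        linarith
    · by_cases hx3 : x.val < 3
      · exact ⟨i, x, hi3, hx3, hxt, (tailR i x (Or.inl hi3)).mp hR, hiw⟩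
      · push_neg at hx3
        have h4 := (tailR i x (Or.inl hi3)).mp hR
        have h5 := hxU hx3
        linarith
  -- small helpers
  have vne : ∀ {y z : Fin n}, y ≠ z → y.val ≠ z.val := fun h hv => h (Fin.ext hv)
  have other : ∀ s : Fin n, ∃ t : Fin n, t.val < 3 ∧ t ≠ s := by
    intro s
    by_cases h : s.val = 0
    · refine ⟨⟨1, by omega⟩, by simp, fun hE => ?_⟩
      have := congrArg Fin.val hE
      simp at this
      omega
    · refine ⟨⟨0, by omega⟩, by simp, fun hE => ?_⟩
      have := congrArg Fin.val hE
      simp at this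
      omega
  have third : ∀ y z : Fin n, y.val < 3 → z.val < 3 → y.val ≠ z.val →
      ∃ c : Fin n, c.val < 3 ∧ c.val ≠ y.val ∧ c.val ≠ z.val := by
    intro y z hy hz hyz
    refine ⟨⟨3 - y.val - z.val, by omega⟩, ?_, ?_, ?_⟩
    · show 3 - y.val - z.val < 3; omega
    · show 3 - y.val - z.val ≠ y.val; omega
    · show 3 - y.val - z.val ≠ z.val; omega
  have mkArcTT : ∀ (j y z : Fin n), y.val < 3 → z.val < 3 → (A y z ≤ w y / w z) →
      A (E j (L y)) (E j (L z)) ≤ w (E j (L y)) / w (E j (L z)) := by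
    intro j y z hy hz h
    rw [hEL j y hy, hEL j z hz]
    exact h
  have mkArcT3 : ∀ (j y : Fin n), 3 ≤ j.val → y.val < 3 → w j ≤ w y →
      A (E j (L y)) (E j 3) ≤ w (E j (L y)) / w (E j 3) := by
    intro j y hj hy h
    rw [hEL j y hy, hE3 j]
    exact (tailR y j (Or.inr hj)).mpr h
  have mkArc3T : ∀ (j y : Fin n), 3 ≤ j.val → y.val < 3 → w y ≤ w j →
      A (E j 3) (E j (L y)) ≤ w (E j 3) / w (E j (L y)) := by
    intro j y hj hy h
    rw [hEL j y hy, hE3 j]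
    exact (tailR j y (Or.inl hj)).mpr h
  have h3v : (3 : Fin 4).val = 3 := rfl
  have cover3 : ∀ (y1 y2 y3 : Fin n), y1.val < 3 → y2.val < 3 → y3.val < 3 →
      y1.val ≠ y2.val → y1.val ≠ y3.val → y2.val ≠ y3.val →
      ∀ p : Fin 4, p = L y1 ∨ p = L y2 ∨ p = L y3 ∨ p = 3 := by
    intro y1 y2 y3 h1 h2 h3 h12 h13 h23 p
    have hp4 : p.val < 4 := p.isLt
    have hL1 := hLval y1 h1
    have hL2 := hLval y2 h2
    have hL3 := hLval y3 h3
    rcases (by omega : p.val = y1.val ∨ p.val = y2.val ∨ p.val = y3.val ∨ p.val = 3)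
      with h | h | h | h
    · exact Or.inl (Fin.ext (by omega))
    · exact Or.inr (Or.inl (Fin.ext (by omega)))
    · exact Or.inr (Or.inr (Or.inl (Fin.ext (by omega))))
    · exact Or.inr (Or.inr (Or.inr (Fin.ext (by omega))))
  -- main case analysis on sources and sinks of the head tournament
  by_cases hsrc : ∃ s : Fin n, s.val < 3 ∧
      ∀ y : Fin n, y.val < 3 → y ≠ s → ¬ (A y s ≤ w y / w s)
  · by_cases hsnk : ∃ t : Fin n, t.val < 3 ∧
        ∀ y : Fin n, y.val < 3 → y ≠ t → ¬ (A t y ≤ w t / w y)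
    · -- both a source and a sink
      obtain ⟨s, hs3, hsP⟩ := hsrc
      obtain ⟨t, ht3, htP⟩ := hsnk
      have hst : s ≠ t := by
        rintro rfl
        obtain ⟨y, hy3, hys⟩ := other s
        rcases semi y s with h | h
        · exact hsP y hy3 hys h
        · exact htP y hy3 hys h
      obtain ⟨u₁, a, hu₁3, ha3, has, hsu₁, hu₁a⟩ := source_fix s hs3 hsP
      obtain ⟨u₂, b, hu₂3, hb3, hbt, hbu₂, hu₂t⟩ := sink_fix t ht3 htP
      obtain ⟨u, hu3, hsu, hut⟩ : ∃ u : Fin n, 3 ≤ u.val ∧ w s ≤ w u ∧ w u ≤ w t := by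
        by_cases h1 : w u₁ ≤ w t
        · exact ⟨u₁, hu₁3, hsu₁, h1⟩
        by_cases h2 : w s ≤ w u₂
        · exact ⟨u₂, hu₂3, h2, hu₂t⟩
        push_neg at h1 h2
        have hat : a ≠ t := by rintro rfl; linarith
        have hbs : b ≠ s := by rintro rfl; linarith
        have hab : a = b := Fin.ext (by
          have e1 := vne has
          have e2 := vne hat
          have e3 := vne hbt
          have e4 := vne hbs
          have e5 := vne hst
          omega)
        rw [hab] at hu₁a
        linarith
      obtain ⟨c, hc3, hcs, hct⟩ := third s t hs3 ht3 (vne hst)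
      have hcs' : c ≠ s := fun h => hcs (congrArg Fin.val h)
      have hct' : c ≠ t := fun h => hct (congrArg Fin.val h)
      have hRsc : A s c ≤ w s / w c := by
        rcases semi c s with h | h
        · exact absurd h (hsP c hc3 hcs')
        · exact h
      have hRct : A c t ≤ w c / w t := by
        rcases semi t c with h | h
        · exact absurd h (htP c hc3 hct')
        · exact h
      apply key u hu3
      apply cycle4 _ (L s) (L c) (L t) (3 : Fin 4)
      · exact mkArcTT u s c hs3 hc3 hRsc
      · exact mkArcTT u c t hc3 ht3 hRct
      · exact mkArcT3 u t hu3 ht3 hut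
      · exact mkArc3T u s hu3 hs3 hsu
      · exact cover3 s c t hs3 hc3 ht3 (Ne.symm hcs) (vne hst) hct
    · -- a source but no sink
      push_neg at hsnk
      obtain ⟨s, hs3, hsP⟩ := hsrc
      obtain ⟨u, a, hu3, ha3, has, hsu, hua⟩ := source_fix s hs3 hsP
      obtain ⟨x, hx3, hxs, hxa⟩ := third s a hs3 ha3 (Ne.symm (vne has))
      have hxs' : x ≠ s := fun h => hxs (congrArg Fin.val h)
      have hRsx : A s x ≤ w s / w x := by
        rcases semi x s with h | h
        · exact absurd h (hsP x hx3 hxs')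
        · exact h
      have hRxa : A x a ≤ w x / w a := by
        obtain ⟨z, hz3, hzx, hz⟩ := hsnk x hx3
        have hzs : z ≠ s := by rintro rfl; exact hsP x hx3 hxs' hz
        have hza : z = a := Fin.ext (by
          have e1 := vne hzx
          have e2 := vne hzs
          have e3 := vne has
          omega)
        rw [hza] at hz
        exact hz
      apply key u hu3
      apply cycle4 _ (L s) (L x) (L a) (3 : Fin 4)
      · exact mkArcTT u s x hs3 hx3 hRsx
      · exact mkArcTT u x a hx3 ha3 hRxa
      · exact mkArcT3 u a hu3 ha3 hua
      · exact mkArc3T u s hu3 hs3 hsu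
      · exact cover3 s x a hs3 hx3 ha3 (Ne.symm hxs) (Ne.symm (vne has)) hxa
  · by_cases hsnk : ∃ t : Fin n, t.val < 3 ∧
        ∀ y : Fin n, y.val < 3 → y ≠ t → ¬ (A t y ≤ w t / w y)
    · -- a sink but no source
      push_neg at hsrc
      obtain ⟨t, ht3, htP⟩ := hsnk
      obtain ⟨u, b, hu3, hb3, hbt, hbu, hut⟩ := sink_fix t ht3 htP
      obtain ⟨x, hx3, hxt, hxb⟩ := third t b ht3 hb3 (Ne.symm (vne hbt))
      have hxt' : x ≠ t := fun h => hxt (congrArg Fin.val h)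
      have hRxt : A x t ≤ w x / w t := by
        rcases semi t x with h | h
        · exact absurd h (htP x hx3 hxt')
        · exact h
      have hRbx : A b x ≤ w b / w x := by
        obtain ⟨z, hz3, hzx, hz⟩ := hsrc x hx3
        have hzt : z ≠ t := by rintro rfl; exact htP x hx3 hxt' hz
        have hzb : z = b := Fin.ext (by
          have e1 := vne hzx
          have e2 := vne hzt
          have e3 := vne hbt
          omega)
        rw [hzb] at hz
        exact hz
      apply key u hu3
      apply cycle4 _ (L b) (L x) (L t) (3 : Fin 4)
      · exact mkArcTT u b x hb3 hx3 hRbx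
      · exact mkArcTT u x t hx3 ht3 hRxt
      · exact mkArcT3 u t hu3 ht3 hut
      · exact mkArc3T u b hu3 hb3 hbu
      · exact cover3 b x t hb3 hx3 ht3 (Ne.symm hxb) (vne hbt) hxt
    · -- neither a source nor a sink
      push_neg at hsrc hsnk
      apply key uM huM3
      have reachT : ∀ p q : Fin n, p.val < 3 → q.val < 3 →
          Relation.ReflTransGen
            (fun a b => A (E uM a) (E uM b) ≤ w (E uM a) / w (E uM b)) (L p) (L q) := by
        intro p q hp hq
        by_cases hpq : p = q
        · rw [hpq]
        · by_cases hR : A p q ≤ w p / w q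
          · exact Relation.ReflTransGen.single (mkArcTT uM p q hp hq hR)
          · obtain ⟨z, hz3, hzp, hz⟩ := hsnk p hp
            have hzq : z ≠ q := by rintro rfl; exact hR hz
            obtain ⟨y, hy3, hyq, hy⟩ := hsrc q hq
            have hyp : y ≠ p := by rintro rfl; exact hR hy
            have hyz : y = z := Fin.ext (by
              have e1 := vne hzp
              have e2 := vne hzq
              have e3 := vne hyq
              have e4 := vne hyp
              have e5 := vne hpq
              omega)
            rw [hyz] at hy
            refine Relation.ReflTransGen.trans (b := L z)
              (Relation.ReflTransGen.single ?_) (Relation.ReflTransGen.single ?_)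
            · exact mkArcTT uM p z hp hz3 hz
            · exact mkArcTT uM z q hz3 hq hy
      have harcip := mkArcT3 uM ip huM3 hip3 (hipw uM huM3)
      have harcim := mkArc3T uM im huM3 him3 (himw uM huM3)
      have hsplit : ∀ p : Fin 4, p = 3 ∨ ∃ y : Fin n, y.val < 3 ∧ p = L y := by
        intro p
        by_cases h : p.val < 3
        · right
          refine ⟨⟨p.val, by omega⟩, h, Fin.ext ?_⟩
          rw [hLval _ h]
        · left
          apply Fin.ext
          have h4 := p.isLt
          omega
      intro p q
      rcases hsplit p with rfl | ⟨y, hy, rfl⟩ <;> rcases hsplit q with rfl | ⟨z, hz, rfl⟩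
      · exact Relation.ReflTransGen.refl
      · refine Relation.ReflTransGen.trans
          (Relation.ReflTransGen.single ?_) (reachT im z him3 hz)
        exact harcim
      · refine Relation.ReflTransGen.trans
          (reachT y ip hy hip3) (Relation.ReflTransGen.single ?_)
        exact harcip
      · exact reachT y z hy hz
end

section
/- Let A be the n-by-n reciprocal matrix of block form [[B, J],[J, J]] with B a 3-by-3 reciprocal matrix and n >= 4. Then a positive vector v is efficient for A if and only if v = (I_3 ⊕ P) w for some (n-3)-by-(n-3) permutation matrix P and some vector w efficient for A with w[{1,2,3,4}] efficient for A[{1,2,3,4}]. -/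
open Relation

def Arc {m : ℕ} (A : Matrix (Fin m) (Fin m) ℝ) (v : Fin m → ℝ) (a b : Fin m) : Prop :=
  A a b * v b ≤ v a

lemma sc_implies_efficient {m : ℕ} (A : Matrix (Fin m) (Fin m) ℝ) (v : Fin m → ℝ)
    (hv : ∀ i, 0 < v i) (hSC : ∀ a b, ReflTransGen (Arc A v) a b) :
    Efficient A v := by
  refine ⟨hv, ?_⟩
  intro v' hv' hdom i j
  have key : ∀ a b : Fin m, ReflTransGen (Arc A v) a b → v' a * v b ≤ v a * v' b := by
    intro a b hab
    induction hab using ReflTransGen.head_induction_on with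
    | refl => rw [mul_comm]
    | @head a c hac _ ih =>
      have hAle : A a c ≤ v a / v c := (le_div_iff₀ (hv c)).2 hac
      have h1 := hdom a c
      have h2 : v' a / v' c - A a c ≤ |A a c - v' a / v' c| := by
        rw [abs_sub_comm]; exact le_abs_self _
      have hr : |A a c - v a / v c| = v a / v c - A a c := by
        rw [abs_sub_comm]; exact abs_of_nonneg (by linarith)
      have hle : v' a / v' c ≤ v a / v c := by rw [hr] at h1; linarith
      have harc : v' a * v c ≤ v a * v' c := by
        rw [div_le_div_iff₀ (hv' c) (hv c)] at hle; linarith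
      have hmul := mul_le_mul harc ih
        (mul_nonneg (hv' c).le (hv b).le) (mul_nonneg (hv a).le (hv' c).le)
      have hpos : 0 < v c * v' c := mul_pos (hv c) (hv' c)
      have hfin : v' a * v b * (v c * v' c) ≤ v a * v' b * (v c * v' c) := by nlinarith [hmul]
      exact le_of_mul_le_mul_right hfin hpos
  have h1 := key i j (hSC i j)
  have h2 := key j i (hSC j i)
  have heq : v' i * v j = v i * v' j := le_antisymm h1 (by nlinarith)
  rw [div_eq_div_iff (ne_of_gt (hv' j)) (ne_of_gt (hv j))]
  exact heq

lemma efficient_implies_sc {m : ℕ} (A : Matrix (Fin m) (Fin m) ℝ) (v : Fin m → ℝ)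
    (hA : Reciprocal A) (heff : Efficient A v) :
    ∀ a b, ReflTransGen (Arc A v) a b := by
  obtain ⟨hApos, hArec⟩ := hA
  have hv := heff.1
  by_contra hcon
  push_neg at hcon
  obtain ⟨a, b, hab⟩ := hcon
  classical
  set S : Finset (Fin m) := Finset.univ.filter (fun c => ReflTransGen (Arc A v) c b) with hSdef
  have hbS : b ∈ S := by simp only [hSdef, Finset.mem_filter, Finset.mem_univ, true_and]; exact ReflTransGen.refl
  have haS : a ∉ S := by simp [hSdef, hab]
  have hclosed : ∀ k ∈ S, ∀ c, Arc A v c k → c ∈ S := by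
    intro k hk c hck
    simp only [hSdef, Finset.mem_filter, Finset.mem_univ, true_and] at hk ⊢
    exact ReflTransGen.head hck hk
  have hnoarc : ∀ c ∉ S, ∀ k ∈ S, ¬ Arc A v c k := fun c hc k hk harc => hc (hclosed k hk c harc)
  set F : Finset (Fin m × Fin m) := (Finset.univ.filter (· ∉ S)) ×ˢ S with hFdef
  have hFne : F.Nonempty :=
    ⟨(a, b), Finset.mem_product.mpr ⟨Finset.mem_filter.mpr ⟨Finset.mem_univ a, haS⟩, hbS⟩⟩
  set g : Fin m × Fin m → ℝ := fun p => A p.1 p.2 * v p.2 / v p.1 with hgdef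
  set c' : ℝ := F.inf' hFne g with hc'def
  have hc'le : ∀ c ∉ S, ∀ k ∈ S, c' ≤ A c k * v k / v c := by
    intro c hc k hk
    have hm : (c, k) ∈ F := Finset.mem_product.mpr
      ⟨Finset.mem_filter.mpr ⟨Finset.mem_univ c, hc⟩, hk⟩
    exact Finset.inf'_le g hm
  have hc'gt : 1 < c' := by
    rw [hc'def, Finset.lt_inf'_iff]
    rintro ⟨c, k⟩ hm
    simp only [hFdef, Finset.mem_product, Finset.mem_filter, Finset.mem_univ, true_and] at hm
    have hlt := hnoarc c hm.1 k hm.2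
    simp only [Arc, not_le] at hlt
    rw [hgdef]
    simp only
    rw [lt_div_iff₀ (hv c), one_mul]
    exact hlt
  have hc'pos : (0:ℝ) < c' := lt_trans one_pos hc'gt
  have hc'le' : ∀ c ∉ S, ∀ k ∈ S, c' * v c ≤ A c k * v k := by
    intro c hc k hk
    have h := hc'le c hc k hk
    rw [le_div_iff₀ (hv c)] at h
    linarith
  set v' : Fin m → ℝ := fun k => if k ∈ S then v k else c' * v k with hv'def
  have hvin : ∀ k, k ∈ S → v' k = v k := fun k hk => by simp [hv'def, hk]
  have hvout : ∀ k, k ∉ S → v' k = c' * v k := fun k hk => by simp [hv'def, hk]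
  have hv'pos : ∀ i, 0 < v' i := by
    intro i
    by_cases hi : i ∈ S
    · rw [hvin i hi]; exact hv i
    · rw [hvout i hi]; exact mul_pos hc'pos (hv i)
  have hdom : ∀ i j, |A i j - v' i / v' j| ≤ |A i j - v i / v j| := by
    intro i j
    by_cases hi : i ∈ S <;> by_cases hj : j ∈ S
    · rw [hvin i hi, hvin j hj]
    · -- i ∈ S, j ∉ S
      rw [hvin i hi, hvout j hj]
      have hnum : c' * v j ≤ A j i * v i := hc'le' j hj i hi
      have hAji : A j i = (A i j)⁻¹ := hArec i j
      have hA1 : A i j ≤ v i / (c' * v j) := by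
        rw [le_div_iff₀ (mul_pos hc'pos (hv j))]
        have h2 := mul_le_mul_of_nonneg_right hnum (hApos i j).le
        rw [hAji] at h2
        calc A i j * (c' * v j) = c' * v j * A i j := by ring
        _ ≤ (A i j)⁻¹ * v i * A i j := h2
        _ = v i * ((A i j)⁻¹ * A i j) := by ring
        _ = v i := by rw [inv_mul_cancel₀ (ne_of_gt (hApos i j)), mul_one]
      have hA2 : v i / (c' * v j) ≤ v i / v j := by
        gcongr
        · exact (hv i).le
        · exact hv j
        · exact le_mul_of_one_le_left (hv j).le hc'gt.le
      have hA3 : A i j ≤ v i / v j := le_trans hA1 hA2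
      rw [abs_sub_comm, abs_of_nonneg (by linarith), abs_sub_comm, abs_of_nonneg (by linarith)]
      linarith
    · -- i ∉ S, j ∈ S
      rw [hvout i hi, hvin j hj]
      have hnum : c' * v i ≤ A i j * v j := hc'le' i hi j hj
      have hlt : v i < A i j * v j := by
        have h := hnoarc i hi j hj; simpa [Arc, not_le] using h
      have hB1 : c' * v i / v j ≤ A i j := by
        rw [div_le_iff₀ (hv j)]; linarith
      have hB2 : v i / v j ≤ c' * v i / v j := by
        rw [mul_div_assoc]
        exact le_mul_of_one_le_left (div_pos (hv i) (hv j)).le hc'gt.le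
      have hB3 : v i / v j ≤ A i j := le_trans hB2 hB1
      rw [abs_of_nonneg (by linarith), abs_of_nonneg (by linarith)]
      linarith
    · rw [hvout i hi, hvout j hj, mul_div_mul_left _ _ (ne_of_gt hc'pos)]
  have hres := heff.2 v' hv'pos hdom a b
  rw [hvout a haS, hvin b hbS] at hres
  have hposr : 0 < v a / v b := div_pos (hv a) (hv b)
  rw [mul_div_assoc] at hres
  nlinarith

lemma efficient_perm {m : ℕ} (A : Matrix (Fin m) (Fin m) ℝ) (w : Fin m → ℝ)
    (σ : Equiv.Perm (Fin m)) (hσ : ∀ i j, A (σ i) (σ j) = A i j)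
    (heff : Efficient A w) : Efficient A (w ∘ σ.symm) := by
  obtain ⟨hw, heff⟩ := heff
  refine ⟨fun i => hw _, ?_⟩
  intro v' hv' hdom i j
  have key := heff (v' ∘ σ) (fun i => hv' _) ?_
  · have h1 := key (σ.symm i) (σ.symm j)
    simpa [Function.comp, Equiv.apply_symm_apply] using h1
  · intro i j
    have h := hdom (σ i) (σ j)
    simpa [Function.comp, hσ, Equiv.symm_apply_apply] using h

lemma sc_iff_closed {α : Type*} (R : α → α → Prop) :
    (∀ a b, ReflTransGen R a b) ↔
      ∀ S : Set α, S.Nonempty → (∀ k ∈ S, ∀ c, R c k → c ∈ S) → S = Set.univ := by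
  constructor
  · intro h S hS hcl
    obtain ⟨b, hb⟩ := hS
    ext a; simp only [Set.mem_univ, iff_true]
    have key : ∀ a, ReflTransGen R a b → a ∈ S := by
      intro a hab
      induction hab using ReflTransGen.head_induction_on with
      | refl => exact hb
      | head hac _ ih => exact hcl _ ih _ hac
    exact key a (h a b)
  · intro h a b
    have h2 := h {c | ReflTransGen R c b} ⟨b, ReflTransGen.refl⟩
      (fun k hk c hck => ReflTransGen.head hck hk)
    have h3 : a ∈ {c | ReflTransGen R c b} := h2 ▸ Set.mem_univ a
    exact h3

section Struct

variable {n : ℕ} (A : Matrix (Fin n) (Fin n) ℝ) (v : Fin n → ℝ)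

lemma tour (hA : (∀ i j, 0 < A i j) ∧ ∀ i j, A j i = (A i j)⁻¹) :
    ∀ i j, Arc A v i j ∨ Arc A v j i := by
  intro i j
  by_cases h : Arc A v i j
  · exact Or.inl h
  · right
    simp only [Arc, not_le] at h
    show A j i * v i ≤ v j
    rw [hA.2 i j, inv_mul_eq_div, div_le_iff₀ (hA.1 i j)]
    nlinarith [hA.1 i j]

lemma reach_tail_target (hblock : ∀ i j : Fin n, 3 ≤ i.val ∨ 3 ≤ j.val → A i j = 1) : ∀ a b : Fin n, ReflTransGen (Arc A v) a b → 3 ≤ b.val →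
    (3 ≤ a.val ∧ v b ≤ v a) ∨ ∃ u : Fin n, u.val < 3 ∧ v b ≤ v u := by
  intro a b hr hb
  induction hr using ReflTransGen.head_induction_on with
  | refl => exact Or.inl ⟨hb, le_refl _⟩
  | @head a c hac _ ih =>
    rcases ih with ⟨hc3, hvc⟩ | ⟨u, hu⟩
    · have h1 : A a c = 1 := hblock a c (Or.inr hc3)
      have h2 : v c ≤ v a := by
        have := hac; rw [Arc, h1, one_mul] at this; exact this
      by_cases ha : 3 ≤ a.val
      · exact Or.inl ⟨ha, le_trans hvc h2⟩
      · exact Or.inr ⟨a, by omega, le_trans hvc h2⟩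
    · exact Or.inr ⟨u, hu⟩

lemma reach_tail_source (hblock : ∀ i j : Fin n, 3 ≤ i.val ∨ 3 ≤ j.val → A i j = 1) : ∀ a b : Fin n, ReflTransGen (Arc A v) a b → 3 ≤ a.val →
    (3 ≤ b.val ∧ v b ≤ v a) ∨ ∃ u : Fin n, u.val < 3 ∧ v u ≤ v a := by
  intro a b hr ha
  induction hr with
  | refl => exact Or.inl ⟨ha, le_refl _⟩
  | @tail c b hrc hcb ih =>
    rcases ih with ⟨hc3, hvc⟩ | ⟨u, hu⟩
    · have h1 : A c b = 1 := hblock c b (Or.inl hc3)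
      have h2 : v b ≤ v c := by
        have := hcb; rw [Arc, h1, one_mul] at this; exact this
      by_cases hb : 3 ≤ b.val
      · exact Or.inl ⟨hb, le_trans h2 hvc⟩
      · exact Or.inr ⟨b, by omega, le_trans h2 hvc⟩
    · exact Or.inr ⟨u, hu⟩

lemma router (hblock : ∀ i j : Fin n, 3 ≤ i.val ∨ 3 ≤ j.val → A i j = 1) (hSC : ∀ a b, ReflTransGen (Arc A v) a b)
    (S : Set (Fin n)) (hShead : ∀ i ∈ S, i.val < 3) (hSne : S.Nonempty)
    (hout : ∃ i : Fin n, i.val < 3 ∧ i ∉ S)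
    (hnoarc : ∀ j ∈ S, ∀ i : Fin n, i.val < 3 → i ∉ S → ¬ Arc A v i j) :
    ∃ t : Fin n, 3 ≤ t.val ∧ (∃ i : Fin n, i.val < 3 ∧ i ∉ S ∧ v t ≤ v i) ∧
      ∃ j ∈ S, v j ≤ v t := by
  by_contra hcon
  set T : Set (Fin n) := S ∪ {s : Fin n | 3 ≤ s.val ∧ ∃ j ∈ S, v j ≤ v s} with hTdef
  have hTne : T.Nonempty := hSne.mono Set.subset_union_left
  have hTcl : ∀ k ∈ T, ∀ c, Arc A v c k → c ∈ T := by
    intro k hk c hck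
    rcases hk with hkS | ⟨hk3, j, hjS, hjv⟩
    · by_cases hc3 : c.val < 3
      · by_cases hcS : c ∈ S
        · exact Or.inl hcS
        · exact absurd hck (hnoarc k hkS c hc3 hcS)
      · have h1 : A c k = 1 := hblock c k (Or.inl (by omega))
        have h2 : v k ≤ v c := by rw [Arc, h1, one_mul] at hck; exact hck
        exact Or.inr ⟨by omega, k, hkS, h2⟩
    · have h1 : A c k = 1 := hblock c k (Or.inr hk3)
      have h2 : v k ≤ v c := by rw [Arc, h1, one_mul] at hck; exact hck
      by_cases hc3 : c.val < 3
      · by_cases hcS : c ∈ S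
        · exact Or.inl hcS
        · exact absurd ⟨k, hk3, ⟨c, hc3, hcS, h2⟩, j, hjS, hjv⟩ hcon
      · exact Or.inr ⟨by omega, j, hjS, le_trans hjv h2⟩
  have hTuniv := (sc_iff_closed (Arc A v)).1 hSC T hTne hTcl
  obtain ⟨i, hi3, hiS⟩ := hout
  have : i ∈ T := hTuniv ▸ Set.mem_univ i
  rcases this with h | ⟨h3, _⟩
  · exact hiS h
  · omega

end Struct

section Struct2

variable {n : ℕ} (A : Matrix (Fin n) (Fin n) ℝ) (v : Fin n → ℝ)

def Kcond (a b c t : Fin n) : Prop :=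
  (Arc A v b a ∨ Arc A v c a ∨ v a ≤ v t) ∧
  (Arc A v a b ∨ Arc A v c b ∨ v b ≤ v t) ∧
  (Arc A v a c ∨ Arc A v b c ∨ v c ≤ v t) ∧
  (Arc A v b a ∨ Arc A v c a ∨ v t ≤ v b ∨ v t ≤ v c) ∧
  (Arc A v a b ∨ Arc A v c b ∨ v t ≤ v a ∨ v t ≤ v c) ∧
  (Arc A v a c ∨ Arc A v b c ∨ v t ≤ v a ∨ v t ≤ v b) ∧
  (Arc A v c a ∨ Arc A v c b ∨ v a ≤ v t ∨ v b ≤ v t) ∧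
  (Arc A v b a ∨ Arc A v b c ∨ v a ≤ v t ∨ v c ≤ v t) ∧
  (Arc A v a b ∨ Arc A v a c ∨ v b ≤ v t ∨ v c ≤ v t) ∧
  (Arc A v c a ∨ Arc A v c b ∨ v t ≤ v c) ∧
  (Arc A v b a ∨ Arc A v b c ∨ v t ≤ v b) ∧
  (Arc A v a b ∨ Arc A v a c ∨ v t ≤ v a)

lemma choose_two (a b c s1 s2 : Fin n)
    (h1a : v a ≤ v s1) (h1bc : v s1 ≤ v b ∨ v s1 ≤ v c)
    (h2ab : v a ≤ v s2 ∨ v b ≤ v s2) (h2c : v s2 ≤ v c) :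
    ∃ t, (t = s1 ∨ t = s2) ∧ v a ≤ v t ∧ v t ≤ v c := by
  by_cases h : v s1 ≤ v c
  · exact ⟨s1, Or.inl rfl, h1a, h⟩
  · have hb : v s1 ≤ v b := h1bc.resolve_right h
    rcases h2ab with h2 | h2
    · exact ⟨s2, Or.inr rfl, h2, h2c⟩
    · exact ⟨s2, Or.inr rfl, le_trans (le_trans h1a hb) h2, h2c⟩

lemma router_single (hblock : ∀ i j : Fin n, 3 ≤ i.val ∨ 3 ≤ j.val → A i j = 1)
    (hSC : ∀ a b, ReflTransGen (Arc A v) a b)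
    (a b c : Fin n) (ha3 : a.val < 3) (hb3 : b.val < 3) (hba : b ≠ a)
    (hall : ∀ i : Fin n, i.val < 3 → i = a ∨ i = b ∨ i = c)
    (h1 : ¬ Arc A v b a) (h2 : ¬ Arc A v c a) :
    ∃ t : Fin n, 3 ≤ t.val ∧ v a ≤ v t ∧ (v t ≤ v b ∨ v t ≤ v c) := by
  obtain ⟨t, ht3, ⟨i, hi3, hiS, hti⟩, j, hjS, hjt⟩ :=
    router A v hblock hSC {a}
      (fun i hi => by rw [Set.mem_singleton_iff] at hi; subst hi; exact ha3)
      (Set.singleton_nonempty a) ⟨b, hb3, by simpa using hba⟩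
      (by
        intro j hj i hi3 hiS
        rw [Set.mem_singleton_iff] at hj; subst hj
        rcases hall i hi3 with h | h | h
        · exact absurd h (by simpa using hiS)
        · subst h; exact h1
        · subst h; exact h2)
  rw [Set.mem_singleton_iff] at hjS
  subst hjS
  refine ⟨t, ht3, hjt, ?_⟩
  have hine : i ≠ j := by simpa using hiS
  rcases hall i hi3 with h | h | h
  · exact absurd h hine
  · subst h; exact Or.inl hti
  · subst h; exact Or.inr hti

lemma router_pair (hblock : ∀ i j : Fin n, 3 ≤ i.val ∨ 3 ≤ j.val → A i j = 1)
    (hSC : ∀ a b, ReflTransGen (Arc A v) a b)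
    (a b c : Fin n) (ha3 : a.val < 3) (hb3 : b.val < 3) (hc3 : c.val < 3)
    (hca : c ≠ a) (hcb : c ≠ b)
    (hall : ∀ i : Fin n, i.val < 3 → i = a ∨ i = b ∨ i = c)
    (h1 : ¬ Arc A v c a) (h2 : ¬ Arc A v c b) :
    ∃ t : Fin n, 3 ≤ t.val ∧ (v a ≤ v t ∨ v b ≤ v t) ∧ v t ≤ v c := by
  obtain ⟨t, ht3, ⟨i, hi3, hiS, hti⟩, j, hjS, hjt⟩ :=
    router A v hblock hSC {a, b}
      (by
        intro i hi
        rcases hi with h | h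
        · subst h; exact ha3
        · rw [Set.mem_singleton_iff] at h; subst h; exact hb3)
      ⟨a, Set.mem_insert a _⟩
      ⟨c, hc3, by simp [hca, hcb]⟩
      (by
        intro j hj i hi3 hiS
        have hine : i ≠ a ∧ i ≠ b := by simpa using hiS
        rcases hall i hi3 with h | h | h
        · exact absurd h hine.1
        · exact absurd h hine.2
        · subst h
          rcases hj with h | h
          · subst h; exact h1
          · rw [Set.mem_singleton_iff] at h; subst h; exact h2)
  refine ⟨t, ht3, ?_, ?_⟩
  · rcases hjS with h | h
    · subst h; exact Or.inl hjt
    · rw [Set.mem_singleton_iff] at h; subst h; exact Or.inr hjt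
  · have hine : i ≠ a ∧ i ≠ b := by simpa using hiS
    rcases hall i hi3 with h | h | h
    · exact absurd h hine.1
    · exact absurd h hine.2
    · subst h; exact hti

end Struct2

section Khelpers
variable {n : ℕ} (A : Matrix (Fin n) (Fin n) ℝ) (v : Fin n → ℝ) {a b c t : Fin n}

lemma Kswap1 (h : Kcond A v a b c t) : Kcond A v b a c t := by
  obtain ⟨k1, k2, k3, k4, k5, k6, k7, k8, k9, k10, k11, k12⟩ := h
  refine ⟨k2, k1, ?_, k5, k4, ?_, ?_, k9, k8, ?_, k12, k11⟩
  · rcases k3 with x | x | x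
    exacts [Or.inr (Or.inl x), Or.inl x, Or.inr (Or.inr x)]
  · rcases k6 with x | x | x | x
    exacts [Or.inr (Or.inl x), Or.inl x, Or.inr (Or.inr (Or.inr x)),
      Or.inr (Or.inr (Or.inl x))]
  · rcases k7 with x | x | x | x
    exacts [Or.inr (Or.inl x), Or.inl x, Or.inr (Or.inr (Or.inr x)),
      Or.inr (Or.inr (Or.inl x))]
  · rcases k10 with x | x | x
    exacts [Or.inr (Or.inl x), Or.inl x, Or.inr (Or.inr x)]

lemma Kswap2 (h : Kcond A v a b c t) : Kcond A v a c b t := by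
  obtain ⟨k1, k2, k3, k4, k5, k6, k7, k8, k9, k10, k11, k12⟩ := h
  refine ⟨?_, k3, k2, ?_, k6, k5, k8, k7, ?_, k11, k10, ?_⟩
  · rcases k1 with x | x | x
    exacts [Or.inr (Or.inl x), Or.inl x, Or.inr (Or.inr x)]
  · rcases k4 with x | x | x | x
    exacts [Or.inr (Or.inl x), Or.inl x, Or.inr (Or.inr (Or.inr x)),
      Or.inr (Or.inr (Or.inl x))]
  · rcases k9 with x | x | x | x
    exacts [Or.inr (Or.inl x), Or.inl x, Or.inr (Or.inr (Or.inr x)),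
      Or.inr (Or.inr (Or.inl x))]
  · rcases k12 with x | x | x
    exacts [Or.inr (Or.inl x), Or.inl x, Or.inr (Or.inr x)]

lemma K_nocut (d_a : Arc A v b a ∨ Arc A v c a) (d_b : Arc A v a b ∨ Arc A v c b)
    (d_c : Arc A v a c ∨ Arc A v b c) (q_ab : Arc A v c a ∨ Arc A v c b)
    (q_ac : Arc A v b a ∨ Arc A v b c) (q_bc : Arc A v a b ∨ Arc A v a c) :
    Kcond A v a b c t :=
  ⟨d_a.imp_right Or.inl, d_b.imp_right Or.inl, d_c.imp_right Or.inl,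
   d_a.imp_right Or.inl, d_b.imp_right Or.inl, d_c.imp_right Or.inl,
   q_ab.imp_right Or.inl, q_ac.imp_right Or.inl, q_bc.imp_right Or.inl,
   q_ab.imp_right Or.inl, q_ac.imp_right Or.inl, q_bc.imp_right Or.inl⟩

lemma K_single (d_b : Arc A v a b ∨ Arc A v c b) (d_c : Arc A v a c ∨ Arc A v b c)
    (q_ab : Arc A v c a ∨ Arc A v c b) (q_ac : Arc A v b a ∨ Arc A v b c)
    (q_bc : Arc A v a b ∨ Arc A v a c)
    (h1 : v a ≤ v t) (h2 : v t ≤ v b ∨ v t ≤ v c) :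
    Kcond A v a b c t :=
  ⟨Or.inr (Or.inr h1), d_b.imp_right Or.inl, d_c.imp_right Or.inl,
   Or.inr (Or.inr h2), d_b.imp_right Or.inl, d_c.imp_right Or.inl,
   q_ab.imp_right Or.inl, q_ac.imp_right Or.inl, q_bc.imp_right Or.inl,
   q_ab.imp_right Or.inl, q_ac.imp_right Or.inl, q_bc.imp_right Or.inl⟩

lemma K_pair (d_a : Arc A v b a ∨ Arc A v c a) (d_b : Arc A v a b ∨ Arc A v c b)
    (d_c : Arc A v a c ∨ Arc A v b c)
    (q_ac : Arc A v b a ∨ Arc A v b c) (q_bc : Arc A v a b ∨ Arc A v a c)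
    (h1 : v a ≤ v t ∨ v b ≤ v t) (h2 : v t ≤ v c) :
    Kcond A v a b c t :=
  ⟨d_a.imp_right Or.inl, d_b.imp_right Or.inl, d_c.imp_right Or.inl,
   d_a.imp_right Or.inl, d_b.imp_right Or.inl, d_c.imp_right Or.inl,
   Or.inr (Or.inr h1), q_ac.imp_right Or.inl, q_bc.imp_right Or.inl,
   Or.inr (Or.inr h2), q_ac.imp_right Or.inl, q_bc.imp_right Or.inl⟩

lemma K_both (d_b : Arc A v a b ∨ Arc A v c b) (d_c : Arc A v a c ∨ Arc A v b c)
    (q_ac : Arc A v b a ∨ Arc A v b c) (q_bc : Arc A v a b ∨ Arc A v a c)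
    (h1 : v a ≤ v t) (h2 : v t ≤ v c) :
    Kcond A v a b c t :=
  ⟨Or.inr (Or.inr h1), d_b.imp_right Or.inl, d_c.imp_right Or.inl,
   Or.inr (Or.inr (Or.inr h2)), d_b.imp_right Or.inl, d_c.imp_right Or.inl,
   Or.inr (Or.inr (Or.inl h1)), q_ac.imp_right Or.inl, q_bc.imp_right Or.inl,
   Or.inr (Or.inr h2), q_ac.imp_right Or.inl, q_bc.imp_right Or.inl⟩

end Khelpers

lemma find_t {n : ℕ} (A : Matrix (Fin n) (Fin n) ℝ) (v : Fin n → ℝ)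
    (hA : (∀ i j, 0 < A i j) ∧ ∀ i j, A j i = (A i j)⁻¹)
    (hn : 4 ≤ n)
    (hblock : ∀ i j : Fin n, 3 ≤ i.val ∨ 3 ≤ j.val → A i j = 1)
    (hSC : ∀ a b, ReflTransGen (Arc A v) a b)
    (e0 e1 e2 : Fin n) (he0 : e0.val = 0) (he1 : e1.val = 1) (he2 : e2.val = 2) :
    ∃ t : Fin n, 3 ≤ t.val ∧ Kcond A v e0 e1 e2 t := by
  have hhead : ∀ i : Fin n, i.val < 3 → i = e0 ∨ i = e1 ∨ i = e2 := by
    intro i hi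
    have h : i.val = 0 ∨ i.val = 1 ∨ i.val = 2 := by omega
    rcases h with h | h | h
    · exact Or.inl (Fin.ext (by omega))
    · exact Or.inr (Or.inl (Fin.ext (by omega)))
    · exact Or.inr (Or.inr (Fin.ext (by omega)))
  have hall012 : ∀ i : Fin n, i.val < 3 → i = e0 ∨ i = e1 ∨ i = e2 := hhead
  have hall120 : ∀ i : Fin n, i.val < 3 → i = e1 ∨ i = e2 ∨ i = e0 := by
    intro i hi; rcases hhead i hi with h | h | h
    exacts [Or.inr (Or.inr h), Or.inl h, Or.inr (Or.inl h)]
  have hall021 : ∀ i : Fin n, i.val < 3 → i = e0 ∨ i = e2 ∨ i = e1 := by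
    intro i hi; rcases hhead i hi with h | h | h
    exacts [Or.inl h, Or.inr (Or.inr h), Or.inr (Or.inl h)]
  have hall201 : ∀ i : Fin n, i.val < 3 → i = e2 ∨ i = e0 ∨ i = e1 := by
    intro i hi; rcases hhead i hi with h | h | h
    exacts [Or.inr (Or.inl h), Or.inr (Or.inr h), Or.inl h]
  have hall210 : ∀ i : Fin n, i.val < 3 → i = e2 ∨ i = e1 ∨ i = e0 := by
    intro i hi; rcases hhead i hi with h | h | h
    exacts [Or.inr (Or.inr h), Or.inr (Or.inl h), Or.inl h]
  have hall102 : ∀ i : Fin n, i.val < 3 → i = e1 ∨ i = e0 ∨ i = e2 := by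
    intro i hi; rcases hhead i hi with h | h | h
    exacts [Or.inr (Or.inl h), Or.inl h, Or.inr (Or.inr h)]
  have ne10 : e1 ≠ e0 := fun h => by have := congrArg Fin.val h; omega
  have ne20 : e2 ≠ e0 := fun h => by have := congrArg Fin.val h; omega
  have ne01 : e0 ≠ e1 := fun h => by have := congrArg Fin.val h; omega
  have ne21 : e2 ≠ e1 := fun h => by have := congrArg Fin.val h; omega
  have ne02 : e0 ≠ e2 := fun h => by have := congrArg Fin.val h; omega
  have ne12 : e1 ≠ e2 := fun h => by have := congrArg Fin.val h; omega
  have T01 := tour A v hA e0 e1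
  have T02 := tour A v hA e0 e2
  have T12 := tour A v hA e1 e2
  have h03 : e0.val < 3 := by omega
  have h13 : e1.val < 3 := by omega
  have h23 : e2.val < 3 := by omega
  by_cases d0 : Arc A v e1 e0 ∨ Arc A v e2 e0
  · by_cases d1 : Arc A v e0 e1 ∨ Arc A v e2 e1
    · by_cases d2 : Arc A v e0 e2 ∨ Arc A v e1 e2
      · by_cases q01 : Arc A v e2 e0 ∨ Arc A v e2 e1
        · by_cases q02 : Arc A v e1 e0 ∨ Arc A v e1 e2
          · by_cases q12 : Arc A v e0 e1 ∨ Arc A v e0 e2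
            · -- no cuts at all
              exact ⟨⟨3, by omega⟩, Nat.le.refl, K_nocut A v d0 d1 d2 q01 q02 q12⟩
            · -- pair cut {e1, e2} ; labels (e1,e2,e0)
              push_neg at q12
              obtain ⟨t, ht3, hx, hy⟩ := router_pair A v hblock hSC e1 e2 e0 h13 h23 h03
                ne01 ne02 hall120
                q12.1 q12.2
              exact ⟨t, ht3, Kswap1 A v (Kswap2 A v
                (K_pair A v d1.symm d2.symm d0 q01.symm q02.symm hx hy))⟩
          · -- pair cut {e0, e2} ; labels (e0,e2,e1)
            push_neg at q02
            have q12 : Arc A v e0 e1 ∨ Arc A v e0 e2 := Or.inl (T01.resolve_right q02.1)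
            obtain ⟨t, ht3, hx, hy⟩ := router_pair A v hblock hSC e0 e2 e1 h03 h23 h13
              ne10 ne12 hall021
              q02.1 q02.2
            exact ⟨t, ht3, Kswap2 A v
              (K_pair A v d0.symm d2 d1 q01 q12.symm hx hy)⟩
        · -- pair cut {e0, e1} ; labels (e0,e1,e2)
          push_neg at q01
          have q02 : Arc A v e1 e0 ∨ Arc A v e1 e2 := Or.inr (T12.resolve_right q01.2)
          have q12 : Arc A v e0 e1 ∨ Arc A v e0 e2 := Or.inr (T02.resolve_right q01.1)
          obtain ⟨t, ht3, hx, hy⟩ := router_pair A v hblock hSC e0 e1 e2 h03 h13 h23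
            ne20 ne21 hall012
            q01.1 q01.2
          exact ⟨t, ht3, K_pair A v d0 d1 d2 q02 q12 hx hy⟩
      · -- singleton cut {e2}
        push_neg at d2
        have q01 : Arc A v e2 e0 ∨ Arc A v e2 e1 := Or.inl (T02.resolve_left d2.1)
        by_cases q02 : Arc A v e1 e0 ∨ Arc A v e1 e2
        · by_cases q12 : Arc A v e0 e1 ∨ Arc A v e0 e2
          · -- only cut {e2} ; labels (e2,e0,e1)
            obtain ⟨t, ht3, hx, hy⟩ := router_single A v hblock hSC e2 e0 e1 h23 h03
              ne02 hall201
              d2.1 d2.2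
            exact ⟨t, ht3, Kswap2 A v (Kswap1 A v
              (K_single A v d0.symm d1.symm q02.symm q12.symm q01 hx hy))⟩
          · -- cut {e2} and pair {e2, e1} ; labels (e2,e1,e0)
            push_neg at q12
            obtain ⟨s1, hs13, hx1, hy1⟩ := router_single A v hblock hSC e2 e0 e1 h23 h03
              ne02 hall201
              d2.1 d2.2
            obtain ⟨s2, hs23, hx2, hy2⟩ := router_pair A v hblock hSC e2 e1 e0 h23 h13 h03
              ne02 ne01 hall210
              q12.2 q12.1
            obtain ⟨t, hteq, hu1, hu2⟩ := choose_two v e2 e1 e0 s1 s2 hx1 hy1.symm hx2 hy2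
            have ht3 : 3 ≤ t.val := by rcases hteq with h | h <;> subst h <;> assumption
            exact ⟨t, ht3, Kswap1 A v (Kswap2 A v (Kswap1 A v
              (K_both A v d1.symm d0.symm q02.symm q01.symm hu1 hu2)))⟩
        · -- cut {e2} and pair {e2, e0} ; labels (e2,e0,e1)
          push_neg at q02
          have q12 : Arc A v e0 e1 ∨ Arc A v e0 e2 := Or.inl (T01.resolve_right q02.1)
          obtain ⟨s1, hs13, hx1, hy1⟩ := router_single A v hblock hSC e2 e0 e1 h23 h03
            ne02 hall201
            d2.1 d2.2
          obtain ⟨s2, hs23, hx2, hy2⟩ := router_pair A v hblock hSC e2 e0 e1 h23 h03 h13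
            ne12 ne10 hall201
            q02.2 q02.1
          obtain ⟨t, hteq, hu1, hu2⟩ := choose_two v e2 e0 e1 s1 s2 hx1 hy1 hx2 hy2
          have ht3 : 3 ≤ t.val := by rcases hteq with h | h <;> subst h <;> assumption
          exact ⟨t, ht3, Kswap2 A v (Kswap1 A v
            (K_both A v d0.symm d1.symm q12.symm q01 hu1 hu2))⟩
    · -- singleton cut {e1}
      push_neg at d1
      have d2 : Arc A v e0 e2 ∨ Arc A v e1 e2 := Or.inr (T12.resolve_right d1.2)
      have q02 : Arc A v e1 e0 ∨ Arc A v e1 e2 := Or.inr (T12.resolve_right d1.2)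
      by_cases q01 : Arc A v e2 e0 ∨ Arc A v e2 e1
      · by_cases q12 : Arc A v e0 e1 ∨ Arc A v e0 e2
        · -- only cut {e1} ; labels (e1,e0,e2)
          obtain ⟨t, ht3, hx, hy⟩ := router_single A v hblock hSC e1 e0 e2 h13 h03
            ne01 hall102
            d1.1 d1.2
          exact ⟨t, ht3, Kswap1 A v
            (K_single A v d0 d2.symm q01.symm q12 q02 hx hy)⟩
        · -- cut {e1} and pair {e1, e2} ; labels (e1,e2,e0)
          push_neg at q12
          obtain ⟨s1, hs13, hx1, hy1⟩ := router_single A v hblock hSC e1 e0 e2 h13 h03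
            ne01 hall102
            d1.1 d1.2
          obtain ⟨s2, hs23, hx2, hy2⟩ := router_pair A v hblock hSC e1 e2 e0 h13 h23 h03
            ne01 ne02 hall120
            q12.1 q12.2
          obtain ⟨t, hteq, hu1, hu2⟩ := choose_two v e1 e2 e0 s1 s2 hx1 hy1.symm hx2 hy2
          have ht3 : 3 ≤ t.val := by rcases hteq with h | h <;> subst h <;> assumption
          exact ⟨t, ht3, Kswap1 A v (Kswap2 A v
            (K_both A v d2.symm d0 q01.symm q02.symm hu1 hu2))⟩
      · -- cut {e1} and pair {e1, e0} ; labels (e1,e0,e2)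
        push_neg at q01
        have q12 : Arc A v e0 e1 ∨ Arc A v e0 e2 := Or.inr (T02.resolve_right q01.1)
        obtain ⟨s1, hs13, hx1, hy1⟩ := router_single A v hblock hSC e1 e0 e2 h13 h03
          ne01 hall102
          d1.1 d1.2
        obtain ⟨s2, hs23, hx2, hy2⟩ := router_pair A v hblock hSC e1 e0 e2 h13 h03 h23
          ne21 ne20 hall102
          q01.2 q01.1
        obtain ⟨t, hteq, hu1, hu2⟩ := choose_two v e1 e0 e2 s1 s2 hx1 hy1 hx2 hy2
        have ht3 : 3 ≤ t.val := by rcases hteq with h | h <;> subst h <;> assumption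
        exact ⟨t, ht3, Kswap1 A v
          (K_both A v d0 d2.symm q12 q02 hu1 hu2)⟩
  · -- singleton cut {e0}
    push_neg at d0
    have d1 : Arc A v e0 e1 ∨ Arc A v e2 e1 := Or.inl (T01.resolve_right d0.1)
    have d2 : Arc A v e0 e2 ∨ Arc A v e1 e2 := Or.inl (T02.resolve_right d0.2)
    have q12 : Arc A v e0 e1 ∨ Arc A v e0 e2 := Or.inl (T01.resolve_right d0.1)
    by_cases q01 : Arc A v e2 e0 ∨ Arc A v e2 e1
    · by_cases q02 : Arc A v e1 e0 ∨ Arc A v e1 e2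
      · -- only cut {e0} ; labels (e0,e1,e2)
        obtain ⟨t, ht3, hx, hy⟩ := router_single A v hblock hSC e0 e1 e2 h03 h13
          ne10 hall012
          d0.1 d0.2
        exact ⟨t, ht3, K_single A v d1 d2 q01 q02 q12 hx hy⟩
      · -- cut {e0} and pair {e0, e2} ; labels (e0,e2,e1)
        push_neg at q02
        obtain ⟨s1, hs13, hx1, hy1⟩ := router_single A v hblock hSC e0 e1 e2 h03 h13
          ne10 hall012
          d0.1 d0.2
        obtain ⟨s2, hs23, hx2, hy2⟩ := router_pair A v hblock hSC e0 e2 e1 h03 h23 h13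
          ne10 ne12 hall021
          q02.1 q02.2
        obtain ⟨t, hteq, hu1, hu2⟩ := choose_two v e0 e2 e1 s1 s2 hx1 hy1.symm hx2 hy2
        have ht3 : 3 ≤ t.val := by rcases hteq with h | h <;> subst h <;> assumption
        exact ⟨t, ht3, Kswap2 A v
          (K_both A v d2 d1 q01 q12.symm hu1 hu2)⟩
    · -- cut {e0} and pair {e0, e1} ; labels (e0,e1,e2)
      push_neg at q01
      have q02 : Arc A v e1 e0 ∨ Arc A v e1 e2 := Or.inr (T12.resolve_right q01.2)
      obtain ⟨s1, hs13, hx1, hy1⟩ := router_single A v hblock hSC e0 e1 e2 h03 h13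
        ne10 hall012
        d0.1 d0.2
      obtain ⟨s2, hs23, hx2, hy2⟩ := router_pair A v hblock hSC e0 e1 e2 h03 h13 h23
        ne20 ne21 hall012
        q01.1 q01.2
      obtain ⟨t, hteq, hu1, hu2⟩ := choose_two v e0 e1 e2 s1 s2 hx1 hy1 hx2 hy2
      have ht3 : 3 ≤ t.val := by rcases hteq with h | h <;> subst h <;> assumption
      exact ⟨t, ht3, K_both A v d1 d2 q02 q12 hu1 hu2⟩

lemma A_perm_inv {n : ℕ} (A : Matrix (Fin n) (Fin n) ℝ)
    (hblock : ∀ i j : Fin n, 3 ≤ i.val ∨ 3 ≤ j.val → A i j = 1)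
    (σ : Equiv.Perm (Fin n)) (hfix : ∀ i : Fin n, i.val < 3 → σ i = i) :
    ∀ i j, A (σ i) (σ j) = A i j := by
  have htail : ∀ i : Fin n, 3 ≤ i.val → 3 ≤ (σ i).val := by
    intro i hi
    by_contra h
    push_neg at h
    have h2 : σ (σ i) = σ i := hfix _ (by omega)
    have h3 := σ.injective h2
    rw [h3] at h
    omega
  intro i j
  by_cases hi : 3 ≤ i.val
  · rw [hblock _ _ (Or.inl (htail i hi)), hblock _ _ (Or.inl hi)]
  · by_cases hj : 3 ≤ j.val
    · rw [hblock _ _ (Or.inr (htail j hj)), hblock _ _ (Or.inr hj)]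
    · rw [hfix i (by omega), hfix j (by omega)]


/-- For a 3-block perturbed consistent matrix, `v` is efficient iff it is
obtained by permuting the last `n - 3` entries of an efficient vector `w`
whose subvector `w[{1,2,3,4}]` is efficient for `A[{1,2,3,4}]`. -/
theorem stmt_14 {n : ℕ} (hn : 4 ≤ n) (A : Matrix (Fin n) (Fin n) ℝ)
    (hA : Reciprocal A)
    (hblock : ∀ i j : Fin n, 3 ≤ i.val ∨ 3 ≤ j.val → A i j = 1)
    (v : Fin n → ℝ) (hv : ∀ i, 0 < v i) :
    Efficient A v ↔
      ∃ (σ : Equiv.Perm (Fin n)) (w : Fin n → ℝ),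
        (∀ i : Fin n, i.val < 3 → σ i = i) ∧
        Efficient A w ∧
        Efficient
          (A.submatrix (Fin.castLE hn : Fin 4 → Fin n) (Fin.castLE hn))
          (w ∘ (Fin.castLE hn : Fin 4 → Fin n)) ∧
        v = w ∘ σ.symm := by
  constructor
  · intro heff
    have hSC := efficient_implies_sc A v hA heff
    obtain ⟨t, ht3, hK⟩ := find_t A v hA hn hblock hSC ⟨0, by omega⟩ ⟨1, by omega⟩
      ⟨2, by omega⟩ rfl rfl rfl
    obtain ⟨k1, k2, k3, k4, k5, k6, k7, k8, k9, k10, k11, k12⟩ := hK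
    have hup : ∃ u : Fin n, u.val < 3 ∧ v t ≤ v u := by
      rcases reach_tail_target A v hblock ⟨0, by omega⟩ t (hSC _ t) ht3 with ⟨h3, -⟩ | h
      · simp at h3
      · exact h
    have hdn : ∃ u : Fin n, u.val < 3 ∧ v u ≤ v t := by
      rcases reach_tail_source A v hblock t ⟨0, by omega⟩ (hSC t _) ht3 with ⟨h3, -⟩ | h
      · simp at h3
      · exact h
    set t3 : Fin n := ⟨3, by omega⟩ with ht3d
    set σ : Equiv.Perm (Fin n) := Equiv.swap t3 t with hσd
    have hfix : ∀ i : Fin n, i.val < 3 → σ i = i := by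
      intro i hi
      rw [hσd]
      apply Equiv.swap_apply_of_ne_of_ne
      · intro h; rw [h] at hi; simp [ht3d] at hi
      · intro h; rw [h] at hi; omega
    have hσσ : σ.symm = σ := by rw [hσd]; exact Equiv.symm_swap t3 t
    have hAinv := A_perm_inv A hblock σ hfix
    have heffw : Efficient A (v ∘ σ) := by
      have h := efficient_perm A v σ hAinv heff
      rwa [hσσ] at h
    have fin4cases : ∀ k : Fin 4, k.val < 3 → k = 0 ∨ k = 1 ∨ k = 2 := by decide
    have fin4all : ∀ k : Fin 4, k = 0 ∨ k = 1 ∨ k = 2 ∨ k = 3 := by decide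
    refine ⟨σ, v ∘ σ, hfix, heffw, ?_, ?_⟩
    · -- efficiency of the 4x4 subproblem
      set C := A.submatrix (Fin.castLE hn : Fin 4 → Fin n) (Fin.castLE hn) with hCd
      set v4 : Fin 4 → ℝ := (v ∘ σ) ∘ (Fin.castLE hn : Fin 4 → Fin n) with hv4d
      have hv4pos : ∀ i, 0 < v4 i := fun i => hv _
      apply sc_implies_efficient C v4 hv4pos
      apply (sc_iff_closed (Arc C v4)).2
      intro S hne hcl
      have hcv : ∀ i : Fin 4, i.val < 3 → v4 i = v (Fin.castLE hn i) := by
        intro i hi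
        show v (σ (Fin.castLE hn i)) = v (Fin.castLE hn i)
        rw [hfix _ (show (Fin.castLE hn i).val < 3 from hi)]
      have hv43 : v4 3 = v t := by
        show v (σ (Fin.castLE hn 3)) = v t
        have h1 : Fin.castLE hn (3 : Fin 4) = t3 := rfl
        rw [h1, hσd, Equiv.swap_apply_left]
      have harc_hh : ∀ i j : Fin 4, i.val < 3 → j.val < 3 →
          Arc A v (Fin.castLE hn i) (Fin.castLE hn j) → Arc C v4 i j := by
        intro i j hi hj h
        show A (Fin.castLE hn i) (Fin.castLE hn j) * v4 j ≤ v4 i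
        rw [hcv i hi, hcv j hj]
        exact h
      have harc_h3 : ∀ i : Fin 4, i.val < 3 → v t ≤ v (Fin.castLE hn i) →
          Arc C v4 i 3 := by
        intro i hi h
        show A (Fin.castLE hn i) (Fin.castLE hn 3) * v4 3 ≤ v4 i
        rw [hv43, hcv i hi, hblock _ _ (Or.inr (by exact Nat.le_refl 3)), one_mul]
        exact h
      have harc_3h : ∀ i : Fin 4, i.val < 3 → v (Fin.castLE hn i) ≤ v t →
          Arc C v4 3 i := by
        intro i hi h
        show A (Fin.castLE hn 3) (Fin.castLE hn i) * v4 i ≤ v4 3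
        rw [hv43, hcv i hi, hblock _ _ (Or.inl (by exact Nat.le_refl 3)), one_mul]
        exact h
      by_cases m0 : (0 : Fin 4) ∈ S <;> by_cases m1 : (1 : Fin 4) ∈ S <;>
        by_cases m2 : (2 : Fin 4) ∈ S <;> by_cases m3 : (3 : Fin 4) ∈ S
      · -- TTTT
        ext k
        simp only [Set.mem_univ, iff_true]
        rcases fin4all k with h | h | h | h <;> rw [h] <;> assumption
      · -- TTTF : {0,1,2}
        exfalso
        obtain ⟨u, hu3, hut⟩ := hdn
        have harc : Arc C v4 3 ⟨u.val, by omega⟩ :=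
          harc_3h ⟨u.val, by omega⟩ hu3 hut
        have hu4S : (⟨u.val, by omega⟩ : Fin 4) ∈ S := by
          rcases fin4cases ⟨u.val, by omega⟩ hu3 with h | h | h <;> rw [h] <;> assumption
        exact m3 (hcl _ hu4S 3 harc)
      · -- TTFT : {0,1,3}
        exfalso
        rcases k10 with x | x | x
        · exact m2 (hcl 0 m0 2 (harc_hh 2 0 (by decide) (by decide) x))
        · exact m2 (hcl 1 m1 2 (harc_hh 2 1 (by decide) (by decide) x))
        · exact m2 (hcl 3 m3 2 (harc_h3 2 (by decide) x))
      · -- TTFF : {0,1}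
        exfalso
        rcases k7 with x | x | x | x
        · exact m2 (hcl 0 m0 2 (harc_hh 2 0 (by decide) (by decide) x))
        · exact m2 (hcl 1 m1 2 (harc_hh 2 1 (by decide) (by decide) x))
        · exact m3 (hcl 0 m0 3 (harc_3h 0 (by decide) x))
        · exact m3 (hcl 1 m1 3 (harc_3h 1 (by decide) x))
      · -- TFTT : {0,2,3}
        exfalso
        rcases k11 with x | x | x
        · exact m1 (hcl 0 m0 1 (harc_hh 1 0 (by decide) (by decide) x))
        · exact m1 (hcl 2 m2 1 (harc_hh 1 2 (by decide) (by decide) x))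
        · exact m1 (hcl 3 m3 1 (harc_h3 1 (by decide) x))
      · -- TFTF : {0,2}
        exfalso
        rcases k8 with x | x | x | x
        · exact m1 (hcl 0 m0 1 (harc_hh 1 0 (by decide) (by decide) x))
        · exact m1 (hcl 2 m2 1 (harc_hh 1 2 (by decide) (by decide) x))
        · exact m3 (hcl 0 m0 3 (harc_3h 0 (by decide) x))
        · exact m3 (hcl 2 m2 3 (harc_3h 2 (by decide) x))
      · -- TFFT : {0,3}
        exfalso
        rcases k4 with x | x | x | x
        · exact m1 (hcl 0 m0 1 (harc_hh 1 0 (by decide) (by decide) x))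
        · exact m2 (hcl 0 m0 2 (harc_hh 2 0 (by decide) (by decide) x))
        · exact m1 (hcl 3 m3 1 (harc_h3 1 (by decide) x))
        · exact m2 (hcl 3 m3 2 (harc_h3 2 (by decide) x))
      · -- TFFF : {0}
        exfalso
        rcases k1 with x | x | x
        · exact m1 (hcl 0 m0 1 (harc_hh 1 0 (by decide) (by decide) x))
        · exact m2 (hcl 0 m0 2 (harc_hh 2 0 (by decide) (by decide) x))
        · exact m3 (hcl 0 m0 3 (harc_3h 0 (by decide) x))
      · -- FTTT : {1,2,3}
        exfalso
        rcases k12 with x | x | x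
        · exact m0 (hcl 1 m1 0 (harc_hh 0 1 (by decide) (by decide) x))
        · exact m0 (hcl 2 m2 0 (harc_hh 0 2 (by decide) (by decide) x))
        · exact m0 (hcl 3 m3 0 (harc_h3 0 (by decide) x))
      · -- FTTF : {1,2}
        exfalso
        rcases k9 with x | x | x | x
        · exact m0 (hcl 1 m1 0 (harc_hh 0 1 (by decide) (by decide) x))
        · exact m0 (hcl 2 m2 0 (harc_hh 0 2 (by decide) (by decide) x))
        · exact m3 (hcl 1 m1 3 (harc_3h 1 (by decide) x))
        · exact m3 (hcl 2 m2 3 (harc_3h 2 (by decide) x))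
      · -- FTFT : {1,3}
        exfalso
        rcases k5 with x | x | x | x
        · exact m0 (hcl 1 m1 0 (harc_hh 0 1 (by decide) (by decide) x))
        · exact m2 (hcl 1 m1 2 (harc_hh 2 1 (by decide) (by decide) x))
        · exact m0 (hcl 3 m3 0 (harc_h3 0 (by decide) x))
        · exact m2 (hcl 3 m3 2 (harc_h3 2 (by decide) x))
      · -- FTFF : {1}
        exfalso
        rcases k2 with x | x | x
        · exact m0 (hcl 1 m1 0 (harc_hh 0 1 (by decide) (by decide) x))
        · exact m2 (hcl 1 m1 2 (harc_hh 2 1 (by decide) (by decide) x))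
        · exact m3 (hcl 1 m1 3 (harc_3h 1 (by decide) x))
      · -- FFTT : {2,3}
        exfalso
        rcases k6 with x | x | x | x
        · exact m0 (hcl 2 m2 0 (harc_hh 0 2 (by decide) (by decide) x))
        · exact m1 (hcl 2 m2 1 (harc_hh 1 2 (by decide) (by decide) x))
        · exact m0 (hcl 3 m3 0 (harc_h3 0 (by decide) x))
        · exact m1 (hcl 3 m3 1 (harc_h3 1 (by decide) x))
      · -- FFTF : {2}
        exfalso
        rcases k3 with x | x | x
        · exact m0 (hcl 2 m2 0 (harc_hh 0 2 (by decide) (by decide) x))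
        · exact m1 (hcl 2 m2 1 (harc_hh 1 2 (by decide) (by decide) x))
        · exact m3 (hcl 2 m2 3 (harc_3h 2 (by decide) x))
      · -- FFFT : {3}
        exfalso
        obtain ⟨u, hu3, hut⟩ := hup
        have harc : Arc C v4 ⟨u.val, by omega⟩ 3 :=
          harc_h3 ⟨u.val, by omega⟩ hu3 hut
        have hu4S : (⟨u.val, by omega⟩ : Fin 4) ∈ S := hcl 3 m3 _ harc
        rcases fin4cases ⟨u.val, by omega⟩ hu3 with h | h | h <;> rw [h] at hu4S <;>
          [exact m0 hu4S; exact m1 hu4S; exact m2 hu4S]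
      · -- FFFF
        exfalso
        obtain ⟨x, hx⟩ := hne
        rcases fin4all x with h | h | h | h <;> rw [h] at hx <;>
          [exact m0 hx; exact m1 hx; exact m2 hx; exact m3 hx]
    · -- v = (v ∘ σ) ∘ σ.symm
      funext x
      show v x = v (σ (σ.symm x))
      rw [Equiv.apply_symm_apply]
  · rintro ⟨σ, w, hfix, heffw, -, rfl⟩
    have hAinv := A_perm_inv A hblock σ hfix
    exact efficient_perm A w σ hAinv heffw
end
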